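/- arXiv:1006.3247 — 4 statements merged into one kernel-verified Lean document; each statement's English description precedes it below -/
import Mathlib

section
/- For every real c > 0 and every integer p ≥ 1, the p-th moment of the free Poisson distribution of parameter c is given by ∫ x^p dπ_c(x) = Σ_{j=1}^{p} (1/p)·binom(p,j)·binom(p,j−1)·c^j (the coefficient of c^j being the Narayana number, which counts non-crossing partitions of {1,…,p} with j blocks). -/
open MeasureTheory Filter

noncomputable section

/-- the free Poisson (Marchenko–Pastur) measure of parameter `c`:
`max(1−c,0)·δ₀ + √(4c−(x−1−c)²)/(2πx)·1_{[1+c−2√c, 1+c+2√c]}(x) dx`. -/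
def MP (c : ℝ) : Measure ℝ :=
  (ENNReal.ofReal (max (1 - c) 0)) • Measure.dirac 0 +
    volume.withDensity fun x =>
      ENNReal.ofReal
        ((Set.Icc (1 + c - 2 * Real.sqrt c) (1 + c + 2 * Real.sqrt c)).indicator
          (fun y => Real.sqrt (4 * c - (y - 1 - c) ^ 2) / (2 * Real.pi * y)) x)

open Real Finset intervalIntegral

section Aux


-- trinomial style identity X
lemma Xid (q i m : ℕ) (hmi : m ≤ i) (hiq : i ≤ q) :
    q.choose (2*m) * ((2*m).choose m * (q - 2*m).choose (i - m))
      = q.choose i * (i.choose m * (q - i).choose m) := by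
  by_cases h2m : 2*m ≤ q
  · by_cases him : i + m ≤ q
    · -- main case
      have e1 : q.choose (2*m) * (2*m).choose m = q.choose m * (q - m).choose m := by
        have := Nat.choose_mul (n := q) (k := 2*m) (s := m) (by omega)
        simpa [show 2*m - m = m by omega] using this
      have e2 : (q - m).choose i * i.choose m = (q - m).choose m * (q - 2*m).choose (i - m) := by
        have := Nat.choose_mul (n := q - m) (k := i) (s := m) hmi
        simpa [show q - m - m = q - 2*m by omega] using this
      have e3 : q.choose (m+i) * (m+i).choose m = q.choose m * (q - m).choose i := by
        have := Nat.choose_mul (n := q) (k := m+i) (s := m) (by omega)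
        simpa [show m + i - m = i by omega] using this
      have e4 : q.choose (m+i) * (m+i).choose i = q.choose i * (q - i).choose m := by
        have := Nat.choose_mul (n := q) (k := m+i) (s := i) (by omega)
        simpa [show m + i - i = m by omega] using this
      have e5 : (m+i).choose m = (m+i).choose i := by
        rw [← Nat.choose_symm (by omega : m ≤ m + i)]
        congr 1; omega
      calc q.choose (2*m) * ((2*m).choose m * (q - 2*m).choose (i-m))
          = q.choose m * ((q-m).choose m * (q - 2*m).choose (i-m)) := by
            rw [← mul_assoc, e1, mul_assoc]
        _ = q.choose m * ((q-m).choose i * i.choose m) := by rw [e2]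
        _ = (q.choose m * (q-m).choose i) * i.choose m := by ring
        _ = (q.choose (m+i) * (m+i).choose m) * i.choose m := by rw [e3]
        _ = (q.choose (m+i) * (m+i).choose i) * i.choose m := by rw [e5]
        _ = (q.choose i * (q-i).choose m) * i.choose m := by rw [e4]
        _ = q.choose i * (i.choose m * (q - i).choose m) := by ring
    · -- i + m > q : both sides zero
      have l : (q - 2*m).choose (i - m) = 0 := Nat.choose_eq_zero_of_lt (by omega)
      have r : (q - i).choose m = 0 := Nat.choose_eq_zero_of_lt (by omega)
      simp [l, r]
  · have l : q.choose (2*m) = 0 := Nat.choose_eq_zero_of_lt (by omega)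
    have r : (q - i).choose m = 0 := Nat.choose_eq_zero_of_lt (by omega)
    simp [l, r]

-- trinomial style identity Y
lemma Yid (q i t : ℕ) (hti : t + 1 ≤ i) (hiq : i ≤ q) :
    q.choose (2*(t+1)) * ((2*(t+1)).choose (t+2) * (q - 2*(t+1)).choose (i - (t+1)))
      = q.choose (i+1) * ((i+1).choose (t+2) * (q - (i+1)).choose t) := by
  by_cases h2m : 2*(t+1) ≤ q
  · by_cases him : i + t + 1 ≤ q
    · have e1 : q.choose (2*(t+1)) * (2*(t+1)).choose (t+2)
          = q.choose (t+2) * (q - (t+2)).choose t := by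
        have := Nat.choose_mul (n := q) (k := 2*(t+1)) (s := t+2) (by omega)
        simpa [show 2*(t+1) - (t+2) = t by omega] using this
      have e2 : (q - (t+2)).choose (i-1) * (i-1).choose t
          = (q - (t+2)).choose t * (q - 2*(t+1)).choose (i - (t+1)) := by
        have := Nat.choose_mul (n := q - (t+2)) (k := i-1) (s := t) (by omega)
        have h1 : q - (t+2) - t = q - 2*(t+1) := by omega
        have h2 : i - 1 - t = i - (t+1) := by omega
        rw [h1, h2] at this; exact this
      have e3 : q.choose (i+1) * (i+1).choose (t+2)
          = q.choose (t+2) * (q - (t+2)).choose (i - (t+1)) := by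
        have := Nat.choose_mul (n := q) (k := i+1) (s := t+2) (by omega)
        have h1 : i + 1 - (t+2) = i - (t+1) := by omega
        rw [h1] at this; exact this
      have e5 : (i-1).choose t = (i-1).choose (i-1-t) := by
        rw [Nat.choose_symm (by omega : t ≤ i - 1)]
      have e4 : (q - (t+2)).choose (i-1) * (i-1).choose (i-1-t)
          = (q - (t+2)).choose (i-1-t) * (q - (i+1)).choose t := by
        have := Nat.choose_mul (n := q - (t+2)) (k := i-1) (s := i-1-t) (by omega)
        have h1 : q - (t+2) - (i-1-t) = q - (i+1) := by omega
        have h2 : i - 1 - (i-1-t) = t := by omega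
        rw [h1, h2] at this; exact this
      have e6 : i - 1 - t = i - (t+1) := by omega
      calc q.choose (2*(t+1)) * ((2*(t+1)).choose (t+2) * (q - 2*(t+1)).choose (i-(t+1)))
          = q.choose (t+2) * ((q-(t+2)).choose t * (q - 2*(t+1)).choose (i-(t+1))) := by
            rw [← mul_assoc, e1, mul_assoc]
        _ = q.choose (t+2) * ((q-(t+2)).choose (i-1) * (i-1).choose t) := by rw [e2]
        _ = q.choose (t+2) * ((q-(t+2)).choose (i-1) * (i-1).choose (i-1-t)) := by rw [e5]
        _ = q.choose (t+2) * ((q-(t+2)).choose (i-1-t) * (q-(i+1)).choose t) := by rw [e4]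
        _ = (q.choose (t+2) * (q-(t+2)).choose (i-(t+1))) * (q-(i+1)).choose t := by
            rw [e6]; ring
        _ = q.choose (i+1) * ((i+1).choose (t+2) * (q - (i+1)).choose t) := by
            rw [← e3]; ring
    · have l : (q - 2*(t+1)).choose (i - (t+1)) = 0 := Nat.choose_eq_zero_of_lt (by omega)
      by_cases hi1 : i + 1 ≤ q
      · have r : (q - (i+1)).choose t = 0 := Nat.choose_eq_zero_of_lt (by omega)
        simp [l, r]
      · have r : q.choose (i+1) = 0 := Nat.choose_eq_zero_of_lt (by omega)
        simp [l, r]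
  · have l : q.choose (2*(t+1)) = 0 := Nat.choose_eq_zero_of_lt (by omega)
    by_cases hi1 : i + 1 ≤ q
    · have r : (q - (i+1)).choose t = 0 := Nat.choose_eq_zero_of_lt (by omega)
      simp [l, r]
    · have r : q.choose (i+1) = 0 := Nat.choose_eq_zero_of_lt (by omega)
      simp [l, r]

lemma Vand (a b : ℕ) : ∑ m ∈ range (a+1), a.choose m * b.choose m = (a+b).choose a := by
  have h0 : (a+b).choose a
      = ∑ i ∈ range (a+1), a.choose i * b.choose (a - i) := by
    rw [Nat.add_choose_eq, Finset.Nat.sum_antidiagonal_eq_sum_range_succ_mk]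
  have h1 := Finset.sum_range_reflect (fun i => a.choose i * b.choose (a - i)) (a+1)
  rw [h0, ← h1]
  apply Finset.sum_congr rfl
  intro j hj
  simp only [Finset.mem_range] at hj
  have e1 : a + 1 - 1 - j = a - j := by omega
  rw [e1, Nat.choose_symm (by omega : a - j ≤ a) |>.symm, show a - (a - j) = j by omega]

lemma VandY (c i : ℕ) (hi : 1 ≤ i) :
    ∑ t ∈ range i, (i+1).choose (t+2) * c.choose t = (i+1+c).choose (i-1) := by
  have h0 : (i+1+c).choose (i-1)
      = ∑ x ∈ range i, (i+1).choose x * c.choose (i-1-x) := by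
    rw [Nat.add_choose_eq, Finset.Nat.sum_antidiagonal_eq_sum_range_succ_mk,
      show (i - 1).succ = i by omega]
  have h1 := Finset.sum_range_reflect (fun x => (i+1).choose x * c.choose (i-1-x)) i
  rw [h0, ← h1]
  apply Finset.sum_congr rfl
  intro t ht
  simp only [Finset.mem_range] at ht
  have e1 : i - 1 - t = i - 1 - t := rfl
  have e2 : i - 1 - (i - 1 - t) = t := by omega
  have e3 : (i+1).choose (i - 1 - t) = (i+1).choose (t+2) := by
    rw [show i - 1 - t = (i+1) - (t+2) by omega]
    exact Nat.choose_symm (by omega)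
  rw [e2, e3]

lemma catalan_cast (m : ℕ) :
    (catalan m : ℝ) = (2*m).choose m - (2*m).choose (m+1) := by
  have h1 : (m+1) * catalan m = (2*m).choose m := succ_mul_catalan_eq_centralBinom m
  have h2 : (2*m).choose (m+1) * (m+1) = (2*m).choose m * m := by
    have := Nat.choose_succ_right_eq (2*m) m
    rwa [show 2*m - m = m by omega] at this
  have := congrArg (Nat.cast : ℕ → ℝ) h1
  have h2' := congrArg (Nat.cast : ℕ → ℝ) h2
  push_cast at this h2' ⊢
  nlinarith [this, h2']

lemma finalid_core (a b : ℕ) :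
    ((a:ℝ)+b+3) * (((a+b+2).choose (a+1):ℝ)^2
        - ((a+b+2).choose (a+2):ℝ) * ((a+b+2).choose a :ℝ))
      = ((a+b+3).choose (a+2):ℝ) * ((a+b+3).choose (a+1):ℝ) := by
  rw [Nat.cast_choose ℝ (show a+1 ≤ a+b+2 by omega),
      Nat.cast_choose ℝ (show a+2 ≤ a+b+2 by omega),
      Nat.cast_choose ℝ (show a ≤ a+b+2 by omega),
      Nat.cast_choose ℝ (show a+2 ≤ a+b+3 by omega),
      Nat.cast_choose ℝ (show a+1 ≤ a+b+3 by omega)]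
  rw [show a+b+2 - (a+1) = b+1 by omega, show a+b+2-(a+2) = b by omega,
      show a+b+2 - a = b+2 by omega, show a+b+3-(a+2) = b+1 by omega,
      show a+b+3-(a+1) = b+2 by omega]
  have e1 : (Nat.factorial (a+b+3) : ℝ) = ((a:ℝ)+b+3) * Nat.factorial (a+b+2) := by
    rw [show a+b+3 = (a+b+2)+1 from rfl, Nat.factorial_succ]; push_cast; ring
  have e2 : (Nat.factorial (a+2) : ℝ) = ((a:ℝ)+2) * ((a:ℝ)+1) * (Nat.factorial a) := by
    rw [show a+2 = (a+1)+1 from rfl, Nat.factorial_succ, Nat.factorial_succ]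
    push_cast; ring
  have e3 : (Nat.factorial (a+1) : ℝ) = ((a:ℝ)+1) * (Nat.factorial a) := by
    rw [Nat.factorial_succ]; push_cast; ring
  have e4 : (Nat.factorial (b+2) : ℝ) = ((b:ℝ)+2) * ((b:ℝ)+1) * (Nat.factorial b) := by
    rw [show b+2 = (b+1)+1 from rfl, Nat.factorial_succ, Nat.factorial_succ]
    push_cast; ring
  have e5 : (Nat.factorial (b+1) : ℝ) = ((b:ℝ)+1) * (Nat.factorial b) := by
    rw [Nat.factorial_succ]; push_cast; ring
  rw [e1, e2, e3, e4, e5]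
  have p1 : ((Nat.factorial a) : ℝ) ≠ 0 := Nat.cast_ne_zero.2 (Nat.factorial_ne_zero a)
  have p2 : ((Nat.factorial b) : ℝ) ≠ 0 := Nat.cast_ne_zero.2 (Nat.factorial_ne_zero b)
  have p3 : ((a:ℝ)+1) ≠ 0 := by positivity
  have p4 : ((a:ℝ)+2) ≠ 0 := by positivity
  have p5 : ((b:ℝ)+1) ≠ 0 := by positivity
  have p6 : ((b:ℝ)+2) ≠ 0 := by positivity
  field_simp
  ring

lemma narayana_sum (q j : ℕ) (hj1 : 1 ≤ j) (hjq : j ≤ q + 1) :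
    ((q:ℝ)+1) * ∑ m ∈ Finset.range j,
        ((q.choose (2*m) : ℝ) * (catalan m : ℝ) * ((q - 2*m).choose (j-1-m) : ℝ))
      = ((q+1).choose j : ℝ) * ((q+1).choose (j-1) : ℝ) := by
  obtain ⟨i, rfl⟩ : ∃ i, j = i + 1 := ⟨j-1, by omega⟩
  have hiq : i ≤ q := by omega
  have hsplit : ∀ m ∈ Finset.range (i+1),
      (q.choose (2*m) : ℝ) * (catalan m : ℝ) * ((q - 2*m).choose (i+1-1-m) : ℝ)
      = ((q.choose i * (i.choose m * (q-i).choose m) : ℕ) : ℝ)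
        - ((q.choose (2*m) * ((2*m).choose (m+1) * (q - 2*m).choose (i-m)) : ℕ) : ℝ) := by
    intro m hm
    simp only [Finset.mem_range] at hm
    rw [show i+1-1-m = i-m by omega, catalan_cast, ← Xid q i m (by omega) hiq]
    push_cast
    ring
  rw [Finset.sum_congr rfl hsplit, Finset.sum_sub_distrib, ← Nat.cast_sum, ← Nat.cast_sum]
  have hA : ∑ m ∈ Finset.range (i+1), q.choose i * (i.choose m * (q-i).choose m)
      = q.choose i * q.choose i := by
    rw [← Finset.mul_sum, Vand i (q-i), show i + (q-i) = q by omega]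
  have hB : ∑ m ∈ Finset.range (i+1),
        q.choose (2*m) * ((2*m).choose (m+1) * (q - 2*m).choose (i-m))
      = q.choose (i+1) * ∑ t ∈ Finset.range i, (i+1).choose (t+2) * (q-(i+1)).choose t := by
    rw [Finset.sum_range_succ']
    have h0 : q.choose (2*0) * ((2*0).choose (0+1) * (q - 2*0).choose (i-0)) = 0 := by
      simp
    rw [h0, add_zero, Finset.mul_sum]
    apply Finset.sum_congr rfl
    intro t ht
    simp only [Finset.mem_range] at ht
    have := Yid q i t (by omega) hiq
    rw [show (2*(t+1)).choose (t+1+1) = (2*(t+1)).choose (t+2) from rfl, this]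
  rw [hA, hB]
  -- now case analysis
  rcases Nat.eq_zero_or_pos i with hi0 | hipos
  · subst hi0
    simp
  · rcases eq_or_lt_of_le hiq with hie | hilt
    · subst hie
      have hz : i.choose (i+1) = 0 := Nat.choose_eq_zero_of_lt (by omega)
      simp [hz, Nat.choose_self, Nat.choose_succ_self_right]
    · have hVY : ∑ t ∈ Finset.range i, (i+1).choose (t+2) * (q-(i+1)).choose t
          = q.choose (i-1) := by
        rw [VandY (q-(i+1)) i hipos, show i+1+(q-(i+1)) = q by omega]
      rw [hVY]
      obtain ⟨a, rfl⟩ : ∃ a, i = a + 1 := ⟨i-1, by omega⟩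
      obtain ⟨b, rfl⟩ : ∃ b, q = a + b + 2 := ⟨q-a-2, by omega⟩
      have := finalid_core a b
      rw [show a+1+1-1 = a+1 from rfl, show a+1-1 = a from rfl] at *
      push_cast
      push_cast at this
      nlinarith [this]


open MeasureTheory Real Finset intervalIntegral

lemma S_even (m : ℕ) : ∫ x in (-(π/2))..(π/2), Real.sin x ^ (2*m)
    = π * (Nat.centralBinom m) / 4^m := by
  induction m with
  | zero => simp
  | succ m ih =>
    have h := integral_sin_pow (a := -(π/2)) (b := π/2) (2*m)
    rw [show 2*m+2 = 2*(m+1) from by ring] at h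
    rw [h, ih]
    simp only [Real.cos_pi_div_two, Real.cos_neg, mul_zero, zero_mul]
    have hcb := congrArg (Nat.cast : ℕ → ℝ) (Nat.succ_mul_centralBinom_succ m)
    push_cast at hcb ⊢
    have hm1 : (2*(m:ℝ)+2) ≠ 0 := by positivity
    have h4m : (4:ℝ)^m ≠ 0 := by positivity
    have h4m1 : (4:ℝ)^(m+1) ≠ 0 := by positivity
    field_simp
    linear_combination (-2*π*4^m)*hcb

lemma cb_succ_cast (m : ℕ) :
    ((Nat.centralBinom (m+1) : ℝ)) = 2*(2*(m:ℝ)+1) * (catalan m : ℝ) := by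
  have hcb := congrArg (Nat.cast : ℕ → ℝ) (Nat.succ_mul_centralBinom_succ m)
  have hcat := congrArg (Nat.cast : ℕ → ℝ) (succ_mul_catalan_eq_centralBinom m)
  push_cast at hcb hcat
  have hm1 : ((m:ℝ)+1) ≠ 0 := by positivity
  apply mul_left_cancel₀ hm1
  linear_combination hcb - 2*(2*(m:ℝ)+1)*hcat

lemma cb_cast (m : ℕ) :
    ((Nat.centralBinom m : ℝ)) = ((m:ℝ)+1) * (catalan m : ℝ) := by
  have hcat := congrArg (Nat.cast : ℕ → ℝ) (succ_mul_catalan_eq_centralBinom m)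
  push_cast at hcat
  linarith [hcat]

lemma J_even (m : ℕ) : ∫ t in (-1:ℝ)..1, t^(2*m) * Real.sqrt (1 - t^2)
    = π * catalan m / (2 * 4^m) := by
  have hg : Continuous (fun t : ℝ => t^(2*m) * Real.sqrt (1 - t^2)) := by
    fun_prop
  have hsub := intervalIntegral.integral_comp_smul_deriv
    (f := Real.sin) (f' := Real.cos) (g := fun t : ℝ => t^(2*m) * Real.sqrt (1 - t^2))
    (a := -(π/2)) (b := π/2)
    (fun x _ => Real.hasDerivAt_sin x) Real.continuousOn_cos hg
  rw [Real.sin_pi_div_two, Real.sin_neg, Real.sin_pi_div_two] at hsub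
  rw [← hsub]
  have hcong : ∀ x ∈ Set.uIcc (-(π/2)) (π/2),
      Real.cos x • ((fun t : ℝ => t^(2*m) * Real.sqrt (1 - t^2)) ∘ Real.sin) x
      = Real.sin x ^ (2*m) - Real.sin x ^ (2*(m+1)) := by
    intro x hx
    have hx' : x ∈ Set.Icc (-(π/2)) (π/2) := by
      rwa [Set.uIcc_of_le (by linarith [Real.pi_pos] : -(π/2) ≤ π/2)] at hx
    have hcos : 0 ≤ Real.cos x := Real.cos_nonneg_of_mem_Icc hx'
    have h1 : 1 - Real.sin x ^ 2 = Real.cos x ^ 2 := (Real.cos_sq' x).symm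
    have h2 : Real.cos x • ((fun t : ℝ => t^(2*m) * Real.sqrt (1 - t^2)) ∘ Real.sin) x
        = Real.sin x ^ (2*m) * Real.cos x ^ 2 := by
      simp only [Function.comp_apply, smul_eq_mul, h1, Real.sqrt_sq hcos]
      ring
    rw [h2, ← h1]
    ring
  rw [intervalIntegral.integral_congr hcong]
  rw [intervalIntegral.integral_sub (by apply Continuous.intervalIntegrable; fun_prop)
      (by apply Continuous.intervalIntegrable; fun_prop)]
  rw [S_even, S_even, cb_succ_cast, cb_cast]
  have hm1 : ((m:ℝ)+1) ≠ 0 := by positivity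
  have h4m : (4:ℝ)^m ≠ 0 := by positivity
  rw [show (4:ℝ)^(m+1) = 4 * 4^m from by ring]
  field_simp
  ring

lemma J_odd (m : ℕ) : ∫ t in (-1:ℝ)..1, t^(2*m+1) * Real.sqrt (1 - t^2) = 0 := by
  have hg : Continuous (fun t : ℝ => t^(2*m+1) * Real.sqrt (1 - t^2)) := by fun_prop
  have h2 : ∀ t : ℝ, (-t)^(2*m+1) * Real.sqrt (1 - (-t)^2)
      = -(t^(2*m+1) * Real.sqrt (1 - t^2)) := by
    intro t
    rw [Odd.neg_pow ⟨m, by ring⟩, neg_sq]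
    ring
  have h1 := intervalIntegral.integral_comp_neg (a := (0:ℝ)) (b := 1)
    (f := fun t : ℝ => t^(2*m+1) * Real.sqrt (1 - t^2))
  simp only [h2, neg_zero, neg_neg] at h1
  rw [intervalIntegral.integral_neg] at h1
  have h4 := intervalIntegral.integral_add_adjacent_intervals
    (a := (-1:ℝ)) (b := 0) (c := 1) (μ := volume)
    (hg.intervalIntegrable _ _) (hg.intervalIntegrable _ _)
  rw [← h4, ← h1]
  ring

lemma sum_even_odd {M : Type*} [AddCommMonoid M] (g : ℕ → M) (n : ℕ) :
    ∑ k ∈ range (2*n), g k = ∑ m ∈ range n, g (2*m) + ∑ m ∈ range n, g (2*m+1) := by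
  induction n with
  | zero => simp
  | succ n ih =>
    rw [show 2*(n+1) = 2*n+1+1 from by ring, Finset.sum_range_succ, Finset.sum_range_succ, ih,
      Finset.sum_range_succ (fun m => g (2*m)), Finset.sum_range_succ (fun m => g (2*m+1))]
    abel


lemma key_integral (c : ℝ) (hc : 0 < c) (q : ℕ) :
    ∫ x in (1+c-2*Real.sqrt c)..(1+c+2*Real.sqrt c),
        x^q * Real.sqrt (4*c - (x-1-c)^2) / (2*π)
      = ∑ j ∈ Finset.Icc 1 (q+1),
          (1/((q:ℝ)+1)) * (((q+1).choose j : ℝ)) * (((q+1).choose (j-1) : ℝ)) * c^j := by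
  set s := Real.sqrt c with hs_def
  have hs : 0 < s := Real.sqrt_pos.2 hc
  have s2 : s^2 = c := Real.sq_sqrt hc.le
  have h2s : (2*s) ≠ 0 := by positivity
  have hπ : (0:ℝ) < π := Real.pi_pos
  -- substitution
  have hsub := intervalIntegral.integral_comp_mul_add (a := (-1:ℝ)) (b := 1)
    (f := fun x => x^q * Real.sqrt (4*c - (x-1-c)^2) / (2*π)) h2s (1+c)
  rw [show 2*s*(-1)+(1+c) = 1+c-2*s by ring, show 2*s*1+(1+c) = 1+c+2*s by ring] at hsub
  have hI : ∫ x in (1+c-2*s)..(1+c+2*s), x^q * Real.sqrt (4*c - (x-1-c)^2) / (2*π)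
      = (2*s) * ∫ t in (-1:ℝ)..1,
          (2*s*t+(1+c))^q * Real.sqrt (4*c - ((2*s*t+(1+c))-1-c)^2) / (2*π) := by
    rw [hsub, smul_eq_mul, ← mul_assoc, mul_inv_cancel₀ h2s, one_mul]
  rw [hI]
  -- pointwise simplification of integrand
  have hpt : ∀ t : ℝ, (2*s*t+(1+c))^q * Real.sqrt (4*c - ((2*s*t+(1+c))-1-c)^2) / (2*π)
      = (s/π) * (((1+c)+(2*s)*t)^q * Real.sqrt (1-t^2)) := by
    intro t
    have e1 : 4*c - ((2*s*t+(1+c))-1-c)^2 = (4*c)*(1-t^2) := by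
      linear_combination (-4*t^2) * s2
    rw [e1, Real.sqrt_mul (by positivity : (0:ℝ) ≤ 4*c)]
    rw [show (4:ℝ)*c = (2*s)^2 by linear_combination (-4)*s2, Real.sqrt_sq (by positivity)]
    rw [show 2*s*t+(1+c) = (1+c)+(2*s)*t by ring]
    field_simp
  simp only [hpt]
  rw [intervalIntegral.integral_const_mul]
  -- binomial expansion
  have hbin : ∀ t : ℝ, ((1+c)+(2*s)*t)^q * Real.sqrt (1-t^2)
      = ∑ k ∈ range (q+1),
          ((2*s)^k * (1+c)^(q-k) * (q.choose k)) * (t^k * Real.sqrt (1-t^2)) := by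
    intro t
    rw [show (1+c)+(2*s)*t = (2*s*t) + (1+c) by ring, add_pow, Finset.sum_mul]
    apply Finset.sum_congr rfl
    intro k _
    rw [mul_pow]
    ring
  simp only [hbin]
  rw [intervalIntegral.integral_finset_sum (fun k _ => by
    apply Continuous.intervalIntegrable; fun_prop)]
  simp only [intervalIntegral.integral_const_mul]
  -- extend sum and split into even and odd
  set J : ℕ → ℝ := fun k => ∫ t in (-1:ℝ)..1, t^k * Real.sqrt (1-t^2) with hJ
  set g : ℕ → ℝ := fun k => (2*s)^k * (1+c)^(q-k) * (q.choose k) * J k with hg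
  have hgsum : ∑ k ∈ range (q+1), (2*s)^k * (1+c)^(q-k) * (q.choose k) * J k
      = ∑ k ∈ range (2*(q+1)), g k := by
    apply Finset.sum_subset
    · apply Finset.range_subset_range.2; omega
    · intro k _ hk
      simp only [Finset.mem_range, not_lt] at hk
      have : q.choose k = 0 := Nat.choose_eq_zero_of_lt (by omega)
      simp [hg, this]
  rw [hgsum, sum_even_odd g (q+1)]
  have hodd : ∑ m ∈ range (q+1), g (2*m+1) = 0 := by
    apply Finset.sum_eq_zero
    intro m _
    simp only [hg]
    rw [show J (2*m+1) = 0 from J_odd m]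
    ring
  rw [hodd, add_zero]
  -- even terms
  have heven : ∀ m, (2*s) * (s/π) * g (2*m)
      = (catalan m : ℝ) * (q.choose (2*m) : ℝ) * (c^(m+1) * (1+c)^(q-2*m)) := by
    intro m
    simp only [hg]
    rw [show J (2*m) = π * catalan m / (2*4^m) from J_even m]
    rw [show ((2*s):ℝ)^(2*m) = 4^m * c^m by
      rw [pow_mul, show ((2*s):ℝ)^2 = 4*c by linear_combination 4*s2, mul_pow]]
    rw [show 2*s*(s/π) = 2*c/π by field_simp; linear_combination s2]
    have h4m : (4:ℝ)^m ≠ 0 := by positivity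
    field_simp
    ring
  rw [Finset.mul_sum, Finset.mul_sum]
  simp only [← mul_assoc]
  rw [Finset.sum_congr rfl (fun m _ => heven m)]
  -- expand (1+c)^(q-2m)
  have hexp : ∀ m ∈ range (q+1),
      (catalan m : ℝ) * (q.choose (2*m) : ℝ) * (c^(m+1) * (1+c)^(q-2*m))
      = ∑ i ∈ range (q+1),
          (catalan m : ℝ) * (q.choose (2*m) : ℝ) * ((q-2*m).choose i : ℝ) * c^(m+1+i) := by
    intro m _
    have hb : ((1:ℝ)+c)^(q-2*m) = ∑ i ∈ range ((q-2*m)+1), c^i * ((q-2*m).choose i : ℝ) := by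
      rw [show (1:ℝ)+c = c+1 by ring, add_pow]
      simp
    rw [hb, Finset.mul_sum, Finset.mul_sum]
    rw [Finset.sum_subset (Finset.range_subset_range.2 (by omega : q-2*m+1 ≤ q+1))]
    · apply Finset.sum_congr rfl
      intro i _
      rw [pow_add]
      ring
    · intro i _ hi
      simp only [Finset.mem_range, not_lt] at hi
      have : (q-2*m).choose i = 0 := Nat.choose_eq_zero_of_lt (by omega)
      simp [this]
  rw [Finset.sum_congr rfl hexp]
  -- double sum to fiberwise sum
  rw [← Finset.sum_product']
  have hmap : ∀ x ∈ (range (q+1)) ×ˢ (range (q+1)),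
      (fun y : ℕ × ℕ => y.1 + y.2 + 1) x ∈ Finset.Icc 1 (2*q+1) := by
    intro x hx
    simp only [Finset.mem_product, Finset.mem_range] at hx
    simp only [Finset.mem_Icc]
    omega
  rw [← Finset.sum_fiberwise_of_maps_to hmap
    (fun x : ℕ × ℕ => (catalan x.1 : ℝ) * (q.choose (2*x.1) : ℝ)
      * ((q-2*x.1).choose x.2 : ℝ) * c^(x.1+1+x.2))]
  -- restrict to Icc 1 (q+1)
  rw [← Finset.sum_subset (Finset.Icc_subset_Icc_right (by omega : q+1 ≤ 2*q+1))]
  · apply Finset.sum_congr rfl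
    intro j hj
    simp only [Finset.mem_Icc] at hj
    have hfib : ∑ x ∈ ((range (q+1)) ×ˢ (range (q+1))).filter
          (fun y : ℕ × ℕ => y.1 + y.2 + 1 = j),
        (catalan x.1 : ℝ) * (q.choose (2*x.1) : ℝ) * ((q-2*x.1).choose x.2 : ℝ) * c^(x.1+1+x.2)
        = ∑ m ∈ range j, (q.choose (2*m) : ℝ) * (catalan m : ℝ) * ((q-2*m).choose (j-1-m) : ℝ) * c^j := by
      apply Finset.sum_nbij' (i := fun x : ℕ × ℕ => x.1) (j := fun m => (m, j-1-m))
      · intro a ha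
        simp only [Finset.mem_filter, Finset.mem_product, Finset.mem_range] at ha
        simp only [Finset.mem_range]
        omega
      · intro m hm
        simp only [Finset.mem_range] at hm
        simp only [Finset.mem_filter, Finset.mem_product, Finset.mem_range]
        omega
      · intro a ha
        simp only [Finset.mem_filter, Finset.mem_product, Finset.mem_range] at ha
        ext <;> simp <;> omega
      · intro m hm
        simp
      · intro a ha
        simp only [Finset.mem_filter, Finset.mem_product, Finset.mem_range] at ha
        have h1 : j - 1 - a.1 = a.2 := by omega
        have h2 : a.1 + 1 + a.2 = j := by omega
        rw [h1, h2]
        ring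
    rw [hfib, ← Finset.sum_mul]
    have hnar := narayana_sum q j hj.1 hj.2
    have hq1 : ((q:ℝ)+1) ≠ 0 := by positivity
    field_simp at hnar ⊢
    linear_combination hnar
  · intro j hj hj2
    simp only [Finset.mem_Icc] at hj hj2
    apply Finset.sum_eq_zero
    intro x hx
    simp only [Finset.mem_filter, Finset.mem_product, Finset.mem_range] at hx
    by_cases h2m : 2*x.1 ≤ q
    · have : (q-2*x.1).choose x.2 = 0 := Nat.choose_eq_zero_of_lt (by omega)
      simp [this]
    · have : q.choose (2*x.1) = 0 := Nat.choose_eq_zero_of_lt (by omega)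
      simp [this]


end Aux

/-- **Moments of the free Poisson distribution.** For `c > 0` and `p ≥ 1`,
`∫ x^p dπ_c(x) = Σ_{j=1}^p (1/p) C(p,j) C(p,j−1) c^j`, the coefficients being the
Narayana numbers. -/
theorem free_poisson_moments (c : ℝ) (hc : 0 < c) (p : ℕ) (hp : 1 ≤ p) :
    ∫ x, x ^ p ∂(MP c) =
      ∑ j ∈ Finset.Icc 1 p,
        (1 / (p : ℝ)) * (p.choose j : ℝ) * (p.choose (j - 1) : ℝ) * c ^ j := by
  obtain ⟨q, rfl⟩ : ∃ q, p = q + 1 := ⟨p - 1, by omega⟩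
  set s := Real.sqrt c with hs_def
  have hs : 0 < s := Real.sqrt_pos.2 hc
  have s2 : s^2 = c := Real.sq_sqrt hc.le
  have hπ : (0:ℝ) < π := Real.pi_pos
  set a : ℝ := 1 + c - 2*s with ha_def
  set b : ℝ := 1 + c + 2*s with hb_def
  have ha0 : 0 ≤ a := by rw [ha_def]; nlinarith [sq_nonneg (1-s)]
  have hb0 : 0 < b := by rw [hb_def]; nlinarith
  have hab : a ≤ b := by rw [ha_def, hb_def]; nlinarith
  set dens : ℝ → ℝ := fun x =>
    (Set.Icc a b).indicator (fun y => Real.sqrt (4*c - (y-1-c)^2) / (2*π*y)) x with hdens_def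
  have hdens_meas : Measurable dens := by
    apply Measurable.indicator _ measurableSet_Icc
    apply Measurable.div
    · exact (Real.continuous_sqrt.comp (by fun_prop)).measurable
    · fun_prop
  have hdens_nonneg : ∀ x, 0 ≤ dens x := by
    intro x
    apply Set.indicator_nonneg
    intro y hy
    apply div_nonneg (Real.sqrt_nonneg _)
    have : (0:ℝ) ≤ y := le_trans ha0 hy.1
    positivity
  have hMP : MP c = (ENNReal.ofReal (max (1 - c) 0)) • Measure.dirac 0 +
      volume.withDensity fun x => ENNReal.ofReal (dens x) := rfl
  set f : ℝ → NNReal := fun x => Real.toNNReal (dens x) with hf_def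
  have hf_meas : Measurable f := hdens_meas.real_toNNReal
  have hB : (volume.withDensity fun x => ENNReal.ofReal (dens x))
      = volume.withDensity (fun x => (f x : ENNReal)) := rfl
  have hint_dirac : Integrable (fun x : ℝ => x^(q+1)) (Measure.dirac 0) := by
    constructor
    · exact (measurable_id.pow_const (q+1)).aestronglyMeasurable
    · simp [HasFiniteIntegral, lintegral_dirac]
  have hint1 : Integrable (fun x : ℝ => x^(q+1))
      ((ENNReal.ofReal (max (1 - c) 0)) • Measure.dirac 0) := by
    rcases eq_or_ne (ENNReal.ofReal (max (1 - c) 0)) 0 with h | h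
    · rw [h, zero_smul]
      exact integrable_zero_measure
    · rw [integrable_smul_measure h ENNReal.ofReal_ne_top]
      exact hint_dirac
  set M : ℝ := 2*s*b^q/(2*π) with hM_def
  have hM0 : 0 ≤ M := by positivity
  have hbound : ∀ x : ℝ, ‖(f x : ℝ) * x^(q+1)‖ ≤ (Set.Icc a b).indicator (fun _ => M) x := by
    intro x
    by_cases hxI : x ∈ Set.Icc a b
    · rw [Set.indicator_of_mem hxI]
      have hx0 : (0:ℝ) ≤ x := le_trans ha0 hxI.1
      have hfx : (f x : ℝ) = dens x := Real.coe_toNNReal _ (hdens_nonneg x)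
      rw [hfx, hdens_def]
      simp only [Set.indicator_of_mem hxI]
      rcases eq_or_lt_of_le hx0 with hx00 | hx00
      · rw [← hx00]
        simp only [norm_mul]
        rw [zero_pow (by omega : q+1 ≠ 0)]
        simpa using hM0
      · have he : Real.sqrt (4*c - (x-1-c)^2) / (2*π*x) * x^(q+1)
            = Real.sqrt (4*c - (x-1-c)^2) * x^q / (2*π) := by
          rw [pow_succ]
          field_simp
          ring
        rw [he, Real.norm_eq_abs, abs_of_nonneg (by positivity)]
        have h1 : Real.sqrt (4*c - (x-1-c)^2) ≤ 2*s := by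
          rw [show (2:ℝ)*s = Real.sqrt (4*c) from by
            rw [show (4:ℝ)*c = (2*s)^2 by linear_combination (-4)*s2,
              Real.sqrt_sq (by positivity)]]
          apply Real.sqrt_le_sqrt
          nlinarith [sq_nonneg (x-1-c)]
        have h2 : x^q ≤ b^q := pow_le_pow_left₀ hx0 hxI.2 q
        rw [hM_def]
        gcongr
    · rw [Set.indicator_of_notMem hxI]
      have hfx : dens x = 0 := Set.indicator_of_notMem hxI _
      have hz : (f x : ℝ) = 0 := by rw [hf_def]; simp [hfx]
      simp [hz]
  have hint2 : Integrable (fun x : ℝ => x^(q+1))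
      (volume.withDensity fun x => ENNReal.ofReal (dens x)) := by
    rw [hB, integrable_withDensity_iff_integrable_smul hf_meas]
    have hind : Integrable ((Set.Icc a b).indicator (fun _ => M)) volume :=
      (integrableOn_const measure_Icc_lt_top.ne).integrable_indicator
        measurableSet_Icc
    apply Integrable.mono' hind
    · exact ((hf_meas.coe_nnreal_real).mul
        (measurable_id.pow_const (q+1))).aestronglyMeasurable
    · exact Filter.Eventually.of_forall (by
        intro x
        simpa only [NNReal.smul_def, smul_eq_mul] using hbound x)
  -- compute
  rw [hMP, integral_add_measure hint1 hint2]
  rw [MeasureTheory.integral_smul_measure, integral_dirac]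
  rw [zero_pow (by omega : q+1 ≠ 0), smul_zero, zero_add]
  rw [hB, integral_withDensity_eq_integral_smul hf_meas]
  have h0ae : ∀ᵐ (x:ℝ) ∂volume, x ≠ 0 := by
    rw [MeasureTheory.ae_iff]
    have : {x : ℝ | ¬ x ≠ 0} = {0} := by ext y; simp
    rw [this]
    exact measure_singleton 0
  have hae : (fun x => (f x) • x^(q+1)) =ᵐ[volume]
      (Set.Icc a b).indicator (fun y => y^q * Real.sqrt (4*c-(y-1-c)^2)/(2*π)) := by
    filter_upwards [h0ae] with x hx
    by_cases hxI : x ∈ Set.Icc a b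
    · have hx0 : (0:ℝ) < x :=
        lt_of_le_of_ne (le_trans ha0 hxI.1) (Ne.symm hx)
      have hfx : (f x : ℝ) = dens x := Real.coe_toNNReal _ (hdens_nonneg x)
      rw [NNReal.smul_def, smul_eq_mul, hfx, hdens_def]
      simp only [Set.indicator_of_mem hxI]
      rw [pow_succ]
      field_simp
      ring
    · have hfx : dens x = 0 := Set.indicator_of_notMem hxI _
      have hz : (f x : ℝ) = 0 := by rw [hf_def]; simp [hfx]
      rw [NNReal.smul_def, smul_eq_mul, hz, Set.indicator_of_notMem hxI]
      simp
  rw [integral_congr_ae hae, MeasureTheory.integral_indicator measurableSet_Icc,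
    integral_Icc_eq_integral_Ioc, ← intervalIntegral.integral_of_le hab,
    key_integral c hc q]
  apply Finset.sum_congr rfl
  intro j hj
  push_cast
  ring
end
end

section
/- For every real c > 0, ∫ x log x dπ_c(x) = 1/2 + c·log c if c ≥ 1, and ∫ x log x dπ_c(x) = c²/2 if 0 < c < 1. -/
open MeasureTheory Filter

noncomputable section

open Real Set intervalIntegral

/-! ### Auxiliary trigonometric integrals -/

lemma intCos (k : ℝ) (hk : Real.sin (k * π) = 0) :
    ∫ θ in (0:ℝ)..π, Real.cos (k * θ) = if k = 0 then π else 0 := by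
  rcases eq_or_ne k 0 with h | h
  · simp [h]
  · rw [if_neg h, intervalIntegral.integral_comp_mul_left (fun x => Real.cos x) h]
    simp [integral_cos, hk]

lemma term_int (n : ℕ) (hn : n ≠ 0) :
    ∫ θ in (0:ℝ)..π, Real.sin θ ^ 2 * Real.cos (n * θ)
      = if n = 2 then -(π / 4) else 0 := by
  have key : ∀ θ : ℝ, Real.sin θ ^ 2 * Real.cos ((n:ℝ) * θ)
      = (1/2) * Real.cos ((n:ℝ) * θ) - (1/4) * Real.cos (((n:ℝ) - 2) * θ)
        - (1/4) * Real.cos (((n:ℝ) + 2) * θ) := by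
    intro θ
    have e1 : Real.cos (((n:ℝ) - 2) * θ)
        = Real.cos ((n:ℝ) * θ) * Real.cos (2 * θ) + Real.sin ((n:ℝ) * θ) * Real.sin (2 * θ) := by
      rw [show ((n:ℝ) - 2) * θ = (n:ℝ) * θ - 2 * θ by ring, Real.cos_sub]
    have e2 : Real.cos (((n:ℝ) + 2) * θ)
        = Real.cos ((n:ℝ) * θ) * Real.cos (2 * θ) - Real.sin ((n:ℝ) * θ) * Real.sin (2 * θ) := by
      rw [show ((n:ℝ) + 2) * θ = (n:ℝ) * θ + 2 * θ by ring, Real.cos_add]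
    have e3 : Real.cos (2 * θ) = 2 * Real.cos θ ^ 2 - 1 := Real.cos_two_mul θ
    have e4 : Real.sin θ ^ 2 + Real.cos θ ^ 2 = 1 := Real.sin_sq_add_cos_sq θ
    rw [e1, e2, e3]
    linear_combination Real.cos ((n:ℝ) * θ) * e4
  have ic : ∀ k : ℝ, IntervalIntegrable (fun θ => Real.cos (k * θ)) volume 0 π := by
    intro k
    exact (Real.continuous_cos.comp (continuous_const.mul continuous_id)).intervalIntegrable _ _
  have hsplit : ∫ θ in (0:ℝ)..π, Real.sin θ ^ 2 * Real.cos (n * θ)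
      = (1/2) * (∫ θ in (0:ℝ)..π, Real.cos ((n:ℝ) * θ))
        - (1/4) * (∫ θ in (0:ℝ)..π, Real.cos (((n:ℝ) - 2) * θ))
        - (1/4) * (∫ θ in (0:ℝ)..π, Real.cos (((n:ℝ) + 2) * θ)) := by
    rw [← intervalIntegral.integral_const_mul, ← intervalIntegral.integral_const_mul,
      ← intervalIntegral.integral_const_mul, ← intervalIntegral.integral_sub, ←
      intervalIntegral.integral_sub]
    · exact intervalIntegral.integral_congr fun θ _ => key θ
    · exact ((ic _).const_mul _).sub ((ic _).const_mul _)
    · exact (ic _).const_mul _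
    · exact (ic _).const_mul _
    · exact (ic _).const_mul _
  rw [hsplit]
  have h1 : ∫ θ in (0:ℝ)..π, Real.cos ((n:ℝ) * θ) = 0 := by
    rw [intCos _ (by exact_mod_cast Real.sin_nat_mul_pi n), if_neg (by exact_mod_cast hn)]
  have h3 : ∫ θ in (0:ℝ)..π, Real.cos (((n:ℝ) + 2) * θ) = 0 := by
    have : Real.sin (((n:ℝ) + 2) * π) = 0 := by
      have := Real.sin_nat_mul_pi (n + 2)
      push_cast at this ⊢
      linarith
    rw [intCos _ this, if_neg (by positivity)]
  have h2 : ∫ θ in (0:ℝ)..π, Real.cos (((n:ℝ) - 2) * θ)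
      = if n = 2 then π else 0 := by
    have hs : Real.sin (((n:ℝ) - 2) * π) = 0 := by
      have := Real.sin_int_mul_pi ((n : ℤ) - 2)
      push_cast at this ⊢
      linarith
    rw [intCos _ hs]
    rcases eq_or_ne n 2 with h | h
    · simp [h]
    · rw [if_neg (by exact_mod_cast sub_ne_zero.2 (by exact_mod_cast h : (n:ℝ) ≠ 2)), if_neg h]
  rw [h1, h2, h3]
  rcases eq_or_ne n 2 with h | h
  · simp [h]; ring
  · simp [h]

/-! ### The power series of `log (1 + r² + 2 r cos θ)` -/

lemma logSeries {r : ℝ} (h0 : 0 ≤ r) (h1 : r < 1) (θ : ℝ) :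
    HasSum (fun n : ℕ => 2 * ((-1) ^ (n + 1) * r ^ n / n) * Real.cos (n * θ))
      (Real.log (1 + r ^ 2 + 2 * r * Real.cos θ)) := by
  set z : ℂ := (r : ℂ) * Complex.exp (θ * Complex.I) with hz
  have hznorm : ‖z‖ < 1 := by
    have : ‖z‖ = r := by
      rw [hz]
      simp only [norm_mul, Real.norm_eq_abs, Complex.norm_real,
        Complex.norm_exp_ofReal_mul_I, mul_one, abs_of_nonneg h0]
    rw [this]; exact h1
  have h := (Complex.hasSum_taylorSeries_log hznorm).mapL Complex.reCLM
  have h2 := h.mul_left 2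
  have hre : ∀ n : ℕ, 2 * ((-1 : ℝ)) ^ (n + 1) * r ^ n / n * Real.cos (n * θ)
      = 2 * Complex.reCLM ((-1) ^ (n + 1) * z ^ n / n) := by
    intro n
    have hzn : ((-1 : ℂ)) ^ (n + 1) * z ^ n / n
        = (((-1 : ℝ) ^ (n + 1) * r ^ n / n : ℝ) : ℂ) * Complex.exp ((n * θ : ℝ) * Complex.I) := by
      rw [hz, mul_pow, ← Complex.exp_nat_mul]
      push_cast
      ring_nf
    rw [Complex.reCLM_apply, hzn, Complex.re_ofReal_mul, Complex.exp_ofReal_mul_I_re]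
    push_cast
    ring
  have hval : 2 * Complex.reCLM (Complex.log (1 + z))
      = Real.log (1 + r ^ 2 + 2 * r * Real.cos θ) := by
    rw [Complex.reCLM_apply, Complex.log_re]
    have habs : ‖1 + z‖ ^ 2 = 1 + r ^ 2 + 2 * r * Real.cos θ := by
      rw [Complex.sq_norm, Complex.normSq_apply]
      have hre1 : (1 + z).re = 1 + r * Real.cos θ := by
        simp [hz, Complex.exp_ofReal_mul_I_re]
      have him1 : (1 + z).im = r * Real.sin θ := by
        simp [hz, Complex.exp_ofReal_mul_I_im]
      rw [hre1, him1]
      have := Real.sin_sq_add_cos_sq θ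
      nlinarith [this]
    rw [← habs, Real.log_pow]
    push_cast
    ring
  rw [← hval]
  refine HasSum.congr_fun h2 ?_
  intro n
  rw [← hre n]
  ring

/-! ### The key integral for `r < 1` -/

lemma J_lt_one {r : ℝ} (h0 : 0 ≤ r) (h1 : r < 1) :
    ∫ θ in (0:ℝ)..π, Real.sin θ ^ 2 * Real.log (1 + r ^ 2 + 2 * r * Real.cos θ)
      = π * r ^ 2 / 4 := by
  have key : HasSum
      (fun n : ℕ => ∫ θ in (0:ℝ)..π,
        2 * ((-1) ^ (n + 1) * r ^ n / n) * (Real.sin θ ^ 2 * Real.cos (n * θ)))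
      (∫ θ in (0:ℝ)..π, Real.sin θ ^ 2 * Real.log (1 + r ^ 2 + 2 * r * Real.cos θ)) := by
    apply intervalIntegral.hasSum_integral_of_dominated_convergence
      (bound := fun n _ => 2 * r ^ n)
    · intro n
      apply Continuous.aestronglyMeasurable
      exact continuous_const.mul ((Real.continuous_sin.pow 2).mul
        (Real.continuous_cos.comp (continuous_const.mul continuous_id)))
    · intro n
      filter_upwards with θ _
      rcases Nat.eq_zero_or_pos n with h | h
      · subst h
        simp
      · have hn1 : (1:ℝ) ≤ n := by exact_mod_cast h
        rw [Real.norm_eq_abs, abs_mul, abs_mul]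
        have e2 : |(-1:ℝ) ^ (n + 1) * r ^ n / n| ≤ r ^ n := by
          rw [abs_div, abs_mul, abs_pow, abs_pow, abs_neg, abs_one, one_pow, one_mul,
            abs_of_nonneg h0, abs_of_nonneg (by positivity : (0:ℝ) ≤ (n:ℝ))]
          calc r ^ n / (n:ℝ) ≤ r ^ n / 1 := by
                apply div_le_div_of_nonneg_left (by positivity) (by norm_num) hn1
            _ = r ^ n := by ring
        have e3 : |Real.sin θ ^ 2 * Real.cos (n * θ)| ≤ 1 := by
          rw [abs_mul]
          have s1 : |Real.sin θ ^ 2| ≤ 1 := by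
            rw [abs_of_nonneg (sq_nonneg _)]
            nlinarith [Real.sin_sq_add_cos_sq θ, sq_nonneg (Real.cos θ)]
          have s2 : |Real.cos (n * θ)| ≤ 1 := Real.abs_cos_le_one _
          calc |Real.sin θ ^ 2| * |Real.cos (n * θ)| ≤ 1 * 1 :=
                mul_le_mul s1 s2 (abs_nonneg _) (by norm_num)
            _ = 1 := by norm_num
        calc |(2:ℝ)| * |(-1:ℝ) ^ (n + 1) * r ^ n / n| * |Real.sin θ ^ 2 * Real.cos (n * θ)|
            ≤ |(2:ℝ)| * (r ^ n) * 1 := by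
              apply mul_le_mul (mul_le_mul_of_nonneg_left e2 (abs_nonneg 2)) e3 (abs_nonneg _)
                (by positivity)
          _ = 2 * r ^ n := by rw [abs_of_nonneg (by norm_num : (0:ℝ) ≤ 2)]; ring
    · filter_upwards with θ _
      exact (summable_geometric_of_lt_one h0 h1).mul_left 2
    · exact intervalIntegrable_const
    · filter_upwards with θ _
      have := (logSeries h0 h1 θ).mul_left (Real.sin θ ^ 2)
      convert this using 1
      · rfl
      ext n
      ring
  have hterm : ∀ n : ℕ,
      (∫ θ in (0:ℝ)..π,
        2 * ((-1) ^ (n + 1) * r ^ n / n) * (Real.sin θ ^ 2 * Real.cos (n * θ)))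
      = if n = 2 then π * r ^ 2 / 4 else 0 := by
    intro n
    rw [intervalIntegral.integral_const_mul]
    rcases Nat.eq_zero_or_pos n with h | h
    · subst h; simp
    · rw [term_int n (Nat.pos_iff_ne_zero.mp h)]
      rcases eq_or_ne n 2 with h2 | h2
      · subst h2
        rw [if_pos rfl, if_pos rfl]
        norm_num
        ring
      · rw [if_neg h2, if_neg h2, mul_zero]
  have key2 : HasSum (fun n : ℕ => if n = 2 then π * r ^ 2 / 4 else 0)
      (∫ θ in (0:ℝ)..π, Real.sin θ ^ 2 * Real.log (1 + r ^ 2 + 2 * r * Real.cos θ)) := by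
    convert key using 1
    ext n
    rw [hterm n]
  have := hasSum_ite_eq 2 (π * r ^ 2 / 4)
  exact key2.unique this

/-! ### Uniform bound -/

lemma t_neg_log_le_one {t : ℝ} (ht : 0 < t) : t * (-Real.log t) ≤ 1 := by
  have h := Real.log_le_sub_one_of_pos (show (0:ℝ) < t⁻¹ by positivity)
  rw [Real.log_inv] at h
  have h2 : -Real.log t ≤ t⁻¹ - 1 := h
  calc t * (-Real.log t) ≤ t * (t⁻¹ - 1) := by nlinarith
    _ = 1 - t := by field_simp
    _ ≤ 1 := by linarith

lemma uniform_bound {r θ : ℝ} (h0 : 0 ≤ r) (h1 : r ≤ 1) (hθ : θ ∈ Set.Ioo 0 π) :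
    ‖Real.sin θ ^ 2 * Real.log (1 + r ^ 2 + 2 * r * Real.cos θ)‖ ≤ 3 := by
  set u : ℝ := 1 + r ^ 2 + 2 * r * Real.cos θ with hu
  have hcos1 : Real.cos θ ≤ 1 := Real.cos_le_one θ
  have hcosm1 : -1 < Real.cos θ := by
    have h := Real.strictAntiOn_cos ⟨hθ.1.le, hθ.2.le⟩ ⟨Real.pi_pos.le, le_refl π⟩ hθ.2
    rw [Real.cos_pi] at h
    exact h
  have hu4 : u ≤ 4 := by nlinarith
  have hulb : (1 - r) ^ 2 ≤ u := by nlinarith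
  have hulb2 : 2 * r * (1 + Real.cos θ) ≤ u := by nlinarith
  have hsin : Real.sin θ ^ 2 ≤ 1 := by
    nlinarith [Real.sin_sq_add_cos_sq θ, sq_nonneg (Real.cos θ)]
  have hsinnn : 0 ≤ Real.sin θ ^ 2 := sq_nonneg _
  have hlog4 : Real.log 4 ≤ 2 := by
    rw [show (4:ℝ) = 2 * 2 by norm_num, Real.log_mul (by norm_num) (by norm_num)]
    nlinarith [Real.log_two_lt_d9]
  rw [norm_mul, Real.norm_eq_abs, Real.norm_eq_abs, abs_of_nonneg hsinnn]
  rcases eq_or_lt_of_le (show (0:ℝ) ≤ u by nlinarith [sq_nonneg (1 - r)]) with h | hupos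
  · rw [← h, Real.log_zero, abs_zero, mul_zero]; norm_num
  rcases le_or_gt 1 u with hge | hlt
  · have habs : |Real.log u| = Real.log u := abs_of_nonneg (Real.log_nonneg hge)
    rw [habs]
    have : Real.log u ≤ Real.log 4 := Real.log_le_log hupos hu4
    nlinarith
  · have hlogneg : Real.log u < 0 := Real.log_neg hupos hlt
    rw [abs_of_neg hlogneg]
    rcases le_or_gt r (1/2) with hr | hr
    · have h14 : (1:ℝ)/4 ≤ u := by nlinarith
      have : -Real.log u ≤ Real.log 4 := by
        have := Real.log_le_log (by norm_num : (0:ℝ) < 1/4) h14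
        rw [show (1:ℝ)/4 = 4⁻¹ by norm_num, Real.log_inv] at this
        linarith
      nlinarith
    · have hccpos : 0 < 1 + Real.cos θ := by linarith
      have hcc : 1 + Real.cos θ ≤ u := by nlinarith
      have hloglb : -Real.log u ≤ -Real.log (1 + Real.cos θ) := by
        have := Real.log_le_log hccpos hcc
        linarith
      have hsq : Real.sin θ ^ 2 = (1 - Real.cos θ) * (1 + Real.cos θ) := by
        nlinarith [Real.sin_sq_add_cos_sq θ]
      have hkey : Real.sin θ ^ 2 * (-Real.log (1 + Real.cos θ)) ≤ 2 := by
        rw [hsq]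
        rcases le_or_gt (1 + Real.cos θ) 1 with hc1 | hc1
        · have ht1 := t_neg_log_le_one hccpos
          have h1c : 1 - Real.cos θ ≤ 2 := by linarith
          have hnl : 0 ≤ -Real.log (1 + Real.cos θ) := by
            have := Real.log_nonpos (by linarith) hc1
            linarith
          calc (1 - Real.cos θ) * (1 + Real.cos θ) * (-Real.log (1 + Real.cos θ))
              = (1 - Real.cos θ) * ((1 + Real.cos θ) * (-Real.log (1 + Real.cos θ))) := by ring
            _ ≤ 2 * 1 := by
                apply mul_le_mul h1c ht1 (by positivity) (by norm_num)
            _ = 2 := by norm_num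
        · have hnl : -Real.log (1 + Real.cos θ) ≤ 0 := by
            have := Real.log_nonneg (by linarith : (1:ℝ) ≤ 1 + Real.cos θ)
            linarith
          have : (1 - Real.cos θ) * (1 + Real.cos θ) * (-Real.log (1 + Real.cos θ)) ≤ 0 := by
            apply mul_nonpos_of_nonneg_of_nonpos
            · nlinarith
            · exact hnl
          linarith
      have : Real.sin θ ^ 2 * (-Real.log u) ≤ Real.sin θ ^ 2 * (-Real.log (1 + Real.cos θ)) :=
        mul_le_mul_of_nonneg_left hloglb hsinnn
      linarith

lemma ae_ne_pi : ∀ᵐ θ : ℝ ∂volume, θ ≠ π := by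
  rw [ae_iff]
  simp only [ne_eq, not_not, Set.setOf_eq_eq_singleton]
  exact measure_singleton π

/-! ### The key integral for `r = 1` -/

lemma J_one :
    ∫ θ in (0:ℝ)..π, Real.sin θ ^ 2 * Real.log (1 + 1 + 2 * Real.cos θ) = π / 4 := by
  set u : ℕ → ℝ := fun k => 1 - (k + 1 : ℝ)⁻¹ with hudef
  have hu0 : ∀ k, 0 ≤ u k := by
    intro k
    have : (k + 1 : ℝ)⁻¹ ≤ 1 := by
      rw [inv_le_one_iff₀]
      right
      exact_mod_cast Nat.le_add_left 1 k
    simp only [hudef]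
    linarith
  have hu1 : ∀ k, u k < 1 := by
    intro k
    have : (0:ℝ) < (k + 1 : ℝ)⁻¹ := by positivity
    simp only [hudef]
    linarith
  have hulim : Tendsto u atTop (nhds 1) := by
    have h0' : Tendsto (fun k : ℕ => ((k:ℝ) + 1)⁻¹) atTop (nhds 0) := by
      simpa [one_div] using tendsto_one_div_add_atTop_nhds_zero_nat (𝕜 := ℝ)
    have : Tendsto (fun k : ℕ => (1:ℝ) - ((k:ℝ) + 1)⁻¹) atTop (nhds (1 - 0)) :=
      tendsto_const_nhds.sub h0'
    simpa [hudef] using this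
  have hupos : ∀ k θ, (0:ℝ) < 1 + (u k) ^ 2 + 2 * (u k) * Real.cos θ := by
    intro k θ
    nlinarith [Real.neg_one_le_cos θ, hu0 k, hu1 k, sq_nonneg (1 - u k)]
  have hDCT : Tendsto
      (fun k => ∫ θ in (0:ℝ)..π,
        Real.sin θ ^ 2 * Real.log (1 + (u k) ^ 2 + 2 * (u k) * Real.cos θ))
      atTop
      (nhds (∫ θ in (0:ℝ)..π, Real.sin θ ^ 2 * Real.log (1 + 1 + 2 * Real.cos θ))) := by
    apply intervalIntegral.tendsto_integral_filter_of_dominated_convergence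
      (bound := fun _ => 3)
    · filter_upwards with k
      apply Continuous.aestronglyMeasurable
      apply (Real.continuous_sin.pow 2).mul
      apply Continuous.log
      · fun_prop
      · exact fun θ => (hupos k θ).ne'
    · filter_upwards with k
      filter_upwards [ae_ne_pi] with θ hne hmem
      rw [Set.uIoc_of_le Real.pi_pos.le] at hmem
      exact uniform_bound (hu0 k) (hu1 k).le ⟨hmem.1, lt_of_le_of_ne hmem.2 hne⟩
    · exact intervalIntegrable_const
    · filter_upwards [ae_ne_pi] with θ hne hmem
      rw [Set.uIoc_of_le Real.pi_pos.le] at hmem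
      have hθ : θ ∈ Set.Ioo 0 π := ⟨hmem.1, lt_of_le_of_ne hmem.2 hne⟩
      have hcosgt : -1 < Real.cos θ := by
        have h := Real.strictAntiOn_cos ⟨hθ.1.le, hθ.2.le⟩ ⟨Real.pi_pos.le, le_refl π⟩ hθ.2
        rw [Real.cos_pi] at h
        exact h
      have hpos : (0:ℝ) < 1 + 1 ^ 2 + 2 * 1 * Real.cos θ := by nlinarith
      have hcont : ContinuousAt
          (fun s : ℝ => Real.sin θ ^ 2 * Real.log (1 + s ^ 2 + 2 * s * Real.cos θ)) 1 := by
        apply ContinuousAt.mul continuousAt_const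
        apply ContinuousAt.log
        · fun_prop
        · exact hpos.ne'
      have := hcont.tendsto.comp hulim
      simp only [Function.comp_def] at this
      convert this using 2
      norm_num
  have hvals : (fun k => ∫ θ in (0:ℝ)..π,
        Real.sin θ ^ 2 * Real.log (1 + (u k) ^ 2 + 2 * (u k) * Real.cos θ))
      = fun k => π * (u k) ^ 2 / 4 := by
    funext k
    exact J_lt_one (hu0 k) (hu1 k)
  rw [hvals] at hDCT
  have h2 : Tendsto (fun k => π * (u k) ^ 2 / 4) atTop (nhds (π * 1 ^ 2 / 4)) := by
    exact (tendsto_const_nhds.mul (hulim.pow 2)).div_const 4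
  have := tendsto_nhds_unique hDCT h2
  rw [this]
  norm_num

lemma sqrt_mul_abs_log_le {b x : ℝ} (hb : 0 < b) (hx0 : 0 ≤ x) (hxb : x ≤ b) :
    Real.sqrt x * |Real.log x| ≤ 2 + Real.sqrt b * b := by
  have hsb : 0 ≤ Real.sqrt b := Real.sqrt_nonneg b
  have hsbb : 0 ≤ Real.sqrt b * b := mul_nonneg hsb hb.le
  rcases eq_or_lt_of_le hx0 with h | hx0'
  · rw [← h]
    simp [Real.log_zero]
    linarith
  rcases le_or_gt x 1 with hx1 | hx1
  · have habs : |Real.log x| = -Real.log x := abs_of_nonpos (Real.log_nonpos hx0 hx1)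
    rw [habs]
    have ht : 0 < Real.sqrt x := Real.sqrt_pos.2 hx0'
    have hlog : Real.log x = 2 * Real.log (Real.sqrt x) := by
      conv_lhs => rw [← Real.sq_sqrt hx0]
      rw [Real.log_pow]
      norm_num
    have h2 := t_neg_log_le_one ht
    have heq : Real.sqrt x * -Real.log x = 2 * (Real.sqrt x * -Real.log (Real.sqrt x)) := by
      rw [hlog]; ring
    rw [heq]
    linarith
  · have habs : |Real.log x| = Real.log x := abs_of_nonneg (Real.log_nonneg hx1.le)
    rw [habs]
    have h1 : Real.log x ≤ b := by
      have := Real.log_le_sub_one_of_pos hx0'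
      linarith
    have h2 : Real.sqrt x ≤ Real.sqrt b := Real.sqrt_le_sqrt hxb
    have : Real.sqrt x * Real.log x ≤ Real.sqrt b * b :=
      mul_le_mul h2 h1 (Real.log_nonneg hx1.le) hsb
    linarith

lemma MP_reduce (c : ℝ) (hc : 0 < c) :
    ∫ x, x * Real.log x ∂(MP c)
      = (2 * c / π) *
        ∫ θ in (0:ℝ)..π, Real.sin θ ^ 2 * Real.log (1 + c + 2 * Real.sqrt c * Real.cos θ) := by
  have hπ : (0:ℝ) < π := Real.pi_pos
  set s : ℝ := Real.sqrt c with hsdef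
  have hs : 0 < s := Real.sqrt_pos.2 hc
  have hs2 : s ^ 2 = c := Real.sq_sqrt hc.le
  set a : ℝ := 1 + c - 2 * s with hadef
  set b : ℝ := 1 + c + 2 * s with hbdef
  have ha : 0 ≤ a := by nlinarith [sq_nonneg (1 - s)]
  have hb : 0 < b := by nlinarith
  have hab : a ≤ b := by nlinarith
  set h : ℝ → ℝ := fun y => Real.sqrt (4 * c - (y - 1 - c) ^ 2) / (2 * π * y) with hhdef
  set ρ : ℝ → ℝ := (Set.Icc a b).indicator h with hρdef
  have hhm : Measurable h := by
    apply Measurable.div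
    · exact Real.continuous_sqrt.measurable.comp (by fun_prop)
    · fun_prop
  have hρm : Measurable ρ := hhm.indicator measurableSet_Icc
  have hρ0 : ∀ x, 0 ≤ ρ x := by
    intro x
    apply Set.indicator_nonneg
    intro y hy
    apply div_nonneg (Real.sqrt_nonneg _)
    have hy0 : (0:ℝ) ≤ y := le_trans ha hy.1
    positivity
  have hfm : Measurable fun x : ℝ => x * Real.log x := measurable_id.mul Real.measurable_log
  set M : ℝ := Real.sqrt b * (2 + Real.sqrt b * b) / (2 * π) with hMdef
  have hM0 : 0 ≤ M := by
    apply div_nonneg _ (by positivity)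
    apply mul_nonneg (Real.sqrt_nonneg _)
    nlinarith [mul_nonneg (Real.sqrt_nonneg b) hb.le]
  have hDfact : ∀ x : ℝ, 4 * c - (x - 1 - c) ^ 2 = (x - a) * (b - x) := by
    intro x
    rw [hadef, hbdef]
    linear_combination (-4:ℝ) * hs2
  have hbound : ∀ x, |x * Real.log x * ρ x| ≤ Set.indicator (Set.Icc a b) (fun _ => M) x := by
    intro x
    by_cases hx : x ∈ Set.Icc a b
    · rw [Set.indicator_of_mem hx, hρdef, Set.indicator_of_mem hx]
      have hx0 : 0 ≤ x := le_trans ha hx.1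
      rcases eq_or_lt_of_le hx0 with hx0' | hx0'
      · rw [← hx0']
        simp [Real.log_zero, hM0]
      · have hxb : x ≤ b := hx.2
        have hxa : a ≤ x := hx.1
        have heq : x * Real.log x * h x
            = Real.sqrt (4 * c - (x - 1 - c) ^ 2) * Real.log x / (2 * π) := by
          rw [hhdef]
          field_simp
        rw [heq]
        have hD : Real.sqrt (4 * c - (x - 1 - c) ^ 2) ≤ Real.sqrt x * Real.sqrt b := by
          rw [← Real.sqrt_mul hx0]
          apply Real.sqrt_le_sqrt
          rw [hDfact x]
          nlinarith
        rw [abs_div, abs_mul, abs_of_nonneg (Real.sqrt_nonneg _),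
          abs_of_nonneg (by positivity : (0:ℝ) ≤ 2 * π), hMdef]
        rw [div_le_div_iff_of_pos_right (by positivity : (0:ℝ) < 2 * π)]
        calc Real.sqrt (4 * c - (x - 1 - c) ^ 2) * |Real.log x|
            ≤ (Real.sqrt x * Real.sqrt b) * |Real.log x| :=
              mul_le_mul_of_nonneg_right hD (abs_nonneg _)
          _ = Real.sqrt b * (Real.sqrt x * |Real.log x|) := by ring
          _ ≤ Real.sqrt b * (2 + Real.sqrt b * b) :=
              mul_le_mul_of_nonneg_left (sqrt_mul_abs_log_le hb hx0 hxb) (Real.sqrt_nonneg b)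
    · rw [Set.indicator_of_notMem hx, hρdef, Set.indicator_of_notMem hx]
      simp
  have hindM : Integrable (Set.indicator (Set.Icc a b) (fun _ => M)) volume := by
    rw [integrable_indicator_iff measurableSet_Icc]
    exact integrableOn_const measure_Icc_lt_top.ne
  have hInt2 : Integrable (fun x => x * Real.log x * ρ x) volume := by
    apply Integrable.mono' hindM ((hfm.mul hρm).aestronglyMeasurable)
    filter_upwards with x
    exact hbound x
  have hwd : Integrable (fun x : ℝ => x * Real.log x)
      (volume.withDensity fun x => ENNReal.ofReal (ρ x)) := by
    rw [integrable_withDensity_iff hρm.ennreal_ofReal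
      (ae_of_all _ fun x => ENNReal.ofReal_lt_top)]
    have : (fun x => x * Real.log x * (ENNReal.ofReal (ρ x)).toReal)
        = fun x => x * Real.log x * ρ x := by
      funext x
      rw [ENNReal.toReal_ofReal (hρ0 x)]
    rw [this]
    exact hInt2
  have hdirac : Integrable (fun x : ℝ => x * Real.log x)
      ((ENNReal.ofReal (max (1 - c) 0)) • Measure.dirac 0) := by
    apply Integrable.smul_measure _ ENNReal.ofReal_ne_top
    refine ⟨hfm.aestronglyMeasurable, ?_⟩
    rw [hasFiniteIntegral_iff_norm, lintegral_dirac]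
    simp [Real.log_zero]
  have hMP : MP c = (ENNReal.ofReal (max (1 - c) 0)) • Measure.dirac 0
      + volume.withDensity fun x => ENNReal.ofReal (ρ x) := by
    rw [hρdef, hhdef, hadef, hbdef, hsdef]
    rfl
  rw [hMP, integral_add_measure hdirac hwd, MeasureTheory.integral_smul_measure, integral_dirac]
  simp only [Real.log_zero, mul_zero, smul_zero, zero_add]
  have step2 : ∫ x, x * Real.log x ∂(volume.withDensity fun x => ENNReal.ofReal (ρ x))
      = ∫ x, ρ x * (x * Real.log x) := by
    rw [show (fun x => ENNReal.ofReal (ρ x))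
        = fun x => ((ρ x).toNNReal : ENNReal) from rfl]
    rw [integral_withDensity_eq_integral_smul hρm.real_toNNReal]
    congr 1
    funext x
    rw [NNReal.smul_def, Real.coe_toNNReal _ (hρ0 x), smul_eq_mul]
  have step3 : ∫ x, ρ x * (x * Real.log x)
      = ∫ x in Set.Icc a b, Real.sqrt (4 * c - (x - 1 - c) ^ 2) * Real.log x / (2 * π) := by
    rw [← MeasureTheory.integral_indicator measurableSet_Icc]
    congr 1
    funext x
    rw [hρdef]
    by_cases hx : x ∈ Set.Icc a b
    · rw [Set.indicator_of_mem hx, Set.indicator_of_mem hx, hhdef]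
      rcases eq_or_ne x 0 with rfl | hx0
      · simp [Real.log_zero]
      · field_simp
    · rw [Set.indicator_of_notMem hx, Set.indicator_of_notMem hx, zero_mul]
  have step4 : ∫ x in Set.Icc a b, Real.sqrt (4 * c - (x - 1 - c) ^ 2) * Real.log x / (2 * π)
      = ∫ x in Set.Ioo a b, Real.sqrt (4 * c - (x - 1 - c) ^ 2) * Real.log x / (2 * π) := by
    rw [integral_Icc_eq_integral_Ioc, integral_Ioc_eq_integral_Ioo]
  set f : ℝ → ℝ := fun θ => 1 + c + 2 * s * Real.cos θ with hfdef
  have himg : f '' Set.Ioo 0 π = Set.Ioo a b := by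
    apply Set.Subset.antisymm
    · rintro x ⟨θ, hθ, rfl⟩
      have hgt : -1 < Real.cos θ := by
        have hh := Real.strictAntiOn_cos ⟨hθ.1.le, hθ.2.le⟩ ⟨Real.pi_pos.le, le_refl π⟩ hθ.2
        rw [Real.cos_pi] at hh; exact hh
      have hlt : Real.cos θ < 1 := by
        have hh := Real.strictAntiOn_cos ⟨le_refl (0:ℝ), Real.pi_pos.le⟩ ⟨hθ.1.le, hθ.2.le⟩ hθ.1
        rw [Real.cos_zero] at hh; exact hh
      constructor
      · simp only [hfdef, hadef]
        nlinarith [mul_pos hs (show (0:ℝ) < Real.cos θ + 1 by linarith)]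
      · simp only [hfdef, hbdef]
        nlinarith [mul_pos hs (show (0:ℝ) < 1 - Real.cos θ by linarith)]
    · have hcont : ContinuousOn f (Set.Icc 0 π) := (by fun_prop : Continuous f).continuousOn
      have hsub := intermediate_value_Ioo' Real.pi_pos.le hcont
      have hfπ : f π = a := by
        simp only [hfdef, hadef, Real.cos_pi]
        ring
      have hf0 : f 0 = b := by
        simp only [hfdef, hbdef, Real.cos_zero]
        ring
      rw [hfπ, hf0] at hsub
      exact hsub
  have hder : ∀ θ ∈ Set.Ioo 0 π, HasDerivWithinAt f (2 * s * (-Real.sin θ)) (Set.Ioo 0 π) θ := by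
    intro θ _
    exact (((Real.hasDerivAt_cos θ).const_mul (2 * s)).const_add (1 + c)).hasDerivWithinAt
  have hinj : Set.InjOn f (Set.Ioo 0 π) := by
    intro x hx y hy hxy
    have h2s : (2 * s) ≠ 0 := by positivity
    have hcc : Real.cos x = Real.cos y := by
      apply mul_left_cancel₀ h2s
      simp only [hfdef] at hxy
      linarith
    exact Real.injOn_cos ⟨hx.1.le, hx.2.le⟩ ⟨hy.1.le, hy.2.le⟩ hcc
  have step5 : ∫ x in Set.Ioo a b, Real.sqrt (4 * c - (x - 1 - c) ^ 2) * Real.log x / (2 * π)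
      = ∫ θ in Set.Ioo 0 π, |2 * s * (-Real.sin θ)| •
          (Real.sqrt (4 * c - (f θ - 1 - c) ^ 2) * Real.log (f θ) / (2 * π)) := by
    rw [← himg, integral_image_eq_integral_abs_deriv_smul measurableSet_Ioo hder hinj]
  have step6 : ∫ θ in Set.Ioo 0 π, |2 * s * (-Real.sin θ)| •
          (Real.sqrt (4 * c - (f θ - 1 - c) ^ 2) * Real.log (f θ) / (2 * π))
      = ∫ θ in Set.Ioo 0 π, (2 * c / π) *
          (Real.sin θ ^ 2 * Real.log (1 + c + 2 * s * Real.cos θ)) := by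
    apply setIntegral_congr_fun measurableSet_Ioo
    intro θ hθ
    have hsin0 : 0 ≤ Real.sin θ := Real.sin_nonneg_of_nonneg_of_le_pi hθ.1.le hθ.2.le
    have habs : |2 * s * (-Real.sin θ)| = 2 * s * Real.sin θ := by
      rw [abs_mul, abs_neg, abs_of_nonneg hsin0, abs_of_nonneg (by positivity : (0:ℝ) ≤ 2 * s)]
    have hpy := Real.sin_sq_add_cos_sq θ
    have hsq : 4 * c - (f θ - 1 - c) ^ 2 = (2 * s * Real.sin θ) ^ 2 := by
      simp only [hfdef]
      linear_combination (-4:ℝ) * hs2 + (-4 * s ^ 2) * hpy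
    have hsqrt : Real.sqrt ((2 * s * Real.sin θ) ^ 2) = 2 * s * Real.sin θ :=
      Real.sqrt_sq (by positivity)
    show |2 * s * (-Real.sin θ)| •
        (Real.sqrt (4 * c - (f θ - 1 - c) ^ 2) * Real.log (f θ) / (2 * π))
      = (2 * c / π) * (Real.sin θ ^ 2 * Real.log (1 + c + 2 * s * Real.cos θ))
    rw [habs, hsq, hsqrt, smul_eq_mul]
    have hfθ : f θ = 1 + c + 2 * s * Real.cos θ := rfl
    rw [hfθ, ← hs2]
    field_simp
  have step7 : ∫ θ in Set.Ioo 0 π, (2 * c / π) *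
        (Real.sin θ ^ 2 * Real.log (1 + c + 2 * s * Real.cos θ))
      = (2 * c / π) * ∫ θ in (0:ℝ)..π,
          Real.sin θ ^ 2 * Real.log (1 + c + 2 * s * Real.cos θ) := by
    rw [MeasureTheory.integral_const_mul]
    congr 1
    rw [intervalIntegral.integral_of_le Real.pi_pos.le, integral_Ioc_eq_integral_Ioo]
  rw [step2, step3, step4, step5, step6, step7]

/-- **Entropy integral of the free Poisson distribution.** For `c > 0`,
`∫ x log x dπ_c(x)` equals `1/2 + c log c` if `c ≥ 1` and `c²/2` if `0 < c < 1`.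
(Note `Real.log 0 = 0`, which implements the convention `0·log 0 = 0` at the atom.) -/
theorem free_poisson_xlogx (c : ℝ) (hc : 0 < c) :
    ∫ x, x * Real.log x ∂(MP c) =
      if 1 ≤ c then 1 / 2 + c * Real.log c else c ^ 2 / 2 := by
  rw [MP_reduce c hc]
  by_cases h1c : 1 ≤ c
  · rw [if_pos h1c]
    rcases eq_or_lt_of_le h1c with heq | hlt
    · -- c = 1
      subst heq
      have hfun : (fun θ => Real.sin θ ^ 2 * Real.log (1 + 1 + 2 * Real.sqrt 1 * Real.cos θ))
          = fun θ => Real.sin θ ^ 2 * Real.log (1 + 1 + 2 * Real.cos θ) := by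
        funext θ
        rw [Real.sqrt_one, mul_one]
      rw [show (∫ θ in (0:ℝ)..π, Real.sin θ ^ 2 * Real.log (1 + 1 + 2 * Real.sqrt 1 * Real.cos θ))
          = ∫ θ in (0:ℝ)..π, Real.sin θ ^ 2 * Real.log (1 + 1 + 2 * Real.cos θ) from by rw [hfun],
        J_one, Real.log_one]
      have := Real.pi_ne_zero
      field_simp
      norm_num
    · -- c > 1
      set r : ℝ := (Real.sqrt c)⁻¹ with hrdef
      have hsc : 0 < Real.sqrt c := Real.sqrt_pos.2 hc
      have hs1 : 1 < Real.sqrt c := by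
        rw [show (1:ℝ) = Real.sqrt 1 by simp]
        exact Real.sqrt_lt_sqrt (by norm_num) hlt
      have hr0 : 0 < r := by positivity
      have hr1 : r < 1 := by
        rw [hrdef]
        exact inv_lt_one_of_one_lt₀ hs1
      have hr2 : r ^ 2 = c⁻¹ := by
        rw [hrdef, inv_pow, Real.sq_sqrt hc.le]
      have hupos : ∀ θ : ℝ, 0 < 1 + r ^ 2 + 2 * r * Real.cos θ := by
        intro θ
        nlinarith [Real.neg_one_le_cos θ, sq_nonneg (1 - r)]
      have key : ∀ θ : ℝ, Real.log (1 + c + 2 * Real.sqrt c * Real.cos θ)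
          = Real.log c + Real.log (1 + r ^ 2 + 2 * r * Real.cos θ) := by
        intro θ
        have h1 : c * r ^ 2 = 1 := by
          rw [hr2]; field_simp
        have h2 : c * (2 * r) = 2 * Real.sqrt c := by
          rw [hrdef]
          rw [show c * (2 * (Real.sqrt c)⁻¹) = 2 * (c / Real.sqrt c) by ring]
          rw [Real.div_sqrt]
        have hprod : 1 + c + 2 * Real.sqrt c * Real.cos θ
            = c * (1 + r ^ 2 + 2 * r * Real.cos θ) := by
          linear_combination (-1 : ℝ) * h1 - Real.cos θ * h2
        rw [hprod, Real.log_mul hc.ne' (hupos θ).ne']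
      have hsplit : (∫ θ in (0:ℝ)..π,
            Real.sin θ ^ 2 * Real.log (1 + c + 2 * Real.sqrt c * Real.cos θ))
          = (∫ θ in (0:ℝ)..π, Real.sin θ ^ 2 * Real.log c)
            + ∫ θ in (0:ℝ)..π, Real.sin θ ^ 2 * Real.log (1 + r ^ 2 + 2 * r * Real.cos θ) := by
        rw [← intervalIntegral.integral_add]
        · apply intervalIntegral.integral_congr
          intro θ _
          show Real.sin θ ^ 2 * Real.log (1 + c + 2 * Real.sqrt c * Real.cos θ)
              = Real.sin θ ^ 2 * Real.log c
                + Real.sin θ ^ 2 * Real.log (1 + r ^ 2 + 2 * r * Real.cos θ)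
          rw [key θ]
          ring
        · exact ((Real.continuous_sin.pow 2).mul continuous_const).intervalIntegrable _ _
        · apply Continuous.intervalIntegrable
          apply (Real.continuous_sin.pow 2).mul
          apply Continuous.log
          · fun_prop
          · exact fun θ => (hupos θ).ne'
      rw [hsplit, J_lt_one hr0.le hr1, hr2]
      have hconst : (∫ θ in (0:ℝ)..π, Real.sin θ ^ 2 * Real.log c)
          = π / 2 * Real.log c := by
        rw [intervalIntegral.integral_mul_const, integral_sin_sq]
        norm_num
      rw [hconst]
      have := Real.pi_ne_zero
      field_simp
      ring
  · rw [if_neg h1c]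
    push_neg at h1c
    have hr1 : Real.sqrt c < 1 := by
      rw [show (1:ℝ) = Real.sqrt 1 by simp]
      exact Real.sqrt_lt_sqrt hc.le h1c
    have hfun : (fun θ => Real.sin θ ^ 2 * Real.log (1 + c + 2 * Real.sqrt c * Real.cos θ))
        = fun θ => Real.sin θ ^ 2 *
            Real.log (1 + Real.sqrt c ^ 2 + 2 * Real.sqrt c * Real.cos θ) := by
      funext θ
      rw [Real.sq_sqrt hc.le]
    rw [show (∫ θ in (0:ℝ)..π, Real.sin θ ^ 2 * Real.log (1 + c + 2 * Real.sqrt c * Real.cos θ))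
        = ∫ θ in (0:ℝ)..π, Real.sin θ ^ 2 *
            Real.log (1 + Real.sqrt c ^ 2 + 2 * Real.sqrt c * Real.cos θ) from by rw [hfun],
      J_lt_one (Real.sqrt_nonneg c) hr1, Real.sq_sqrt hc.le]
    have := Real.pi_ne_zero
    field_simp
    ring
end
end

section
/- Let p ≥ 1 be an integer and let d ≥ 0 be a real parameter. For β ∈ S_{2p}, set S₂(β) = d·|β| + |β·γ̃^{-1}| + |β·δ| − p. Then: (i) if d = 0, S₂(β) ≥ −1, with equality if and only if β lies on the geodesic from δ to γ̃, i.e. |β·δ| + |β·γ̃^{-1}| = p−1; (ii) if 0 < d < 2, S₂(β) ≥ dp − 1, with equality if and only if β = δ; (iii) if d = 2, S₂(β) ≥ 2p − 1, with equality if and only if β lies on the geodesic from the identity to δ, i.e. |β| + |β·δ| = p; (iv) if d > 2, S₂(β) ≥ 2p − 1, with equality if and only if β = id. -/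
open Equiv Filter

noncomputable section

/-- length of a permutation: `|σ| = (size of ground set) − #σ`, the minimal number of
transpositions whose product is `σ` -/
def permLength {α : Type*} [Fintype α] [DecidableEq α] (σ : Equiv.Perm α) : ℕ :=
  σ.cycleType.sum - σ.cycleType.card

/-- the involution `δ ∈ S_{2p}`: `δ(i^T) = i^B`, `δ(i^B) = i^T`, on the ground set
`{1^T,…,p^T} ⊔ {1^B,…,p^B}` -/
def deltaPerm (p : ℕ) : Equiv.Perm (Fin p ⊕ Fin p) := Equiv.sumComm (Fin p) (Fin p)

/-- the permutation `γ ∈ S_{2p}`: `γ(i^T) = (i−1)^T`, `γ(i^B) = (i+1)^B` (mod `p`) -/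
def gammaPerm (p : ℕ) : Equiv.Perm (Fin p ⊕ Fin p) :=
  Equiv.sumCongr (finRotate p)⁻¹ (finRotate p)

/-- the full `2p`-cycle `γ̃ = (p^T ⋯ 2^T 1^T 1^B 2^B ⋯ p^B)`, which satisfies
`γ = (1^B p^T)·γ̃` -/
def gammaTilde (p : ℕ) (hp : 0 < p) : Equiv.Perm (Fin p ⊕ Fin p) :=
  Equiv.swap (Sum.inr (⟨0, hp⟩ : Fin p)) (Sum.inl (⟨p - 1, by omega⟩ : Fin p)) *
    gammaPerm p

/-- the quantity `S₂(β) = d|β| + |βγ̃⁻¹| + |βδ| − p` -/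
def S2 (p : ℕ) (hp : 0 < p) (d : ℝ) (β : Equiv.Perm (Fin p ⊕ Fin p)) : ℝ :=
  d * permLength β + (permLength (β * (gammaTilde p hp)⁻¹) : ℝ) +
    (permLength (β * deltaPerm p) : ℝ) - p

namespace PLAux

open Equiv.Perm

set_option linter.unusedSectionVars false

section Generic
variable {α : Type*} [Fintype α] [DecidableEq α]

lemma mcard_le_sum {s : Multiset ℕ} (h : ∀ a ∈ s, 1 ≤ a) : Multiset.card s ≤ s.sum := by
  induction s using Multiset.induction with
  | empty => simp
  | cons a s ih =>
    simp only [Multiset.card_cons, Multiset.sum_cons]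
    have := h a (Multiset.mem_cons_self a s)
    have := ih (fun b hb => h b (Multiset.mem_cons_of_mem hb))
    omega

lemma cycleType_card_le_sum (σ : Equiv.Perm α) :
    Multiset.card σ.cycleType ≤ σ.cycleType.sum :=
  mcard_le_sum fun a ha => le_trans one_le_two (two_le_of_mem_cycleType ha)

lemma two_mul_card_le_sum (σ : Equiv.Perm α) :
    2 * Multiset.card σ.cycleType ≤ σ.cycleType.sum := by
  have : σ.cycleType.card • 2 ≤ σ.cycleType.sum :=
    Multiset.card_nsmul_le_sum fun a ha => two_le_of_mem_cycleType ha
  simpa [smul_eq_mul, mul_comm] using this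

lemma permLength_one : permLength (1 : Equiv.Perm α) = 0 := by
  simp [permLength, cycleType_one]

lemma permLength_add_card (σ : Equiv.Perm α) :
    permLength σ + Multiset.card σ.cycleType = σ.support.card := by
  have h1 := cycleType_card_le_sum σ
  have h2 := sum_cycleType σ
  simp only [permLength]
  omega

lemma permLength_eq_zero_iff {σ : Equiv.Perm α} : permLength σ = 0 ↔ σ = 1 := by
  constructor
  · intro h
    have h1 := two_mul_card_le_sum σ
    have h3 : Multiset.card σ.cycleType = 0 := by simp only [permLength] at h; omega
    exact cycleType_eq_zero.mp (Multiset.card_eq_zero.mp h3)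
  · rintro rfl; exact permLength_one

lemma permLength_inv (σ : Equiv.Perm α) : permLength σ⁻¹ = permLength σ := by
  simp [permLength, cycleType_inv]

lemma permLength_disjoint_mul {σ τ : Equiv.Perm α} (h : Disjoint σ τ) :
    permLength (σ * τ) = permLength σ + permLength τ := by
  have h1 := cycleType_card_le_sum σ
  have h2 := cycleType_card_le_sum τ
  simp only [permLength, Equiv.Perm.Disjoint.cycleType_mul h, Multiset.sum_add, Multiset.card_add]
  omega

lemma permLength_isCycle {σ : Equiv.Perm α} (h : σ.IsCycle) :
    permLength σ = σ.support.card - 1 := by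
  simp [permLength, h.cycleType]

lemma permLength_sq_eq_one {σ : Equiv.Perm α} (h : σ * σ = 1) :
    2 * permLength σ = σ.support.card := by
  have horder : orderOf σ ∣ 2 := orderOf_dvd_of_pow_eq_one (by rwa [pow_two])
  have hall : ∀ a ∈ σ.cycleType, a = 2 := by
    intro a ha
    have h2 : 2 ≤ a := two_le_of_mem_cycleType ha
    have hdvd : a ∣ 2 := dvd_trans (Multiset.dvd_lcm ha) ((lcm_cycleType σ) ▸ horder)
    have := Nat.le_of_dvd two_pos hdvd
    omega
  have hrep : σ.cycleType = Multiset.replicate (Multiset.card σ.cycleType) 2 :=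
    Multiset.eq_replicate_card.mpr hall
  have hsum : σ.cycleType.sum = 2 * Multiset.card σ.cycleType := by
    rw [hrep]; simp [Multiset.sum_replicate, mul_comm]
  have h2 := sum_cycleType σ
  simp only [permLength]
  omega

def scSetoid (σ : Equiv.Perm α) : Setoid α :=
  ⟨σ.SameCycle, ⟨Equiv.Perm.SameCycle.refl σ, Equiv.Perm.SameCycle.symm,
    Equiv.Perm.SameCycle.trans⟩⟩

def orbCount (σ : Equiv.Perm α) : ℕ := Nat.card (Quotient (scSetoid σ))

lemma card_cycleType_eq (σ : Equiv.Perm α) :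
    Multiset.card σ.cycleType = σ.cycleFactorsFinset.card := by
  simp [cycleType_def]

lemma support_nonempty_of_mem_factors {σ c : Equiv.Perm α} (hc : c ∈ σ.cycleFactorsFinset) :
    c.support.Nonempty := by
  obtain ⟨x, hx, -⟩ := (mem_cycleFactorsFinset_iff.mp hc).1
  exact ⟨x, mem_support.mpr hx⟩

/-- orbits are in bijection with fixed points plus cycle factors -/
lemma orbCount_eq (σ : Equiv.Perm α) :
    orbCount σ = (Fintype.card α - σ.support.card) + σ.cycleFactorsFinset.card := by
  classical
  set s := scSetoid σ
  let g : ({x : α // σ x = x} ⊕ {c : Equiv.Perm α // c ∈ σ.cycleFactorsFinset}) →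
      Quotient s :=
    fun z => match z with
    | Sum.inl ⟨x, _⟩ => Quotient.mk s x
    | Sum.inr ⟨c, hc⟩ => Quotient.mk s (support_nonempty_of_mem_factors hc).choose
  have rep_mem : ∀ (c : Equiv.Perm α) (hc : c ∈ σ.cycleFactorsFinset),
      (support_nonempty_of_mem_factors hc).choose ∈ c.support := fun c hc =>
    (support_nonempty_of_mem_factors hc).choose_spec
  have hginj : Function.Injective g := by
    rintro (⟨x, hx⟩ | ⟨c, hc⟩) (⟨y, hy⟩ | ⟨c', hc'⟩) h
    · have hxy : σ.SameCycle x y := Quotient.exact h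
      obtain ⟨n, hn⟩ := hxy
      rw [zpow_apply_eq_self_of_apply_eq_self hx n] at hn
      simp [hn]
    · exfalso
      have hxy : σ.SameCycle x _ := Quotient.exact h
      obtain ⟨n, hn⟩ := hxy
      rw [zpow_apply_eq_self_of_apply_eq_self hx n] at hn
      have hmem := rep_mem c' hc'
      rw [← hn] at hmem
      have : σ x = x := hx
      have hmoved : c' x ≠ x := mem_support.mp hmem
      have := (mem_cycleFactorsFinset_iff.mp hc').2 x hmem
      exact hmoved (this.trans hx)
    · exfalso
      have hxy : σ.SameCycle _ y := Quotient.exact h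
      obtain ⟨n, hn⟩ := hxy.symm
      rw [zpow_apply_eq_self_of_apply_eq_self hy n] at hn
      have hmem := rep_mem c hc
      rw [← hn] at hmem
      have hmoved : c y ≠ y := mem_support.mp hmem
      have := (mem_cycleFactorsFinset_iff.mp hc).2 y hmem
      exact hmoved (this.trans hy)
    · have hxy : σ.SameCycle _ _ := Quotient.exact h
      have h1 : c = σ.cycleOf _ := cycle_is_cycleOf (rep_mem c hc) hc
      have h2 : c' = σ.cycleOf _ := cycle_is_cycleOf (rep_mem c' hc') hc'
      have : c = c' := by rw [h1, h2, hxy.cycleOf_eq]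
      simp [this]
  have hgsurj : Function.Surjective g := by
    intro q
    obtain ⟨x, rfl⟩ := Quotient.exists_rep q
    by_cases hx : σ x = x
    · exact ⟨Sum.inl ⟨x, hx⟩, rfl⟩
    · have hxs : x ∈ σ.support := mem_support.mpr hx
      have hc : σ.cycleOf x ∈ σ.cycleFactorsFinset :=
        cycleOf_mem_cycleFactorsFinset_iff.mpr hxs
      refine ⟨Sum.inr ⟨σ.cycleOf x, hc⟩, ?_⟩
      have hmem := rep_mem _ hc
      have : σ.SameCycle x _ := (mem_support_cycleOf_iff.mp hmem).1
      exact (Quotient.sound (this.symm : (scSetoid σ).r _ x))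
  have hcard : Nat.card ({x : α // σ x = x} ⊕ {c : Equiv.Perm α // c ∈ σ.cycleFactorsFinset})
      = Nat.card (Quotient s) := Nat.card_eq_of_bijective g ⟨hginj, hgsurj⟩
  rw [orbCount, ← hcard, Nat.card_sum]
  congr 1
  · rw [Nat.card_eq_fintype_card, Fintype.card_subtype]
    have : Finset.filter (fun x => σ x = x) Finset.univ = σ.supportᶜ := by
      ext x; simp [Equiv.Perm.mem_support]
    rw [this, Finset.card_compl]
  · rw [Nat.card_eq_fintype_card]
    simp [Fintype.card_coe]

lemma orbCount_add_permLength (σ : Equiv.Perm α) :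
    orbCount σ + permLength σ = Fintype.card α := by
  have h1 : Multiset.card σ.cycleType ≤ σ.cycleType.sum :=
    mcard_le_sum fun a ha => le_trans one_le_two (two_le_of_mem_cycleType ha)
  have h2 := sum_cycleType σ
  have h3 : σ.support.card ≤ Fintype.card α := Finset.card_le_univ _
  have h4 := card_cycleType_eq σ
  rw [orbCount_eq]
  simp only [permLength]
  omega

lemma pow_swap_mul_eq_of_avoid {σ : Equiv.Perm α} {a b x : α}
    (ha : ¬ σ.SameCycle x a) (hb : ¬ σ.SameCycle x b) :
    ∀ n : ℕ, ((Equiv.swap a b * σ) ^ n) x = (σ ^ n) x := by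
  intro n
  induction n with
  | zero => simp
  | succ n ih =>
    have hxa : (σ ^ (n+1)) x ≠ a := fun h =>
      ha ⟨((n:ℤ)+1), by rw [show ((n:ℤ)+1) = ((n+1 : ℕ) : ℤ) by push_cast; ring, zpow_natCast]; exact h⟩
    have hxb : (σ ^ (n+1)) x ≠ b := fun h =>
      hb ⟨((n:ℤ)+1), by rw [show ((n:ℤ)+1) = ((n+1 : ℕ) : ℤ) by push_cast; ring, zpow_natCast]; exact h⟩
    rw [pow_succ', Equiv.Perm.mul_apply] at hxa hxb
    rw [pow_succ', pow_succ', Equiv.Perm.mul_apply, Equiv.Perm.mul_apply, ih,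
      Equiv.Perm.mul_apply]
    exact Equiv.swap_apply_of_ne_of_ne hxa hxb

lemma sameCycle_swap_mul_iff {σ : Equiv.Perm α} {a b x y : α}
    (ha : ¬ σ.SameCycle x a) (hb : ¬ σ.SameCycle x b) :
    (Equiv.swap a b * σ).SameCycle x y ↔ σ.SameCycle x y := by
  constructor
  · intro h
    obtain ⟨i, hi, hxy⟩ := h.exists_pow_eq'
    rw [pow_swap_mul_eq_of_avoid ha hb] at hxy
    exact ⟨i, by rw [zpow_natCast]; exact hxy⟩
  · intro h
    obtain ⟨i, hi, hxy⟩ := h.exists_pow_eq'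
    rw [← pow_swap_mul_eq_of_avoid ha hb] at hxy
    exact ⟨i, by rw [zpow_natCast]; exact hxy⟩

lemma orbCount_le_swap_mul (a b : α) (σ : Equiv.Perm α) :
    Nat.card (Quotient (scSetoid σ)) ≤
      Nat.card (Quotient (scSetoid (Equiv.swap a b * σ))) + 1 := by
  classical
  set τ := Equiv.swap a b * σ with hτ
  set F : α → Option (Quotient (scSetoid τ)) := fun x =>
    if σ.SameCycle x a then none
    else if σ.SameCycle x b then some (Quotient.mk (scSetoid τ) b)
    else some (Quotient.mk (scSetoid τ) x) with hF
  have hresp : ∀ x y : α, σ.SameCycle x y → F x = F y := by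
    intro x y hxy
    simp only [hF]
    by_cases hxa : σ.SameCycle x a
    · rw [if_pos hxa, if_pos (hxy.symm.trans hxa)]
    · rw [if_neg hxa, if_neg (fun h => hxa (hxy.trans h))]
      by_cases hxb : σ.SameCycle x b
      · rw [if_pos hxb, if_pos (hxy.symm.trans hxb)]
      · rw [if_neg hxb, if_neg (fun h => hxb (hxy.trans h))]
        have : τ.SameCycle x y := (sameCycle_swap_mul_iff hxa hxb).mpr hxy
        exact congrArg some (Quotient.sound this)
  let G : Quotient (scSetoid σ) → Option (Quotient (scSetoid τ)) :=
    Quotient.lift F hresp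
  have hGinj : Function.Injective G := by
    intro q q'
    obtain ⟨x, rfl⟩ := Quotient.exists_rep q
    obtain ⟨y, rfl⟩ := Quotient.exists_rep q'
    show F x = F y → _
    simp only [hF]
    by_cases hxa : σ.SameCycle x a <;> by_cases hya : σ.SameCycle y a
    · intro _; exact Quotient.sound (hxa.trans hya.symm)
    · rw [if_pos hxa, if_neg hya]; split_ifs <;> (intro h; exact absurd h (by simp))
    · rw [if_neg hxa, if_pos hya]; split_ifs <;> (intro h; exact absurd h (by simp))
    · rw [if_neg hxa, if_neg hya]
      by_cases hxb : σ.SameCycle x b <;> by_cases hyb : σ.SameCycle y b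
      · intro _; exact Quotient.sound (hxb.trans hyb.symm)
      · rw [if_pos hxb, if_neg hyb]
        intro h
        have h2 : τ.SameCycle b y := Quotient.exact (Option.some_injective _ h)
        have h3 : τ.SameCycle y b := h2.symm
        rw [sameCycle_swap_mul_iff hya hyb] at h3
        exact absurd h3 hyb
      · rw [if_neg hxb, if_pos hyb]
        intro h
        have h2 : τ.SameCycle x b := Quotient.exact (Option.some_injective _ h)
        rw [sameCycle_swap_mul_iff hxa hxb] at h2
        exact absurd h2 hxb
      · rw [if_neg hxb, if_neg hyb]
        intro h
        have h2 : τ.SameCycle x y := Quotient.exact (Option.some_injective _ h)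
        rw [sameCycle_swap_mul_iff hxa hxb] at h2
        exact Quotient.sound h2
  calc Nat.card (Quotient (scSetoid σ)) ≤ Nat.card (Option (Quotient (scSetoid τ))) :=
        Nat.card_le_card_of_injective G hGinj
    _ = Nat.card (Quotient (scSetoid τ)) + 1 := by
        have e : Option (Quotient (scSetoid τ)) ≃ (Quotient (scSetoid τ)) ⊕ (PUnit : Type) :=
          Equiv.optionEquivSumPUnit _
        rw [Nat.card_congr e, Nat.card_sum]
        simp

lemma isSwap_of_mem_zipWith :
    ∀ {l : List α}, l.Nodup → ∀ t ∈ List.zipWith Equiv.swap l l.tail, t.IsSwap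
  | [], _, t, ht => by simp at ht
  | [x], _, t, ht => by simp at ht
  | x :: y :: l, h, t, ht => by
    simp only [List.tail_cons, List.zipWith_cons_cons, List.mem_cons] at ht
    rcases ht with rfl | ht
    · exact ⟨x, y, by simp at h; tauto, rfl⟩
    · exact isSwap_of_mem_zipWith (List.Nodup.of_cons h) t ht

lemma exists_swap_list (σ : Equiv.Perm α) :
    ∃ l : List (Equiv.Perm α), (∀ t ∈ l, t.IsSwap) ∧ l.prod = σ ∧ l.length = permLength σ := by
  classical
  induction σ using cycle_induction_on with
  | base_one => exact ⟨[], by simp, by simp, by simp [permLength_one]⟩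
  | base_cycles σ hσ =>
    obtain ⟨x, hx, -⟩ := id hσ
    have hxs : x ∈ σ.support := mem_support.mpr hx
    refine ⟨List.zipWith Equiv.swap (σ.toList x) (σ.toList x).tail,
      isSwap_of_mem_zipWith (nodup_toList σ x), ?_, ?_⟩
    · show (σ.toList x).formPerm = σ
      rw [formPerm_toList, hσ.cycleOf_eq hx]
    · rw [List.length_zipWith, List.length_tail, length_toList, hσ.cycleOf_eq hx,
        permLength_isCycle hσ]
      have := hσ.two_le_card_support
      omega
  | induction_disjoint σ τ hd hc ih1 ih2 =>
    obtain ⟨l1, hs1, hp1, hl1⟩ := ih1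
    obtain ⟨l2, hs2, hp2, hl2⟩ := ih2
    refine ⟨l1 ++ l2, ?_, ?_, ?_⟩
    · intro t ht; rcases List.mem_append.mp ht with h | h
      · exact hs1 t h
      · exact hs2 t h
    · rw [List.prod_append, hp1, hp2]
    · rw [List.length_append, hl1, hl2, permLength_disjoint_mul hd]


lemma permLength_swap_mul_le (a b : α) (σ : Equiv.Perm α) :
    permLength (Equiv.swap a b * σ) ≤ permLength σ + 1 := by
  have o1 := orbCount_add_permLength σ
  have o2 := orbCount_add_permLength (Equiv.swap a b * σ)
  have k := orbCount_le_swap_mul a b σ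
  simp only [orbCount] at o1 o2
  omega

lemma permLength_swap_list_prod_le :
    ∀ l : List (Equiv.Perm α), (∀ t ∈ l, t.IsSwap) → permLength l.prod ≤ l.length
  | [], _ => by simp [permLength_one]
  | t :: l, h => by
    obtain ⟨a, b, hab, rfl⟩ := h t List.mem_cons_self
    rw [List.prod_cons, List.length_cons]
    have := permLength_swap_list_prod_le l (fun s hs => h s (List.mem_cons_of_mem _ hs))
    have h2 := permLength_swap_mul_le a b l.prod
    omega

lemma permLength_mul_le (σ τ : Equiv.Perm α) :
    permLength (σ * τ) ≤ permLength σ + permLength τ := by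
  obtain ⟨l1, hs1, hp1, hl1⟩ := exists_swap_list σ
  obtain ⟨l2, hs2, hp2, hl2⟩ := exists_swap_list τ
  have h : (l1 ++ l2).prod = σ * τ := by rw [List.prod_append, hp1, hp2]
  have := permLength_swap_list_prod_le (l1 ++ l2) (fun t ht => by
    rcases List.mem_append.mp ht with h' | h'
    · exact hs1 t h'
    · exact hs2 t h')
  rw [h, List.length_append, hl1, hl2] at this
  exact this

end Generic

section Concrete
variable {q : ℕ}

lemma deltaPerm_mul_self (p : ℕ) : deltaPerm p * deltaPerm p = 1 := by
  ext x; cases x <;> rfl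

lemma deltaPerm_inv (p : ℕ) : (deltaPerm p)⁻¹ = deltaPerm p :=
  inv_eq_of_mul_eq_one_right (deltaPerm_mul_self p)

lemma support_deltaPerm (p : ℕ) : (deltaPerm p).support = Finset.univ := by
  ext x; cases x <;> simp [deltaPerm, Equiv.Perm.mem_support]

-- basic Fin facts
lemma fin_mk_zero (hp : 0 < q + 1) : (⟨0, hp⟩ : Fin (q+1)) = 0 := rfl

lemma fin_mk_last (h : q + 1 - 1 < q + 1) : (⟨q + 1 - 1, h⟩ : Fin (q+1)) = Fin.last q := rfl

lemma fin_add_one_mk {k : ℕ} (hk : k < q) :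
    (⟨k, by omega⟩ : Fin (q+1)) + 1 = ⟨k + 1, by omega⟩ := by
  ext
  simp only [Fin.add_def, Fin.val_one']
  have h3 : (1:ℕ) % (q+1) = 1 := Nat.mod_eq_of_lt (by omega)
  rw [h3]
  exact Nat.mod_eq_of_lt (by omega)

lemma gt_apply_inl_zero (hp : 0 < q + 1) :
    gammaTilde (q+1) hp (Sum.inl 0) = Sum.inr 0 := by
  simp only [gammaTilde, gammaPerm, Equiv.Perm.mul_apply, Equiv.sumCongr_apply, Sum.map_inl]
  have h : (finRotate (q+1))⁻¹ (0 : Fin (q+1)) = Fin.last q := by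
    rw [Equiv.Perm.inv_eq_iff_eq, finRotate_last]
  rw [h, fin_mk_last, fin_mk_zero, Equiv.swap_apply_right]

lemma gt_apply_inl {i j : Fin (q+1)} (hp : 0 < q + 1) (hi : i ≠ 0) (hj : j + 1 = i) :
    gammaTilde (q+1) hp (Sum.inl i) = Sum.inl j := by
  simp only [gammaTilde, gammaPerm, Equiv.Perm.mul_apply, Equiv.sumCongr_apply, Sum.map_inl]
  have h : (finRotate (q+1))⁻¹ i = j := by
    rw [Equiv.Perm.inv_eq_iff_eq, finRotate_succ_apply, hj]
  rw [h, fin_mk_last, fin_mk_zero]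
  apply Equiv.swap_apply_of_ne_of_ne
  · exact fun h => Sum.inl_ne_inr h
  · intro h
    apply hi
    have : j = Fin.last q := Sum.inl_injective h
    rw [← hj, this, Fin.last_add_one]

lemma gt_apply_inr_last (hp : 0 < q + 1) :
    gammaTilde (q+1) hp (Sum.inr (Fin.last q)) = Sum.inl (Fin.last q) := by
  simp only [gammaTilde, gammaPerm, Equiv.Perm.mul_apply, Equiv.sumCongr_apply, Sum.map_inr]
  rw [finRotate_last, fin_mk_last, fin_mk_zero, Equiv.swap_apply_left]

lemma gt_apply_inr {i : Fin (q+1)} (hp : 0 < q + 1) (hi : i ≠ Fin.last q) :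
    gammaTilde (q+1) hp (Sum.inr i) = Sum.inr (i + 1) := by
  simp only [gammaTilde, gammaPerm, Equiv.Perm.mul_apply, Equiv.sumCongr_apply, Sum.map_inr]
  rw [finRotate_succ_apply, fin_mk_last, fin_mk_zero]
  apply Equiv.swap_apply_of_ne_of_ne
  · intro h
    have h2 : i + 1 = 0 := Sum.inr_injective h
    apply hi
    have h4 : Fin.last q + 1 = 0 := Fin.last_add_one q
    calc i = i + (Fin.last q + 1) := by rw [h4, add_zero]
      _ = (i + 1) + Fin.last q := by abel
      _ = Fin.last q := by rw [h2, zero_add]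
  · exact fun h => Sum.inr_ne_inl h

lemma gt_pow_inr (hp : 0 < q + 1) :
    ∀ k : ℕ, (hk : k ≤ q) → (gammaTilde (q+1) hp ^ k) (Sum.inr 0) = Sum.inr ⟨k, by omega⟩
  | 0, _ => rfl
  | (k+1), hk => by
    rw [pow_succ', Equiv.Perm.mul_apply, gt_pow_inr hp k (by omega)]
    rw [gt_apply_inr hp (by
      intro h
      have := congrArg Fin.val h
      simp only [Fin.val_last] at this
      omega)]
    rw [fin_add_one_mk (by omega)]

lemma gt_pow_inl (hp : 0 < q + 1) :
    ∀ k : ℕ, (hk : k ≤ q) →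
      (gammaTilde (q+1) hp ^ (q + 1 + k)) (Sum.inr 0) = Sum.inl ⟨q - k, by omega⟩
  | 0, _ => by
    rw [pow_succ', Equiv.Perm.mul_apply, gt_pow_inr hp q (le_refl q)]
    have h1 : (⟨q, by omega⟩ : Fin (q+1)) = Fin.last q := rfl
    rw [h1, gt_apply_inr_last hp]
    congr 1
  | (k+1), hk => by
    have h0 : q + 1 + (k + 1) = (q + 1 + k) + 1 := by omega
    rw [h0, pow_succ', Equiv.Perm.mul_apply, gt_pow_inl hp k (by omega)]
    have h1 : (⟨q - (k+1), by omega⟩ : Fin (q+1)) + 1 = ⟨q - k, by omega⟩ := by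
      have := fin_add_one_mk (q := q) (k := q - (k+1)) (by omega)
      rw [this]
      ext; simp; omega
    apply gt_apply_inl hp
    · intro h
      have := congrArg Fin.val h
      simp only [Fin.val_zero] at this
      omega
    · exact h1

lemma gt_sameCycle (hp : 0 < q + 1) (y : Fin (q+1) ⊕ Fin (q+1)) :
    (gammaTilde (q+1) hp).SameCycle (Sum.inr 0) y := by
  cases y with
  | inr i =>
    refine ⟨(i.val : ℤ), ?_⟩
    rw [zpow_natCast, gt_pow_inr hp i.val (by omega)]
  | inl i =>
    refine ⟨((q + 1 + (q - i.val) : ℕ) : ℤ), ?_⟩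
    rw [zpow_natCast, gt_pow_inl hp (q - i.val) (by omega)]
    congr 1
    ext; simp; omega

lemma gt_isCycle (hp : 0 < q + 1) : (gammaTilde (q+1) hp).IsCycle := by
  refine ⟨Sum.inr 0, ?_, fun y _ => gt_sameCycle hp y⟩
  by_cases h : (0 : Fin (q+1)) = Fin.last q
  · rw [h, gt_apply_inr_last hp]
    exact Sum.inl_ne_inr
  · rw [gt_apply_inr hp h]
    intro hcon
    have h2 : (0 : Fin (q+1)) + 1 = 0 := Sum.inr_injective hcon
    rw [zero_add] at h2
    have h5 : q ≠ 0 := fun hq => h (by subst hq; rfl)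
    have h3 := congrArg Fin.val h2
    rw [Fin.val_one', Fin.val_zero, Nat.mod_eq_of_lt (by omega)] at h3
    omega

lemma gt_support (hp : 0 < q + 1) : (gammaTilde (q+1) hp).support = Finset.univ := by
  ext x
  simp only [Equiv.Perm.mem_support, Finset.mem_univ, iff_true]
  cases x with
  | inl i =>
    by_cases h : i = 0
    · subst h; rw [gt_apply_inl_zero hp]; exact Sum.inr_ne_inl
    · have hiv : i.val ≠ 0 := fun hc => h (by ext; simp [hc])
      have hj : (⟨i.val - 1, by omega⟩ : Fin (q+1)) + 1 = i := by
        rw [fin_add_one_mk (by omega)]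
        ext; simp; omega
      rw [gt_apply_inl hp h hj]
      intro hc
      have := congrArg Fin.val (Sum.inl_injective hc)
      simp at this
      omega
  | inr i =>
    by_cases h : i = Fin.last q
    · subst h; rw [gt_apply_inr_last hp]; exact Sum.inl_ne_inr
    · rw [gt_apply_inr hp h]
      intro hc
      have h2 := congrArg Fin.val (Sum.inr_injective hc)
      have hiq : i.val < q := by
        have := i.isLt
        rcases Nat.lt_or_ge i.val q with h' | h'
        · exact h'
        · exact absurd (by ext; simp; omega : i = Fin.last q) h
      rw [Fin.add_def] at h2
      simp only [Fin.val_one'] at h2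
      rw [Nat.mod_eq_of_lt (show 1 < q + 1 by omega)] at h2
      rw [Nat.mod_eq_of_lt (by omega)] at h2
      omega

section Eps
variable (hp : 0 < q + 1)

/-- `ε = δ γ̃⁻¹` -/
private def eps (hp : 0 < q + 1) : Equiv.Perm (Fin (q+1) ⊕ Fin (q+1)) :=
  deltaPerm (q+1) * (gammaTilde (q+1) hp)⁻¹

lemma ginv_inl {i : Fin (q+1)} (hi : i ≠ Fin.last q) :
    (gammaTilde (q+1) hp)⁻¹ (Sum.inl i) = Sum.inl (i + 1) := by
  rw [Equiv.Perm.inv_eq_iff_eq]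
  refine (gt_apply_inl hp ?_ rfl).symm
  intro hc
  apply hi
  have h4 : Fin.last q + 1 = 0 := Fin.last_add_one q
  calc i = i + (Fin.last q + 1) := by rw [h4, add_zero]
    _ = (i + 1) + Fin.last q := by abel
    _ = Fin.last q := by rw [hc, zero_add]

lemma ginv_inl_last : (gammaTilde (q+1) hp)⁻¹ (Sum.inl (Fin.last q)) = Sum.inr (Fin.last q) := by
  rw [Equiv.Perm.inv_eq_iff_eq]
  exact (gt_apply_inr_last hp).symm

lemma ginv_inr_zero : (gammaTilde (q+1) hp)⁻¹ (Sum.inr 0) = Sum.inl 0 := by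
  rw [Equiv.Perm.inv_eq_iff_eq]
  exact (gt_apply_inl_zero hp).symm

lemma ginv_inr {i j : Fin (q+1)} (hj : j + 1 = i) (hjl : j ≠ Fin.last q) :
    (gammaTilde (q+1) hp)⁻¹ (Sum.inr i) = Sum.inr j := by
  rw [Equiv.Perm.inv_eq_iff_eq, ← hj]
  exact (gt_apply_inr hp hjl).symm

lemma eps_inl {i : Fin (q+1)} (hi : i ≠ Fin.last q) :
    eps hp (Sum.inl i) = Sum.inr (i + 1) := by
  rw [eps, Equiv.Perm.mul_apply, ginv_inl hp hi]; rfl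

lemma eps_inl_last : eps hp (Sum.inl (Fin.last q)) = Sum.inl (Fin.last q) := by
  rw [eps, Equiv.Perm.mul_apply, ginv_inl_last hp]; rfl

lemma eps_inr_zero : eps hp (Sum.inr 0) = Sum.inr 0 := by
  rw [eps, Equiv.Perm.mul_apply, ginv_inr_zero hp]; rfl

lemma eps_inr {i j : Fin (q+1)} (hj : j + 1 = i) (hi : i ≠ 0) :
    eps hp (Sum.inr i) = Sum.inl j := by
  have hjl : j ≠ Fin.last q := by
    intro hc
    apply hi
    rw [← hj, hc, Fin.last_add_one]
  rw [eps, Equiv.Perm.mul_apply, ginv_inr hp hj hjl]; rfl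

lemma eps_mul_self : eps hp * eps hp = 1 := by
  ext x
  rw [Equiv.Perm.mul_apply, Equiv.Perm.one_apply]
  cases x with
  | inl i =>
    by_cases h : i = Fin.last q
    · subst h; rw [eps_inl_last hp, eps_inl_last hp]
    · rw [eps_inl hp h, eps_inr hp rfl]
      intro hc
      apply h
      have h4 : Fin.last q + 1 = 0 := Fin.last_add_one q
      calc i = i + (Fin.last q + 1) := by rw [h4, add_zero]
        _ = (i + 1) + Fin.last q := by abel
        _ = Fin.last q := by rw [hc, zero_add]
  | inr i =>
    by_cases h : i = 0
    · subst h; rw [eps_inr_zero hp, eps_inr_zero hp]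
    · have hiv : i.val ≠ 0 := fun hc => h (by ext; simp [hc])
      have hj : (⟨i.val - 1, by omega⟩ : Fin (q+1)) + 1 = i := by
        rw [fin_add_one_mk (by omega)]
        ext; simp; omega
      rw [eps_inr hp hj h]
      have hjl : (⟨i.val - 1, by omega⟩ : Fin (q+1)) ≠ Fin.last q := by
        intro hc
        have := congrArg Fin.val hc
        simp only [Fin.val_last] at this
        omega
      rw [eps_inl hp hjl, hj]

lemma eps_support :
    (eps hp).support = Finset.univ \ {Sum.inl (Fin.last q), Sum.inr (0 : Fin (q+1))} := by
  ext x
  simp only [Equiv.Perm.mem_support, Finset.mem_sdiff, Finset.mem_univ, true_and,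
    Finset.mem_insert, Finset.mem_singleton]
  cases x with
  | inl i =>
    by_cases h : i = Fin.last q
    · subst h
      rw [eps_inl_last hp]
      simp
    · rw [eps_inl hp h]
      simp only [ne_eq, reduceCtorEq, not_false_eq_true, true_iff]
      push_neg
      exact ⟨fun hc => h (Sum.inl_injective hc), trivial⟩
  | inr i =>
    by_cases h : i = 0
    · subst h
      rw [eps_inr_zero hp]
      simp
    · have hiv : i.val ≠ 0 := fun hc => h (by ext; simp [hc])
      have hj : (⟨i.val - 1, by omega⟩ : Fin (q+1)) + 1 = i := by
        rw [fin_add_one_mk (by omega)]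
        ext; simp; omega
      rw [eps_inr hp hj h]
      simp only [ne_eq, reduceCtorEq, not_false_eq_true, true_iff]
      push_neg
      exact ⟨trivial, fun hc => h (Sum.inr_injective hc)⟩

end Eps

lemma card_ground : Fintype.card (Fin (q+1) ⊕ Fin (q+1)) = 2*q + 2 := by
  simp [Fintype.card_sum]
  omega

lemma permLength_delta : permLength (deltaPerm (q+1)) = q + 1 := by
  have h := permLength_sq_eq_one (deltaPerm_mul_self (q+1))
  rw [support_deltaPerm, Finset.card_univ, card_ground] at h
  omega

lemma permLength_gt (hp : 0 < q + 1) : permLength (gammaTilde (q+1) hp) = 2*q + 1 := by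
  have h := permLength_isCycle (gt_isCycle hp)
  rw [gt_support hp, Finset.card_univ, card_ground] at h
  omega

lemma permLength_gt_inv (hp : 0 < q + 1) :
    permLength ((gammaTilde (q+1) hp)⁻¹) = 2*q + 1 := by
  rw [permLength_inv, permLength_gt hp]

lemma permLength_eps (hp : 0 < q + 1) :
    permLength (deltaPerm (q+1) * (gammaTilde (q+1) hp)⁻¹) = q := by
  have h := permLength_sq_eq_one (eps_mul_self hp)
  rw [eps_support hp] at h
  have hpair : ({Sum.inl (Fin.last q), Sum.inr (0 : Fin (q+1))} :
      Finset (Fin (q+1) ⊕ Fin (q+1))).card = 2 := by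
    rw [Finset.card_insert_of_notMem (by simp), Finset.card_singleton]
  rw [Finset.card_sdiff_of_subset (Finset.subset_univ _), Finset.card_univ, card_ground, hpair] at h
  have : permLength (eps hp) = permLength (deltaPerm (q+1) * (gammaTilde (q+1) hp)⁻¹) := rfl
  omega

end Concrete

end PLAux

namespace PLAux

variable {q : ℕ}

set_option maxHeartbeats 1000000 in
lemma key_ineqs (hp : 0 < q + 1) (β : Equiv.Perm (Fin (q+1) ⊕ Fin (q+1))) :
    (q + 1 ≤ permLength β + permLength (β * deltaPerm (q+1))) ∧
    (2*q + 1 ≤ permLength β + permLength (β * (gammaTilde (q+1) hp)⁻¹)) ∧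
    (q ≤ permLength (β * deltaPerm (q+1)) + permLength (β * (gammaTilde (q+1) hp)⁻¹)) ∧
    (permLength (β * (gammaTilde (q+1) hp)⁻¹) ≤ permLength (β * deltaPerm (q+1)) + q) := by
  refine ⟨?_, ?_, ?_, ?_⟩
  · have e1 : deltaPerm (q+1) = β⁻¹ * (β * deltaPerm (q+1)) := by group
    have h := permLength_mul_le β⁻¹ (β * deltaPerm (q+1))
    rw [← e1, permLength_inv, permLength_delta] at h
    exact h
  · have e2 : (gammaTilde (q+1) hp)⁻¹ = β⁻¹ * (β * (gammaTilde (q+1) hp)⁻¹) := by group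
    have h := permLength_mul_le β⁻¹ (β * (gammaTilde (q+1) hp)⁻¹)
    rw [← e2, permLength_gt_inv hp, permLength_inv] at h
    exact h
  · have e3 : (β * deltaPerm (q+1))⁻¹ * (β * (gammaTilde (q+1) hp)⁻¹) =
        (deltaPerm (q+1))⁻¹ * (gammaTilde (q+1) hp)⁻¹ := by group
    rw [deltaPerm_inv] at e3
    have h := permLength_mul_le (β * deltaPerm (q+1))⁻¹ (β * (gammaTilde (q+1) hp)⁻¹)
    rw [e3, permLength_eps hp, permLength_inv] at h
    exact h
  · have e4 : β * (gammaTilde (q+1) hp)⁻¹ =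
        (β * deltaPerm (q+1)) * (deltaPerm (q+1) * (gammaTilde (q+1) hp)⁻¹) := by
      conv_rhs => rw [← mul_assoc, mul_assoc β, deltaPerm_mul_self, mul_one]
    have h := permLength_mul_le (β * deltaPerm (q+1))
      (deltaPerm (q+1) * (gammaTilde (q+1) hp)⁻¹)
    rw [← e4, permLength_eps hp] at h
    exact h

set_option maxHeartbeats 1000000 in
lemma case_zero (hp : 0 < q + 1) (β : Equiv.Perm (Fin (q+1) ⊕ Fin (q+1))) :
    (-1 : ℝ) ≤ S2 (q+1) hp 0 β ∧
      (S2 (q+1) hp 0 β = -1 ↔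
        permLength (β * deltaPerm (q+1)) + permLength (β * (gammaTilde (q+1) hp)⁻¹) =
          (q+1) - 1) := by
  obtain ⟨h1, h2, h3, h4⟩ := key_ineqs hp β
  simp only [S2]
  obtain ⟨A, hA⟩ : ∃ n, permLength β = n := ⟨_, rfl⟩
  obtain ⟨G, hG⟩ : ∃ n, permLength (β * (gammaTilde (q+1) hp)⁻¹) = n := ⟨_, rfl⟩
  obtain ⟨D, hD⟩ : ∃ n, permLength (β * deltaPerm (q+1)) = n := ⟨_, rfl⟩
  simp only [hA, hG, hD] at h1 h2 h3 h4 ⊢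
  have c3 : (q : ℝ) ≤ (D : ℝ) + (G : ℝ) := by exact_mod_cast h3
  constructor
  · push_cast
    linarith
  · constructor
    · intro heq
      push_cast at heq
      have hr : (D : ℝ) + (G : ℝ) = q := by linarith
      have hn : D + G = q := by exact_mod_cast hr
      omega
    · intro hnat
      have hn : D + G = q := by omega
      have hr : (D : ℝ) + (G : ℝ) = q := by exact_mod_cast hn
      push_cast
      linarith

set_option maxHeartbeats 1000000 in
lemma case_middle (hp : 0 < q + 1) {d : ℝ} (hd1 : 0 < d) (hd2 : d < 2)
    (β : Equiv.Perm (Fin (q+1) ⊕ Fin (q+1))) :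
    d * (q+1 : ℕ) - 1 ≤ S2 (q+1) hp d β ∧
      (S2 (q+1) hp d β = d * (q+1 : ℕ) - 1 ↔ β = deltaPerm (q+1)) := by
  obtain ⟨h1, h2, h3, h4⟩ := key_ineqs hp β
  simp only [S2]
  obtain ⟨A, hA⟩ : ∃ n, permLength β = n := ⟨_, rfl⟩
  obtain ⟨G, hG⟩ : ∃ n, permLength (β * (gammaTilde (q+1) hp)⁻¹) = n := ⟨_, rfl⟩
  obtain ⟨D, hD⟩ : ∃ n, permLength (β * deltaPerm (q+1)) = n := ⟨_, rfl⟩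
  simp only [hA, hG, hD] at h1 h2 h3 h4 ⊢
  have c1 : ((q : ℝ) + 1) ≤ (A : ℝ) + (D : ℝ) := by exact_mod_cast h1
  have c2 : (2*(q:ℝ) + 1) ≤ (A : ℝ) + (G : ℝ) := by exact_mod_cast h2
  have c3 : (q : ℝ) ≤ (D : ℝ) + (G : ℝ) := by exact_mod_cast h3
  have hu : (0:ℝ) ≤ (A:ℝ) + D - ((q:ℝ)+1) := by linarith
  have hv : (0:ℝ) ≤ (A:ℝ) + G - (2*(q:ℝ)+1) := by linarith
  have hw : (0:ℝ) ≤ (D:ℝ) + G - (q:ℝ) := by linarith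
  have pu := mul_nonneg hd1.le hu
  have pv := mul_nonneg hd1.le hv
  have pw := mul_nonneg (by linarith : (0:ℝ) ≤ 2 - d) hw
  constructor
  · push_cast
    nlinarith [pu, pv, pw]
  · constructor
    · intro heq
      push_cast at heq
      have hiden : d * ((A:ℝ) + D - ((q:ℝ)+1)) + d * ((A:ℝ) + G - (2*(q:ℝ)+1)) +
          (2 - d) * ((D:ℝ) + G - (q:ℝ)) = 0 := by linear_combination 2 * heq
      have hu0 : d * ((A:ℝ) + D - ((q:ℝ)+1)) = 0 := by linarith
      have hv0 : d * ((A:ℝ) + G - (2*(q:ℝ)+1)) = 0 := by linarith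
      have hw0 : (2 - d) * ((D:ℝ) + G - (q:ℝ)) = 0 := by linarith
      have hu1 : (A:ℝ) + D = (q:ℝ)+1 := by
        rcases mul_eq_zero.mp hu0 with h | h
        · exact absurd h (by linarith)
        · linarith
      have hv1 : (A:ℝ) + G = 2*(q:ℝ)+1 := by
        rcases mul_eq_zero.mp hv0 with h | h
        · exact absurd h (by linarith)
        · linarith
      have hw1 : (D:ℝ) + G = (q:ℝ) := by
        rcases mul_eq_zero.mp hw0 with h | h
        · exact absurd h (by linarith)
        · linarith
      have n1 : A + D = q + 1 := by exact_mod_cast hu1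
      have n2 : A + G = 2*q + 1 := by exact_mod_cast hv1
      have n3 : D + G = q := by exact_mod_cast hw1
      have hD0 : D = 0 := by omega
      have hone : β * deltaPerm (q+1) = 1 := permLength_eq_zero_iff.mp (hD.trans hD0)
      have hβ : β = (deltaPerm (q+1))⁻¹ := by
        rw [← mul_eq_one_iff_eq_inv]
        exact hone
      rw [deltaPerm_inv] at hβ
      exact hβ
    · rintro rfl
      have eA : A = q + 1 := by rw [← hA, permLength_delta]
      have eG : G = q := by rw [← hG, permLength_eps hp]
      have eD : D = 0 := by rw [← hD, deltaPerm_mul_self, permLength_one]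
      rw [eA, eG, eD]
      push_cast
      ring

set_option maxHeartbeats 1000000 in
lemma case_two (hp : 0 < q + 1) (β : Equiv.Perm (Fin (q+1) ⊕ Fin (q+1))) :
    2 * ((q+1 : ℕ) : ℝ) - 1 ≤ S2 (q+1) hp 2 β ∧
      (S2 (q+1) hp 2 β = 2 * ((q+1 : ℕ) : ℝ) - 1 ↔
        permLength β + permLength (β * deltaPerm (q+1)) = q+1) := by
  obtain ⟨h1, h2, h3, h4⟩ := key_ineqs hp β
  simp only [S2]
  obtain ⟨A, hA⟩ : ∃ n, permLength β = n := ⟨_, rfl⟩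
  obtain ⟨G, hG⟩ : ∃ n, permLength (β * (gammaTilde (q+1) hp)⁻¹) = n := ⟨_, rfl⟩
  obtain ⟨D, hD⟩ : ∃ n, permLength (β * deltaPerm (q+1)) = n := ⟨_, rfl⟩
  simp only [hA, hG, hD] at h1 h2 h3 h4 ⊢
  have c1 : ((q : ℝ) + 1) ≤ (A : ℝ) + (D : ℝ) := by exact_mod_cast h1
  have c2 : (2*(q:ℝ) + 1) ≤ (A : ℝ) + (G : ℝ) := by exact_mod_cast h2
  constructor
  · push_cast
    linarith
  · constructor
    · intro heq
      push_cast at heq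
      have e1 : (A:ℝ) + D ≤ (q:ℝ)+1 := by linarith
      have n1 : A + D = q + 1 := by exact_mod_cast le_antisymm e1 c1
      omega
    · intro hnat
      have n1 : A + D = q + 1 := by omega
      have n2 : A + G = 2*q + 1 := by omega
      have r1 : (A:ℝ) + D = (q:ℝ)+1 := by exact_mod_cast n1
      have r2 : (A:ℝ) + G = 2*(q:ℝ)+1 := by exact_mod_cast n2
      push_cast
      linarith

set_option maxHeartbeats 1000000 in
lemma case_large (hp : 0 < q + 1) {d : ℝ} (hd2 : 2 < d)
    (β : Equiv.Perm (Fin (q+1) ⊕ Fin (q+1))) :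
    2 * ((q+1 : ℕ) : ℝ) - 1 ≤ S2 (q+1) hp d β ∧
      (S2 (q+1) hp d β = 2 * ((q+1 : ℕ) : ℝ) - 1 ↔ β = 1) := by
  obtain ⟨h1, h2, h3, h4⟩ := key_ineqs hp β
  simp only [S2]
  obtain ⟨A, hA⟩ : ∃ n, permLength β = n := ⟨_, rfl⟩
  obtain ⟨G, hG⟩ : ∃ n, permLength (β * (gammaTilde (q+1) hp)⁻¹) = n := ⟨_, rfl⟩
  obtain ⟨D, hD⟩ : ∃ n, permLength (β * deltaPerm (q+1)) = n := ⟨_, rfl⟩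
  simp only [hA, hG, hD] at h1 h2 h3 h4 ⊢
  have c1 : ((q : ℝ) + 1) ≤ (A : ℝ) + (D : ℝ) := by exact_mod_cast h1
  have c2 : (2*(q:ℝ) + 1) ≤ (A : ℝ) + (G : ℝ) := by exact_mod_cast h2
  have hAnn : (0:ℝ) ≤ (A : ℝ) := Nat.cast_nonneg A
  have hprod : (0:ℝ) ≤ (d - 2) * (A : ℝ) := mul_nonneg (by linarith) hAnn
  constructor
  · push_cast
    nlinarith [hprod]
  · constructor
    · intro heq
      push_cast at heq
      have hA2 : (d - 2) * (A : ℝ) ≤ 0 := by nlinarith [hprod]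
      have hA0 : (A : ℝ) = 0 := by
        rcases mul_eq_zero.mp (le_antisymm hA2 hprod) with h | h
        · exact absurd h (by linarith)
        · exact h
      have hz : A = 0 := by exact_mod_cast hA0
      exact permLength_eq_zero_iff.mp (hA.trans hz)
    · rintro rfl
      have eA : A = 0 := by rw [← hA, permLength_one]
      have eG : G = 2*q+1 := by rw [← hG, one_mul, permLength_gt_inv hp]
      have eD : D = q+1 := by rw [← hD, one_mul, permLength_delta]
      rw [eA, eG, eD]
      push_cast
      ring

end PLAux

open PLAux in
/-- **Minimization of `S₂` (Table 1).** For `p ≥ 1` and `d ≥ 0`: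
if `d = 0` then `S₂ ≥ −1` with equality iff `β` lies on the geodesic from `δ` to `γ̃`;
if `0 < d < 2` then `S₂ ≥ dp − 1` with equality iff `β = δ`;
if `d = 2` then `S₂ ≥ 2p − 1` with equality iff `β` lies on the geodesic from `id` to `δ`;
if `d > 2` then `S₂ ≥ 2p − 1` with equality iff `β = id`. -/
theorem S2_minimization (p : ℕ) (hp : 0 < p) (d : ℝ) (hd : 0 ≤ d) :
    (d = 0 → ∀ β : Equiv.Perm (Fin p ⊕ Fin p),
      (-1 : ℝ) ≤ S2 p hp d β ∧
        (S2 p hp d β = -1 ↔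
          permLength (β * deltaPerm p) + permLength (β * (gammaTilde p hp)⁻¹) = p - 1)) ∧
    ((0 < d ∧ d < 2) → ∀ β : Equiv.Perm (Fin p ⊕ Fin p),
      d * p - 1 ≤ S2 p hp d β ∧ (S2 p hp d β = d * p - 1 ↔ β = deltaPerm p)) ∧
    (d = 2 → ∀ β : Equiv.Perm (Fin p ⊕ Fin p),
      2 * (p : ℝ) - 1 ≤ S2 p hp d β ∧
        (S2 p hp d β = 2 * (p : ℝ) - 1 ↔
          permLength β + permLength (β * deltaPerm p) = p)) ∧
    (2 < d → ∀ β : Equiv.Perm (Fin p ⊕ Fin p),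
      2 * (p : ℝ) - 1 ≤ S2 p hp d β ∧ (S2 p hp d β = 2 * (p : ℝ) - 1 ↔ β = 1)) := by
  obtain ⟨q, rfl⟩ : ∃ q, p = q + 1 := ⟨p - 1, by omega⟩
  refine ⟨?_, ?_, ?_, ?_⟩
  · rintro rfl β
    exact case_zero hp β
  · rintro ⟨hd1, hd2⟩ β
    exact case_middle hp hd1 hd2 β
  · rintro rfl β
    exact case_two hp β
  · intro hd2 β
    exact case_large hp hd2 β
end
end

section
/- Let p ≥ 2 be an integer and let d ≥ 0 be a real parameter. For β ∈ S_{2p}, set S₁(β) = d·|β| + |β·γ^{-1}| + |β·δ| − p. Then: (i) if d = 0, S₁(β) ≥ 0, with equality if and only if β lies on the geodesic from δ to γ, i.e. |β·δ| + |β·γ^{-1}| = |δ·γ^{-1}|; (ii) if 0 < d < 1 and p = 2, S₁(β) ≥ 2d, with equality if and only if β ∈ {δ, γ}; (iii) if d = 1 and p = 2, S₁(β) ≥ 2, with equality if and only if β ∈ {id, δ, γ}; (iv) if 0 < d ≤ 1 and p ≥ 3, S₁(β) ≥ dp, with equality if and only if β = δ; (v) if 1 < d < 2 and p < 2/(2−d),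 S₁(β) ≥ 2p−2, with equality if and only if β = id; (vi) if 1 < d < 2 and p = 2/(2−d), S₁(β) ≥ 2p−2 = dp, with equality if and only if β ∈ {id, δ}; (vii) if 1 < d < 2 and p > 2/(2−d), S₁(β) ≥ dp, with equality if and only if β = δ; (viii) if d ≥ 2, S₁(β) ≥ 2p−2, with equality if and only if β = id. -/
open Equiv Filter

noncomputable section

/-- the quantity `S₁(β) = d|β| + |βγ⁻¹| + |βδ| − p` -/
def S1 (p : ℕ) (d : ℝ) (β : Equiv.Perm (Fin p ⊕ Fin p)) : ℝ :=
  d * permLength β + (permLength (β * (gammaPerm p)⁻¹) : ℝ) +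
    (permLength (β * deltaPerm p) : ℝ) - p

namespace S1Aux

open Equiv.Perm Module Submodule

set_option linter.unusedSectionVars false
variable {α : Type*} [Fintype α] [DecidableEq α]

/-- the space of functions invariant under σ -/
def Vfix (σ : Equiv.Perm α) : Submodule ℚ (α → ℚ) where
  carrier := {f | ∀ x, f (σ x) = f x}
  add_mem' := by intro f g hf hg x; simp [hf x, hg x]
  zero_mem' := by intro x; simp
  smul_mem' := by intro c f hf x; simp [hf x]

lemma mem_Vfix {σ : Equiv.Perm α} {f : α → ℚ} : f ∈ Vfix σ ↔ ∀ x, f (σ x) = f x := Iff.rfl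

lemma Vfix_inv (σ : Equiv.Perm α) : Vfix σ⁻¹ = Vfix σ := by
  ext f
  constructor
  · intro hf x
    have := hf (σ x)
    simpa using this.symm
  · intro hf x
    have := hf (σ⁻¹ x)
    simpa using this.symm

lemma Vfix_one : Vfix (1 : Equiv.Perm α) = ⊤ := by
  ext f; simp [mem_Vfix]

lemma inf_Vfix_le (σ τ : Equiv.Perm α) : Vfix σ ⊓ Vfix τ ≤ Vfix (σ * τ) := by
  intro f hf x
  have h1 := hf.1 (τ x)
  have h2 := hf.2 x
  simp only [Equiv.Perm.mul_apply]
  rw [h1, h2]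

lemma card_le_sum_cycleType (σ : Equiv.Perm α) :
    Multiset.card σ.cycleType ≤ σ.cycleType.sum := by
  have := Multiset.card_nsmul_le_sum (s := σ.cycleType) (a := 1)
    (fun x hx => le_trans (by norm_num) (Equiv.Perm.two_le_of_mem_cycleType hx))
  simpa using this

lemma permLength_one : permLength (1 : Equiv.Perm α) = 0 := by
  simp [permLength, Equiv.Perm.cycleType_one]

lemma permLength_inv (σ : Equiv.Perm α) : permLength σ⁻¹ = permLength σ := by
  simp [permLength, Equiv.Perm.cycleType_inv]

lemma zpow_invariant {σ : Equiv.Perm α} {f : α → ℚ} (hf : f ∈ Vfix σ) :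
    ∀ (k : ℤ) (x : α), f ((σ ^ k) x) = f x := by
  have hn : ∀ (n : ℕ) (x : α), f ((σ ^ n) x) = f x := by
    intro n
    induction n with
    | zero => simp
    | succ m ih =>
      intro x
      have : σ ^ (m + 1) = σ ^ m * σ := by rw [pow_succ]
      rw [this]
      simp only [Equiv.Perm.mul_apply]
      rw [ih (σ x)]
      · exact hf x
  intro k x
  induction k using Int.rec with
  | ofNat n => simpa using hn n x
  | negSucc n =>
    have : (σ ^ (Int.negSucc n)) x = (σ ^ (n + 1) : Equiv.Perm α)⁻¹ x := by
      rw [zpow_negSucc]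
    rw [this]
    have := hn (n + 1) ((σ ^ (n + 1) : Equiv.Perm α)⁻¹ x)
    simp at this
    exact this.symm

/-- main rank identity -/
theorem finrank_Vfix_add_permLength (σ : Equiv.Perm α) :
    finrank ℚ (Vfix σ) + permLength σ = Fintype.card α := by
  induction σ using Equiv.Perm.cycle_induction_on with
  | base_one =>
    rw [Vfix_one, permLength_one, finrank_top]
    simp [Module.finrank_fintype_fun_eq_card]
  | base_cycles σ hσ =>
    obtain ⟨x₀, hx₀, hall⟩ := hσ
    have hx₀s : x₀ ∈ σ.support := Equiv.Perm.mem_support.2 hx₀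
    -- the linear map
    let L : Vfix σ →ₗ[ℚ] ({x // x ∉ σ.support} → ℚ) × ℚ :=
      { toFun := fun f => (fun y => f.1 y.1, f.1 x₀)
        map_add' := fun f g => rfl
        map_smul' := fun c f => rfl }
    have hinj : Function.Injective L := by
      intro f g hfg
      have h1 : ∀ y : {x // x ∉ σ.support}, f.1 y.1 = g.1 y.1 :=
        fun y => congrFun (congrArg Prod.fst hfg) y
      have h2 : f.1 x₀ = g.1 x₀ := congrArg Prod.snd hfg
      ext x
      by_cases hx : x ∈ σ.support
      · have hsc : σ.SameCycle x₀ x := hall (Equiv.Perm.mem_support.1 hx)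
        obtain ⟨k, hk⟩ := hsc
        rw [← hk, zpow_invariant f.2 k x₀, zpow_invariant g.2 k x₀, h2]
      · exact h1 ⟨x, hx⟩
    have hsurj : Function.Surjective L := by
      rintro ⟨g, c⟩
      refine ⟨⟨fun x => if h : x ∈ σ.support then c else g ⟨x, h⟩, ?_⟩, ?_⟩
      · intro x
        by_cases hx : x ∈ σ.support
        · simp only [dif_pos hx, dif_pos (Equiv.Perm.apply_mem_support.2 hx)]
        · rw [Equiv.Perm.notMem_support.1 hx]
      · refine Prod.ext ?_ ?_
        · funext y
          exact dif_neg y.2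
        · exact dif_pos hx₀s
    have hrank : finrank ℚ (Vfix σ) = (Fintype.card α - σ.support.card) + 1 := by
      have := LinearEquiv.finrank_eq (LinearEquiv.ofBijective L ⟨hinj, hsurj⟩)
      rw [this]
      rw [Module.finrank_prod, Module.finrank_fintype_fun_eq_card, Module.finrank_self]
      congr 1
      rw [Fintype.card_subtype_compl]
      congr 1
      exact Fintype.card_coe σ.support
    have hlen : permLength σ = σ.support.card - 1 := by
      have := Equiv.Perm.IsCycle.cycleType ⟨x₀, hx₀, hall⟩
      simp [permLength, this]
    have h2le : 2 ≤ σ.support.card := Equiv.Perm.IsCycle.two_le_card_support ⟨x₀, hx₀, hall⟩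
    have hle : σ.support.card ≤ Fintype.card α := by
      simpa using Finset.card_le_card (Finset.subset_univ σ.support)
    omega
  | induction_disjoint σ τ hd hc hσ hτ =>
    have hVeq : Vfix (σ * τ) = Vfix σ ⊓ Vfix τ := by
      refine le_antisymm ?_ (inf_Vfix_le σ τ)
      intro f hf
      have hf' : ∀ x, f (σ (τ x)) = f x := hf
      constructor
      · intro x
        rcases hd x with h | h
        · rw [h]
        · have := hf' x
          rwa [h] at this
      · intro x
        by_cases h : τ x = x
        · rw [h]
        · have hst : σ (τ x) = τ x := by
            rcases hd (τ x) with h' | h'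
            · exact h'
            · exact absurd (τ.injective h') h
          have := hf' x
          rwa [hst] at this
    have hVsup : Vfix σ ⊔ Vfix τ = ⊤ := by
      rw [eq_top_iff]
      intro f _
      have hdsupp : ∀ x, x ∈ τ.support → x ∉ σ.support := by
        intro x hx
        rcases hd x with h | h
        · exact Equiv.Perm.notMem_support.2 h
        · exact absurd h (Equiv.Perm.mem_support.1 hx)
      refine Submodule.mem_sup.2
        ⟨fun x => if x ∈ σ.support then 0 else f x, ?_,
         fun x => if x ∈ σ.support then f x else 0, ?_, ?_⟩
      · intro x
        by_cases hx : x ∈ σ.support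
        · simp only [if_pos hx, if_pos (Equiv.Perm.apply_mem_support.2 hx)]
        · simp only [if_neg hx, if_neg (fun h => hx (Equiv.Perm.apply_mem_support.1 h)),
            Equiv.Perm.notMem_support.1 hx]
      · intro x
        by_cases h : τ x = x
        · rw [h]
        · have hx : x ∈ τ.support := Equiv.Perm.mem_support.2 h
          have hx2 : τ x ∈ τ.support := Equiv.Perm.apply_mem_support.2 hx
          simp only [if_neg (hdsupp x hx), if_neg (hdsupp (τ x) hx2)]
      · funext x
        by_cases hx : x ∈ σ.support
        · simp [Equiv.Perm.mem_support.1 hx]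
        · simp [Equiv.Perm.notMem_support.1 hx]
    have hfr := Submodule.finrank_sup_add_finrank_inf_eq (Vfix σ) (Vfix τ)
    rw [hVsup, ← hVeq] at hfr
    have htop : finrank ℚ (⊤ : Submodule ℚ (α → ℚ)) = Fintype.card α := by
      rw [finrank_top, Module.finrank_fintype_fun_eq_card]
    rw [htop] at hfr
    have hlen : permLength (σ * τ) = permLength σ + permLength τ := by
      have hct := Equiv.Perm.Disjoint.cycleType_mul hd
      have c1 := card_le_sum_cycleType σ
      have c2 := card_le_sum_cycleType τ
      simp only [permLength, hct, Multiset.sum_add, Multiset.card_add]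
      omega
    omega


lemma finrank_Vfix_le (σ : Equiv.Perm α) : finrank ℚ (Vfix σ) ≤ Fintype.card α := by
  have := Submodule.finrank_le (Vfix σ)
  rwa [Module.finrank_fintype_fun_eq_card] at this

/-- triangle inequality -/
theorem permLength_mul_le (σ τ : Equiv.Perm α) :
    permLength (σ * τ) ≤ permLength σ + permLength τ := by
  have h1 := finrank_Vfix_add_permLength σ
  have h2 := finrank_Vfix_add_permLength τ
  have h3 := finrank_Vfix_add_permLength (σ * τ)
  have hsupinf := Submodule.finrank_sup_add_finrank_inf_eq (Vfix σ) (Vfix τ)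
  have hsup : finrank ℚ ↥(Vfix σ ⊔ Vfix τ) ≤ Fintype.card α := by
    have := Submodule.finrank_le (Vfix σ ⊔ Vfix τ)
    rwa [Module.finrank_fintype_fun_eq_card] at this
  have hinf : finrank ℚ ↥(Vfix σ ⊓ Vfix τ) ≤ finrank ℚ ↥(Vfix (σ * τ)) :=
    Submodule.finrank_mono (inf_Vfix_le σ τ)
  omega

/-- equality in the triangle inequality forces inclusion of fixed spaces -/
theorem Vfix_le_of_triangle_eq {σ τ : Equiv.Perm α}
    (h : permLength (σ * τ) = permLength σ + permLength τ) :
    Vfix (σ * τ) ≤ Vfix σ ⊓ Vfix τ := by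
  have h1 := finrank_Vfix_add_permLength σ
  have h2 := finrank_Vfix_add_permLength τ
  have h3 := finrank_Vfix_add_permLength (σ * τ)
  have hsupinf := Submodule.finrank_sup_add_finrank_inf_eq (Vfix σ) (Vfix τ)
  have hsup : finrank ℚ ↥(Vfix σ ⊔ Vfix τ) ≤ Fintype.card α := by
    have := Submodule.finrank_le (Vfix σ ⊔ Vfix τ)
    rwa [Module.finrank_fintype_fun_eq_card] at this
  have hle : finrank ℚ ↥(Vfix (σ * τ)) ≤ finrank ℚ ↥(Vfix σ ⊓ Vfix τ) := by omega
  exact le_of_eq (Submodule.eq_of_le_of_finrank_le (inf_Vfix_le σ τ) hle).symm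

theorem sameCycle_of_Vfix_le {ρ σ : Equiv.Perm α} (h : Vfix ρ ≤ Vfix σ) (x : α) :
    ρ.SameCycle x (σ x) := by
  classical
  set f : α → ℚ := fun y => if ρ.SameCycle x y then 1 else 0 with hf
  have hmem : f ∈ Vfix ρ := by
    intro y
    simp only [hf]
    by_cases hy : ρ.SameCycle x y
    · rw [if_pos hy, if_pos (by rwa [Equiv.Perm.sameCycle_apply_right])]
    · rw [if_neg hy, if_neg (by rwa [Equiv.Perm.sameCycle_apply_right])]
  have := h hmem x
  simp only [hf] at this
  rw [if_pos (Equiv.Perm.SameCycle.refl ρ x)] at this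
  by_contra hc
  rw [if_neg hc] at this
  norm_num at this

theorem eq_one_of_permLength_eq_zero {σ : Equiv.Perm α} (h : permLength σ = 0) : σ = 1 := by
  classical
  have h1 := finrank_Vfix_add_permLength σ
  have htop : Vfix σ = ⊤ := by
    apply Submodule.eq_top_of_finrank_eq
    rw [Module.finrank_fintype_fun_eq_card]
    omega
  ext x
  have hmem : (fun y => if y = x then (1:ℚ) else 0) ∈ Vfix σ := by rw [htop]; trivial
  have := hmem x
  simp only [if_pos rfl] at this
  by_contra hc
  rw [if_neg (by simpa using hc)] at this
  norm_num at this

lemma neg_one_pow_permLength (σ : Equiv.Perm α) :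
    ((-1 : ℤ) ^ permLength σ) = ((Equiv.Perm.sign σ : ℤˣ) : ℤ) := by
  have hs := Equiv.Perm.sign_of_cycleType σ
  have hc := card_le_sum_cycleType σ
  have harith : σ.cycleType.sum + Multiset.card σ.cycleType
      = permLength σ + 2 * Multiset.card σ.cycleType := by
    unfold permLength; omega
  rw [hs, harith]
  push_cast
  rw [pow_add, pow_mul]
  norm_num

theorem permLength_parity (σ τ : Equiv.Perm α) :
    Even (permLength σ + permLength τ + permLength (σ * τ)) := by
  have h1 := neg_one_pow_permLength σ
  have h2 := neg_one_pow_permLength τ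
  have h3 := neg_one_pow_permLength (σ * τ)
  have hs : Equiv.Perm.sign (σ * τ) = Equiv.Perm.sign σ * Equiv.Perm.sign τ := by
    simp [map_mul]
  have key : ((-1 : ℤ)) ^ (permLength σ + permLength τ + permLength (σ * τ)) = 1 := by
    rw [pow_add, pow_add, h1, h2, h3, hs]
    push_cast
    have a : ((Equiv.Perm.sign σ : ℤˣ) : ℤ) * ((Equiv.Perm.sign σ : ℤˣ) : ℤ) = 1 := by
      rw [← Units.val_mul, Int.units_mul_self]; rfl
    have b : ((Equiv.Perm.sign τ : ℤˣ) : ℤ) * ((Equiv.Perm.sign τ : ℤˣ) : ℤ) = 1 := by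
      rw [← Units.val_mul, Int.units_mul_self]; rfl
    linear_combination (((Equiv.Perm.sign τ : ℤˣ) : ℤ) * ((Equiv.Perm.sign τ : ℤˣ) : ℤ)) * a + b
  rwa [neg_one_pow_eq_one_iff_even (by norm_num : (-1:ℤ) ≠ 1)] at key

/-- a fixed-point-free involution on a set of size `2p` has length `p` -/
theorem permLength_involution [Nonempty α] {σ : Equiv.Perm α}
    (h2 : σ * σ = 1) (hfpf : ∀ x, σ x ≠ x) :
    2 * permLength σ = Fintype.card α := by
  have hsupp : σ.support = Finset.univ :=
    Finset.eq_univ_iff_forall.2 fun x => Equiv.Perm.mem_support.2 (hfpf x)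
  have hsum : σ.cycleType.sum = Fintype.card α := by
    rw [Equiv.Perm.sum_cycleType, hsupp, Finset.card_univ]
  have hne : σ ≠ 1 := by
    intro h
    exact hfpf (Classical.arbitrary α) (by rw [h]; rfl)
  have horder : orderOf σ = 2 := by
    apply orderOf_eq_prime
    · rw [pow_two]; exact h2
    · exact hne
  have hall2 : ∀ n ∈ σ.cycleType, n = 2 := by
    intro n hn
    have hdvd : n ∣ 2 := by
      rw [← horder, ← Equiv.Perm.lcm_cycleType]
      exact Multiset.dvd_lcm hn
    have := Equiv.Perm.two_le_of_mem_cycleType hn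
    exact Nat.le_antisymm (Nat.le_of_dvd (by norm_num) hdvd) this
  have hrep : σ.cycleType = Multiset.replicate (Multiset.card σ.cycleType) 2 :=
    Multiset.eq_replicate_card.2 hall2
  have hsum2 : σ.cycleType.sum = 2 * Multiset.card σ.cycleType := by
    rw [hrep]
    simp [Multiset.sum_replicate, mul_comm]
  unfold permLength
  omega




section general
variable {α : Type*} [Fintype α] [DecidableEq α]

lemma permLength_mul_disjoint {σ τ : Equiv.Perm α} (hd : Equiv.Perm.Disjoint σ τ) :
    permLength (σ * τ) = permLength σ + permLength τ := by
  have hct := Equiv.Perm.Disjoint.cycleType_mul hd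
  have c1 := card_le_sum_cycleType σ
  have c2 := card_le_sum_cycleType τ
  simp only [permLength, hct, Multiset.sum_add, Multiset.card_add]
  omega

lemma permLength_isCycle {σ : Equiv.Perm α} (h : σ.IsCycle) :
    permLength σ = σ.support.card - 1 := by
  simp [permLength, h.cycleType]

lemma sumCongr_zpow {α₁ α₂ : Type*} (k : ℤ) (a : Equiv.Perm α₁) (b : Equiv.Perm α₂) :
    (Equiv.sumCongr a b) ^ k = Equiv.sumCongr (a ^ k) (b ^ k) := by
  have h1 : Equiv.sumCongr a b = Equiv.Perm.sumCongrHom α₁ α₂ (a, b) := rfl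
  have h2 := map_zpow (Equiv.Perm.sumCongrHom α₁ α₂) (a, b) k
  rw [h1, ← h2]
  rfl

lemma sameCycle_sumCongr_isLeft {α₁ α₂ : Type*} {a : Equiv.Perm α₁} {b : Equiv.Perm α₂}
    {x y : α₁ ⊕ α₂} (h : Equiv.Perm.SameCycle (Equiv.sumCongr a b) x y) :
    x.isLeft = y.isLeft := by
  obtain ⟨k, hk⟩ := h
  rw [sumCongr_zpow] at hk
  subst hk
  cases x <;> simp

lemma sameCycle_involution {ρ : Equiv.Perm α} (h2 : ρ * ρ = 1) {x y : α}
    (h : Equiv.Perm.SameCycle ρ x y) : y = x ∨ y = ρ x := by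
  have hsq : ρ ^ (2 : ℤ) = 1 := by
    rw [zpow_two]; exact h2
  obtain ⟨k, hk⟩ := h
  rcases Int.even_or_odd k with ⟨m, hm⟩ | ⟨m, hm⟩
  · left
    rw [← hk, hm]
    have : ρ ^ (m + m) = 1 := by
      rw [← two_mul, zpow_mul, hsq, one_zpow]
    rw [this]; rfl
  · right
    rw [← hk, hm]
    have : ρ ^ (2 * m + 1) = ρ := by
      rw [zpow_add, zpow_mul, hsq, one_zpow, zpow_one, one_mul]
    rw [this]

lemma isCycle_sumCongr_left {α₁ α₂ : Type*} {a : Equiv.Perm α₁} (ha : a.IsCycle) :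
    Equiv.Perm.IsCycle (Equiv.sumCongr a (1 : Equiv.Perm α₂)) := by
  obtain ⟨x, hx, hall⟩ := ha
  refine ⟨Sum.inl x, by simpa using hx, ?_⟩
  intro y hy
  cases y with
  | inl z =>
    have hz : a z ≠ z := by simpa using hy
    obtain ⟨k, hk⟩ := hall hz
    exact ⟨k, by rw [sumCongr_zpow]; simp [hk]⟩
  | inr z => simp at hy

lemma isCycle_sumCongr_right {α₁ α₂ : Type*} {b : Equiv.Perm α₂} (hb : b.IsCycle) :
    Equiv.Perm.IsCycle (Equiv.sumCongr (1 : Equiv.Perm α₁) b) := by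
  obtain ⟨x, hx, hall⟩ := hb
  refine ⟨Sum.inr x, by simpa using hx, ?_⟩
  intro y hy
  cases y with
  | inl z => simp at hy
  | inr z =>
    have hz : b z ≠ z := by simpa using hy
    obtain ⟨k, hk⟩ := hall hz
    exact ⟨k, by rw [sumCongr_zpow]; simp [hk]⟩

lemma support_sumCongr_left {α₁ α₂ : Type*} [Fintype α₁] [DecidableEq α₁] [Fintype α₂]
    [DecidableEq α₂] (a : Equiv.Perm α₁) :
    (Equiv.Perm.support (Equiv.sumCongr a (1 : Equiv.Perm α₂))).card = a.support.card := by
  have h : Equiv.Perm.support (Equiv.sumCongr a (1 : Equiv.Perm α₂))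
      = a.support.map ⟨Sum.inl, Sum.inl_injective⟩ := by
    ext x
    cases x <;> simp [Equiv.Perm.mem_support]
  rw [h, Finset.card_map]

lemma support_sumCongr_right {α₁ α₂ : Type*} [Fintype α₁] [DecidableEq α₁] [Fintype α₂]
    [DecidableEq α₂] (b : Equiv.Perm α₂) :
    (Equiv.Perm.support (Equiv.sumCongr (1 : Equiv.Perm α₁) b)).card = b.support.card := by
  have h : Equiv.Perm.support (Equiv.sumCongr (1 : Equiv.Perm α₁) b)
      = b.support.map ⟨Sum.inr, Sum.inr_injective⟩ := by
    ext x
    cases x <;> simp [Equiv.Perm.mem_support]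
  rw [h, Finset.card_map]

end general

section specific
variable {p : ℕ}

lemma card_pt : Fintype.card (Fin p ⊕ Fin p) = 2 * p := by
  simp [Fintype.card_sum]; ring

lemma delta_inl (i : Fin p) : deltaPerm p (Sum.inl i) = Sum.inr i := rfl
lemma delta_inr (i : Fin p) : deltaPerm p (Sum.inr i) = Sum.inl i := rfl

lemma delta_sq : deltaPerm p * deltaPerm p = 1 := by
  ext x
  cases x <;> rfl

lemma delta_fpf : ∀ x, deltaPerm p x ≠ x := by
  intro x
  cases x <;> simp [deltaPerm]

lemma gamma_inl (i : Fin p) : gammaPerm p (Sum.inl i) = Sum.inl ((finRotate p)⁻¹ i) := rfl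
lemma gamma_inr (i : Fin p) : gammaPerm p (Sum.inr i) = Sum.inr (finRotate p i) := rfl

lemma gamma_inv : (gammaPerm p)⁻¹ = Equiv.sumCongr (finRotate p) (finRotate p)⁻¹ := by
  rw [gammaPerm, Equiv.Perm.sumCongr_inv]
  simp

lemma vDelta_eq_gamma : (deltaPerm p * (gammaPerm p)⁻¹) * deltaPerm p = gammaPerm p := by
  ext x
  cases x with
  | inl i =>
    simp [Equiv.Perm.mul_apply, gamma_inv, delta_inl, delta_inr, gamma_inl]
  | inr i =>
    simp [Equiv.Perm.mul_apply, gamma_inv, delta_inl, delta_inr, gamma_inr]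

lemma v_eq_w : deltaPerm p * (gammaPerm p)⁻¹ = gammaPerm p * deltaPerm p := by
  ext x
  cases x with
  | inl i => simp [Equiv.Perm.mul_apply, gamma_inv, delta_inl, delta_inr, gamma_inr]
  | inr i => simp [Equiv.Perm.mul_apply, gamma_inv, delta_inl, delta_inr, gamma_inl]

lemma v_sq : (deltaPerm p * (gammaPerm p)⁻¹) * (deltaPerm p * (gammaPerm p)⁻¹) = 1 := by
  ext x
  cases x with
  | inl i => simp [Equiv.Perm.mul_apply, gamma_inv, delta_inl, delta_inr, -finRotate_apply]
  | inr i => simp [Equiv.Perm.mul_apply, gamma_inv, delta_inl, delta_inr, -finRotate_symm_apply]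

lemma v_fpf : ∀ x, (deltaPerm p * (gammaPerm p)⁻¹) x ≠ x := by
  intro x
  cases x <;> simp [Equiv.Perm.mul_apply, gamma_inv, delta_inl, delta_inr]


lemma nonempty_pt (hp : 2 ≤ p) : Nonempty (Fin p ⊕ Fin p) :=
  ⟨Sum.inl ⟨0, by omega⟩⟩

lemma permLength_delta (hp : 2 ≤ p) : permLength (deltaPerm p) = p := by
  have := nonempty_pt hp
  have h := permLength_involution (delta_sq (p := p)) delta_fpf
  rw [card_pt] at h
  omega

lemma permLength_v (hp : 2 ≤ p) : permLength (deltaPerm p * (gammaPerm p)⁻¹) = p := by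
  have := nonempty_pt hp
  have h := permLength_involution (v_sq (p := p)) v_fpf
  rw [card_pt] at h
  omega

lemma permLength_gammaDelta (hp : 2 ≤ p) : permLength (gammaPerm p * deltaPerm p) = p := by
  rw [← v_eq_w]
  exact permLength_v hp

lemma permLength_gamma (hp : 2 ≤ p) : permLength (gammaPerm p) + 2 = 2 * p := by
  have hr : (finRotate p).IsCycle := isCycle_finRotate_of_le hp
  have hri : ((finRotate p)⁻¹).IsCycle := hr.inv
  have hsupp : (finRotate p).support = Finset.univ := support_finRotate_of_le hp
  have hdec : gammaPerm p
      = Equiv.sumCongr (finRotate p)⁻¹ (1 : Equiv.Perm (Fin p))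
        * Equiv.sumCongr (1 : Equiv.Perm (Fin p)) (finRotate p) := by
    rw [Equiv.Perm.sumCongr_mul, mul_one, one_mul]
    rfl
  have hd : Equiv.Perm.Disjoint
      (Equiv.sumCongr (finRotate p)⁻¹ (1 : Equiv.Perm (Fin p)))
      (Equiv.sumCongr (1 : Equiv.Perm (Fin p)) (finRotate p)) := by
    intro x
    cases x with
    | inl i => right; rfl
    | inr i => left; rfl
  have h1 : permLength (Equiv.sumCongr (finRotate p)⁻¹ (1 : Equiv.Perm (Fin p)))
      = p - 1 := by
    rw [permLength_isCycle (isCycle_sumCongr_left hri), support_sumCongr_left,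
      Equiv.Perm.support_inv, hsupp, Finset.card_univ, Fintype.card_fin]
  have h2 : permLength (Equiv.sumCongr (1 : Equiv.Perm (Fin p)) (finRotate p))
      = p - 1 := by
    rw [permLength_isCycle (isCycle_sumCongr_right hr), support_sumCongr_right,
      hsupp, Finset.card_univ, Fintype.card_fin]
  rw [hdec, permLength_mul_disjoint hd, h1, h2]
  omega

lemma permLength_gamma_inv (hp : 2 ≤ p) : permLength (gammaPerm p)⁻¹ + 2 = 2 * p := by
  rw [permLength_inv]
  exact permLength_gamma hp

lemma delta_isLeft (x : Fin p ⊕ Fin p) : (deltaPerm p x).isLeft = !x.isLeft := by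
  cases x <;> rfl

/-- a block preserving `β` has `|βδ| ≥ p` -/
lemma blockPres_le {β : Equiv.Perm (Fin p ⊕ Fin p)}
    (hβ : ∀ x, (β x).isLeft = x.isLeft) :
    p ≤ permLength (β * deltaPerm p) := by
  classical
  set u := β * deltaPerm p with hu
  have hu_inl : ∀ i : Fin p, ∃ j, u (Sum.inl i) = Sum.inr j := by
    intro i
    have h : u (Sum.inl i) = β (Sum.inr i) := rfl
    have hL := hβ (Sum.inr i)
    rcases hm : β (Sum.inr i) with j | j
    · rw [hm] at hL; simp at hL
    · exact ⟨j, by rw [h, hm]⟩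
  choose e he using hu_inl
  have einj : Function.Injective e := by
    intro i j hij
    have h2 : u (Sum.inl i) = u (Sum.inl j) := by rw [he i, he j, hij]
    have := u.injective h2
    simpa using this
  have esurj : Function.Surjective e := Finite.injective_iff_surjective.1 einj
  let L : Vfix u →ₗ[ℚ] (Fin p → ℚ) :=
    { toFun := fun f => fun i => f.1 (Sum.inl i)
      map_add' := fun _ _ => rfl
      map_smul' := fun _ _ => rfl }
  have hinj : Function.Injective L := by
    intro f g hfg
    have hL : ∀ i, f.1 (Sum.inl i) = g.1 (Sum.inl i) := fun i => congrFun hfg i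
    ext x
    cases x with
    | inl i => exact hL i
    | inr j =>
      obtain ⟨i, rfl⟩ := esurj j
      rw [← he i, f.2 (Sum.inl i), g.2 (Sum.inl i)]
      exact hL i
  have hrank : finrank ℚ (Vfix u) ≤ p := by
    have := LinearMap.finrank_le_finrank_of_injective hinj
    rwa [Module.finrank_fintype_fun_eq_card, Fintype.card_fin] at this
  have hid := finrank_Vfix_add_permLength u
  rw [card_pt] at hid
  omega


lemma delta_inv : (deltaPerm p)⁻¹ = deltaPerm p :=
  inv_eq_of_mul_eq_one_left delta_sq

section klemmas
variable {β : Equiv.Perm (Fin p ⊕ Fin p)}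

/-- `A + C ≥ p` -/
lemma T2 (hp : 2 ≤ p) (β : Equiv.Perm (Fin p ⊕ Fin p)) : p ≤ permLength β + permLength (β * deltaPerm p) := by
  have hδ : deltaPerm p = β⁻¹ * (β * deltaPerm p) := by group
  calc p = permLength (deltaPerm p) := (permLength_delta hp).symm
  _ = permLength (β⁻¹ * (β * deltaPerm p)) := by rw [← hδ]
  _ ≤ permLength β⁻¹ + permLength (β * deltaPerm p) := permLength_mul_le _ _
  _ = permLength β + permLength (β * deltaPerm p) := by rw [permLength_inv]

/-- `A + B ≥ 2p - 2` -/
lemma T3 (hp : 2 ≤ p) (β : Equiv.Perm (Fin p ⊕ Fin p)) : 2 * p ≤ permLength β + permLength (β * (gammaPerm p)⁻¹) + 2 := by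
  have hγ : gammaPerm p = (β * (gammaPerm p)⁻¹)⁻¹ * β := by group
  have : permLength (gammaPerm p) ≤ permLength (β * (gammaPerm p)⁻¹) + permLength β := by
    calc permLength (gammaPerm p) = permLength ((β * (gammaPerm p)⁻¹)⁻¹ * β) := by rw [← hγ]
    _ ≤ permLength (β * (gammaPerm p)⁻¹)⁻¹ + permLength β := permLength_mul_le _ _
    _ = permLength (β * (gammaPerm p)⁻¹) + permLength β := by rw [permLength_inv]
  have hγl := permLength_gamma hp
  omega

/-- `B + C ≥ p` -/
lemma T1 (hp : 2 ≤ p) (β : Equiv.Perm (Fin p ⊕ Fin p)) : p ≤ permLength (β * (gammaPerm p)⁻¹) + permLength (β * deltaPerm p) := by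
  have hv : deltaPerm p * (gammaPerm p)⁻¹ = (β * deltaPerm p)⁻¹ * (β * (gammaPerm p)⁻¹) := by
    rw [mul_inv_rev, delta_inv]
    group
  have : permLength (deltaPerm p * (gammaPerm p)⁻¹)
      ≤ permLength (β * deltaPerm p) + permLength (β * (gammaPerm p)⁻¹) := by
    calc permLength (deltaPerm p * (gammaPerm p)⁻¹)
        = permLength ((β * deltaPerm p)⁻¹ * (β * (gammaPerm p)⁻¹)) := by rw [← hv]
    _ ≤ permLength (β * deltaPerm p)⁻¹ + permLength (β * (gammaPerm p)⁻¹) :=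
        permLength_mul_le _ _
    _ = permLength (β * deltaPerm p) + permLength (β * (gammaPerm p)⁻¹) := by
        rw [permLength_inv]
  rw [permLength_v hp] at this
  omega

/-- equality in T2 : `β` lies below `δ` -/
lemma deltaGeo (hp : 2 ≤ p) (β : Equiv.Perm (Fin p ⊕ Fin p)) (h : permLength β + permLength (β * deltaPerm p) = p) :
    ∀ x, β x = x ∨ β x = deltaPerm p x := by
  have heq : permLength (β⁻¹ * (β * deltaPerm p))
      = permLength β⁻¹ + permLength (β * deltaPerm p) := by
    have h1 : β⁻¹ * (β * deltaPerm p) = deltaPerm p := by group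
    rw [h1, permLength_delta hp, permLength_inv]
    exact h.symm
  have hle := Vfix_le_of_triangle_eq heq
  have h1 : β⁻¹ * (β * deltaPerm p) = deltaPerm p := by group
  rw [h1] at hle
  have hle2 : Vfix (deltaPerm p) ≤ Vfix β := by
    intro f hf
    have := (hle hf).1
    rwa [Vfix_inv] at this
  intro x
  have hsc := sameCycle_of_Vfix_le hle2 x
  rcases sameCycle_involution delta_sq hsc with h' | h'
  · left; exact h'
  · right; exact h'

/-- equality in T3 : `β` preserves the two blocks -/
lemma gammaGeo (hp : 2 ≤ p) (β : Equiv.Perm (Fin p ⊕ Fin p)) (h : permLength β + permLength (β * (gammaPerm p)⁻¹) + 2 = 2 * p) :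
    ∀ x, (β x).isLeft = x.isLeft := by
  have h1 : (β * (gammaPerm p)⁻¹)⁻¹ * β = gammaPerm p := by group
  have heq : permLength ((β * (gammaPerm p)⁻¹)⁻¹ * β)
      = permLength (β * (gammaPerm p)⁻¹)⁻¹ + permLength β := by
    rw [h1, permLength_inv]
    have := permLength_gamma hp
    omega
  have hle := Vfix_le_of_triangle_eq heq
  rw [h1] at hle
  have hle2 : Vfix (gammaPerm p) ≤ Vfix β := fun f hf => (hle hf).2
  intro x
  have hsc := sameCycle_of_Vfix_le hle2 x
  exact (sameCycle_sumCongr_isLeft hsc).symm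

/-- equality in T1 : `βδ` lies below `v = δγ⁻¹` -/
lemma vGeo (hp : 2 ≤ p) (β : Equiv.Perm (Fin p ⊕ Fin p)) (h : permLength (β * (gammaPerm p)⁻¹) + permLength (β * deltaPerm p) = p) :
    ∀ x, (β * deltaPerm p) x = x
      ∨ (β * deltaPerm p) x = (deltaPerm p * (gammaPerm p)⁻¹) x := by
  have h1 : (β * deltaPerm p)⁻¹ * (β * (gammaPerm p)⁻¹) = deltaPerm p * (gammaPerm p)⁻¹ := by
    rw [mul_inv_rev, delta_inv]
    group
  have heq : permLength ((β * deltaPerm p)⁻¹ * (β * (gammaPerm p)⁻¹))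
      = permLength (β * deltaPerm p)⁻¹ + permLength (β * (gammaPerm p)⁻¹) := by
    rw [h1, permLength_v hp, permLength_inv]
    omega
  have hle := Vfix_le_of_triangle_eq heq
  rw [h1] at hle
  have hle2 : Vfix (deltaPerm p * (gammaPerm p)⁻¹) ≤ Vfix (β * deltaPerm p) := by
    intro f hf
    have := (hle hf).1
    rwa [Vfix_inv] at this
  intro x
  have hsc := sameCycle_of_Vfix_le hle2 x
  rcases sameCycle_involution v_sq hsc with h' | h'
  · left; exact h'
  · right; exact h'

/-- K2: on both geodesics from 1 forces `β = 1` -/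
lemma K2 (hp : 2 ≤ p) (β : Equiv.Perm (Fin p ⊕ Fin p)) (h1 : permLength β + permLength (β * deltaPerm p) = p)
    (h2 : permLength β + permLength (β * (gammaPerm p)⁻¹) + 2 = 2 * p) : β = 1 := by
  have hd := deltaGeo hp β h1
  have hg := gammaGeo hp β h2
  ext x
  rcases hd x with h | h
  · rw [h]; rfl
  · exfalso
    have hL := hg x
    rw [h, delta_isLeft] at hL
    cases x <;> simp at hL

/-- parity: `A + B` is even -/
lemma parityAB (hp : 2 ≤ p) (β : Equiv.Perm (Fin p ⊕ Fin p)) : Even (permLength β + permLength (β * (gammaPerm p)⁻¹)) := by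
  have hpar := permLength_parity β (gammaPerm p)⁻¹
  have hγ := permLength_gamma_inv hp
  have hev : Even (permLength (gammaPerm p)⁻¹) := by
    refine ⟨p - 1, ?_⟩
    omega
  rcases hpar with ⟨m, hm⟩
  rcases hev with ⟨k, hk⟩
  refine ⟨m - k, ?_⟩
  omega

/-- parity: `A + C + p` is even -/
lemma parityAC (hp : 2 ≤ p) (β : Equiv.Perm (Fin p ⊕ Fin p)) : Even (permLength β + permLength (β * deltaPerm p) + p) := by
  have hpar := permLength_parity β (deltaPerm p)
  rw [permLength_delta hp] at hpar
  rcases hpar with ⟨m, hm⟩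
  exact ⟨m, by omega⟩


/-- K3: on the geodesic from `δ` to `γ` -/
lemma K3 (hp : 2 ≤ p) (β : Equiv.Perm (Fin p ⊕ Fin p))
    (hg : permLength (β * (gammaPerm p)⁻¹) + permLength (β * deltaPerm p) = p) :
    (β = deltaPerm p ∧ permLength β = p)
      ∨ (β = gammaPerm p ∧ permLength β + 2 = 2 * p)
      ∨ p + 1 ≤ permLength β := by
  have hu := vGeo hp β hg
  have hβu : β = (β * deltaPerm p) * deltaPerm p := by
    rw [mul_assoc, delta_sq, mul_one]
  by_cases hu1 : β * deltaPerm p = 1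
  · left
    have hβ : β = deltaPerm p := by rw [hβu, hu1, one_mul]
    exact ⟨hβ, by rw [hβ]; exact permLength_delta hp⟩
  by_cases huv : β * deltaPerm p = deltaPerm p * (gammaPerm p)⁻¹
  · right; left
    have hβ : β = gammaPerm p := by rw [hβu, huv, vDelta_eq_gamma]
    exact ⟨hβ, by rw [hβ]; exact permLength_gamma hp⟩
  · right; right
    have hy : ∃ y₀, (β * deltaPerm p) y₀ ≠ (deltaPerm p * (gammaPerm p)⁻¹) y₀ := by
      by_contra hc
      push_neg at hc
      exact huv (Equiv.ext hc)
    obtain ⟨y₀, hy₀⟩ := hy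
    have hfix : (β * deltaPerm p) y₀ = y₀ := (hu y₀).resolve_right hy₀
    have hcross : β (deltaPerm p y₀) = y₀ := hfix
    have hne : permLength β + permLength (β * (gammaPerm p)⁻¹) + 2 ≠ 2 * p := by
      intro h
      have hbp := gammaGeo hp β h
      have := hbp (deltaPerm p y₀)
      rw [hcross, delta_isLeft] at this
      cases y₀ <;> simp at this
    have hT := T3 hp β
    have hpar := parityAB hp β
    rcases hpar with ⟨m, hm⟩
    have hAB : 2 * p ≤ permLength β + permLength (β * (gammaPerm p)⁻¹) := by omega
    have hC1 : 1 ≤ permLength (β * deltaPerm p) := by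
      rcases Nat.eq_zero_or_pos (permLength (β * deltaPerm p)) with h0 | h
      · exact absurd (eq_one_of_permLength_eq_zero h0) hu1
      · exact h
    omega

lemma vals_delta (hp : 2 ≤ p) :
    permLength (deltaPerm p) = p
      ∧ permLength (deltaPerm p * (gammaPerm p)⁻¹) = p
      ∧ permLength (deltaPerm p * deltaPerm p) = 0 := by
  refine ⟨permLength_delta hp, permLength_v hp, ?_⟩
  rw [delta_sq]
  exact permLength_one

lemma vals_gamma (hp : 2 ≤ p) :
    permLength (gammaPerm p) + 2 = 2 * p
      ∧ permLength (gammaPerm p * (gammaPerm p)⁻¹) = 0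
      ∧ permLength (gammaPerm p * deltaPerm p) = p := by
  refine ⟨permLength_gamma hp, ?_, permLength_gammaDelta hp⟩
  have h : gammaPerm p * (gammaPerm p)⁻¹ = 1 := by group
  rw [h]
  exact permLength_one

lemma vals_one (hp : 2 ≤ p) :
    permLength (1 : Equiv.Perm (Fin p ⊕ Fin p)) = 0
      ∧ permLength ((1 : Equiv.Perm (Fin p ⊕ Fin p)) * (gammaPerm p)⁻¹) + 2 = 2 * p
      ∧ permLength ((1 : Equiv.Perm (Fin p ⊕ Fin p)) * deltaPerm p) = p := by
  refine ⟨permLength_one, ?_, ?_⟩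
  · rw [one_mul]
    exact permLength_gamma_inv hp
  · rw [one_mul]
    exact permLength_delta hp


lemma K4_back (hp : 2 ≤ p) (β : Equiv.Perm (Fin p ⊕ Fin p))
    (h : β = deltaPerm p ∨ (p = 2 ∧ (β = 1 ∨ β = gammaPerm p))) :
    permLength β + permLength (β * (gammaPerm p)⁻¹) + permLength (β * deltaPerm p) = 2 * p := by
  rcases h with rfl | ⟨hp2, rfl | rfl⟩
  · obtain ⟨h1, h2, h3⟩ := vals_delta hp
    omega
  · obtain ⟨h1, h2, h3⟩ := vals_one hp
    omega
  · obtain ⟨h1, h2, h3⟩ := vals_gamma hp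
    omega

lemma K4 (hp : 2 ≤ p) (β : Equiv.Perm (Fin p ⊕ Fin p)) :
    2 * p ≤ permLength β + permLength (β * (gammaPerm p)⁻¹) + permLength (β * deltaPerm p)
      ∧ (permLength β + permLength (β * (gammaPerm p)⁻¹) + permLength (β * deltaPerm p) = 2 * p
        ↔ (β = deltaPerm p ∨ (p = 2 ∧ (β = 1 ∨ β = gammaPerm p)))) := by
  have hT3 := T3 hp β
  rcases hC : permLength (β * deltaPerm p) with _ | cm
  · -- C = 0 : β = δ
    have hβ : β = deltaPerm p := by
      have h1 : β * deltaPerm p = 1 := eq_one_of_permLength_eq_zero hC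
      have : β = (β * deltaPerm p) * deltaPerm p := by rw [mul_assoc, delta_sq, mul_one]
      rw [this, h1, one_mul]
    have := K4_back hp β (Or.inl hβ)
    exact ⟨by omega, ⟨fun _ => Or.inl hβ, fun _ => by omega⟩⟩
  rcases cm with _ | cm
  · -- C = 1
    have hne : permLength β + permLength (β * (gammaPerm p)⁻¹) + 2 ≠ 2 * p := by
      intro h
      have hbp := gammaGeo hp β h
      have := blockPres_le hbp
      omega
    obtain ⟨m, hm⟩ := parityAB hp β
    constructor
    · omega
    constructor
    · intro h; omega
    · intro h
      have := K4_back hp β h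
      omega
  · -- C ≥ 2
    constructor
    · omega
    constructor
    swap
    · intro h
      have := K4_back hp β h
      omega
    intro hsum
    have hC2 : permLength (β * deltaPerm p) = 2 := by omega
    have hAB : permLength β + permLength (β * (gammaPerm p)⁻¹) + 2 = 2 * p := by omega
    have hbp := gammaGeo hp β hAB
    have hple := blockPres_le hbp
    have hp2 : p = 2 := by omega
    subst hp2
    right
    refine ⟨rfl, ?_⟩
    have hβu : β = (β * deltaPerm 2) * deltaPerm 2 := by
      rw [mul_assoc, delta_sq, mul_one]
    set u := β * deltaPerm 2 with hu
    have huapp : ∀ x, u x = β (deltaPerm 2 x) := fun x => rfl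
    have hfpf : ∀ x, u x ≠ x := by
      intro x heq
      have hbx := hbp (deltaPerm 2 x)
      rw [← huapp, heq, delta_isLeft] at hbx
      cases x <;> simp at hbx
    have hsupp : u.support = Finset.univ :=
      Finset.eq_univ_iff_forall.2 fun x => Equiv.Perm.mem_support.2 (hfpf x)
    have hsum4 : u.cycleType.sum = 4 := by
      rw [Equiv.Perm.sum_cycleType, hsupp, Finset.card_univ, card_pt]
    have hcard : Multiset.card u.cycleType = 2 := by
      have : permLength u = 2 := hC2
      unfold permLength at this
      omega
    have husq : u * u = 1 := by
      obtain ⟨a, b, hab⟩ := Multiset.card_eq_two.1 hcard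
      have ha : 2 ≤ a := Equiv.Perm.two_le_of_mem_cycleType (by rw [hab]; simp)
      have hb : 2 ≤ b := Equiv.Perm.two_le_of_mem_cycleType (by rw [hab]; simp)
      have hsumab : a + b = 4 := by
        rw [hab] at hsum4
        simpa using hsum4
      have ha2 : a = 2 := by omega
      have hb2 : b = 2 := by omega
      have horder : orderOf u = 2 := by
        rw [← Equiv.Perm.lcm_cycleType, hab, ha2, hb2]
        decide
      have hpow := pow_orderOf_eq_one u
      rwa [horder, pow_two] at hpow
    have hinv : ∀ x, u (u x) = x := by
      intro x
      have : (u * u) x = (1 : Equiv.Perm (Fin 2 ⊕ Fin 2)) x := by rw [husq]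
      simpa using this
    have hswap : ∀ i : Fin 2, ∃ j, u (Sum.inl i) = Sum.inr j := by
      intro i
      have hL := hbp (Sum.inr i)
      have h : u (Sum.inl i) = β (Sum.inr i) := rfl
      rcases hm : β (Sum.inr i) with j | j
      · rw [hm] at hL; simp at hL
      · exact ⟨j, by rw [h, hm]⟩
    obtain ⟨j0, hj0⟩ := hswap 0
    obtain ⟨j1, hj1⟩ := hswap 1
    have hj01 : j0 ≠ j1 := by
      intro h
      have : u (Sum.inl 0) = u (Sum.inl 1) := by rw [hj0, hj1, h]
      simpa using u.injective this
    fin_cases j0 <;> fin_cases j1 <;> try exact absurd rfl hj01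
    · -- u = delta
      left
      have huδ : u = deltaPerm 2 := by
        ext x
        rcases x with i | i <;> fin_cases i
        · exact hj0
        · exact hj1
        · have := hinv (Sum.inl 0); rw [hj0] at this; exact this
        · have := hinv (Sum.inl 1); rw [hj1] at this; exact this
      rw [hβu, huδ, delta_sq]
    · -- u = v
      right
      have huv : u = deltaPerm 2 * (gammaPerm 2)⁻¹ := by
        ext x
        rcases x with i | i <;> fin_cases i
        · exact hj0.trans (by decide)
        · exact hj1.trans (by decide)
        · have h0 := hinv (Sum.inl 1)
          rw [hj1] at h0
          exact h0.trans (by decide)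
        · have h0 := hinv (Sum.inl 0)
          rw [hj0] at h0
          exact h0.trans (by decide)
      rw [hβu, huv, vDelta_eq_gamma]


/-- for `β ≠ 1`, `2A + B + C ≥ 3p` -/
lemma K2' (hp : 2 ≤ p) (β : Equiv.Perm (Fin p ⊕ Fin p)) (hβ : β ≠ 1) :
    3 * p ≤ 2 * permLength β + permLength (β * (gammaPerm p)⁻¹)
      + permLength (β * deltaPerm p) := by
  have hT2 := T2 hp β
  have hT3 := T3 hp β
  by_cases h2 : permLength β + permLength (β * deltaPerm p) = p
  · have hne : permLength β + permLength (β * (gammaPerm p)⁻¹) + 2 ≠ 2 * p :=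
      fun h => hβ (K2 hp β h2 h)
    obtain ⟨m, hm⟩ := parityAB hp β
    omega
  · obtain ⟨m, hm⟩ := parityAC hp β
    omega

end klemmas
end specific
end S1Aux

namespace S1Aux

variable {p : ℕ}

lemma delta_ne_one (hp : 2 ≤ p) : deltaPerm p ≠ 1 := by
  intro h
  have := delta_fpf (p := p) (Sum.inl ⟨0, by omega⟩)
  rw [h] at this
  exact this rfl

lemma S1_delta (hp : 2 ≤ p) (d : ℝ) : S1 p d (deltaPerm p) = d * p := by
  obtain ⟨h1, h2, h3⟩ := vals_delta hp
  simp only [S1]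
  rw [h1, h2, h3]
  push_cast
  ring

lemma S1_gamma (hp : 2 ≤ p) (d : ℝ) : S1 p d (gammaPerm p) = d * (2 * p - 2) := by
  obtain ⟨h1, h2, h3⟩ := vals_gamma hp
  have h1R : (permLength (gammaPerm p) : ℝ) = 2 * p - 2 := by
    have h' : ((permLength (gammaPerm p) : ℝ)) + 2 = 2 * p := by exact_mod_cast h1
    linarith
  simp only [S1]
  rw [h2, h3, h1R]
  push_cast
  ring

lemma S1_one (hp : 2 ≤ p) (d : ℝ) : S1 p d (1 : Equiv.Perm (Fin p ⊕ Fin p)) = 2 * p - 2 := by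
  obtain ⟨h1, h2, h3⟩ := vals_one hp
  have h2R : (permLength ((1 : Equiv.Perm (Fin p ⊕ Fin p)) * (gammaPerm p)⁻¹) : ℝ)
      = 2 * p - 2 := by
    have h' : ((permLength ((1 : Equiv.Perm (Fin p ⊕ Fin p)) * (gammaPerm p)⁻¹) : ℝ)) + 2
        = 2 * p := by exact_mod_cast h2
    linarith
  simp only [S1]
  rw [h1, h3, h2R]
  push_cast
  ring

/-- common core for `1 < d < 2`, `β ≠ 1` : `S1 ≥ d p`, with equality iff `β = δ` when `3 ≤ p` -/
lemma S1_core (hp : 2 ≤ p) (d : ℝ) (hd1 : 1 < d) (hd2 : d < 2)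
    (β : Equiv.Perm (Fin p ⊕ Fin p)) (hβ : β ≠ 1) :
    d * p ≤ S1 p d β ∧ (3 ≤ p → S1 p d β = d * p → β = deltaPerm p) := by
  have hK := K2' hp β hβ
  have hT1 := T1 hp β
  have h3p : 3 * (p : ℝ) ≤ 2 * (permLength β : ℝ) + (permLength (β * (gammaPerm p)⁻¹) : ℝ)
      + (permLength (β * deltaPerm p) : ℝ) := by exact_mod_cast hK
  have hBC : (p : ℝ) ≤ (permLength (β * (gammaPerm p)⁻¹) : ℝ)
      + (permLength (β * deltaPerm p) : ℝ) := by exact_mod_cast hT1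
  have e1 : (0:ℝ) ≤ (d / 2) * (2 * (permLength β : ℝ)
      + (permLength (β * (gammaPerm p)⁻¹) : ℝ) + (permLength (β * deltaPerm p) : ℝ)
      - 3 * p) := mul_nonneg (by linarith) (by linarith)
  have e2 : (0:ℝ) ≤ (1 - d / 2) * ((permLength (β * (gammaPerm p)⁻¹) : ℝ)
      + (permLength (β * deltaPerm p) : ℝ) - p) := mul_nonneg (by linarith) (by linarith)
  have hS1 : S1 p d β = d * (permLength β : ℝ) + (permLength (β * (gammaPerm p)⁻¹) : ℝ)
      + (permLength (β * deltaPerm p) : ℝ) - p := rfl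
  constructor
  · rw [hS1]
    linarith [e1, e2]
  · intro hp3 h
    rw [hS1] at h
    have hz1 : 2 * (permLength β : ℝ) + (permLength (β * (gammaPerm p)⁻¹) : ℝ)
        + (permLength (β * deltaPerm p) : ℝ) - 3 * p = 0 := by
      by_contra hne
      have hpos : 0 < 2 * (permLength β : ℝ) + (permLength (β * (gammaPerm p)⁻¹) : ℝ)
          + (permLength (β * deltaPerm p) : ℝ) - 3 * p := lt_of_le_of_ne (by linarith) (Ne.symm hne)
      have : 0 < (d / 2) * (2 * (permLength β : ℝ)
          + (permLength (β * (gammaPerm p)⁻¹) : ℝ) + (permLength (β * deltaPerm p) : ℝ)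
          - 3 * p) := mul_pos (by linarith) hpos
      linarith [e2]
    have hz2 : (permLength (β * (gammaPerm p)⁻¹) : ℝ)
        + (permLength (β * deltaPerm p) : ℝ) - p = 0 := by
      by_contra hne
      have hpos : 0 < (permLength (β * (gammaPerm p)⁻¹) : ℝ)
          + (permLength (β * deltaPerm p) : ℝ) - p := lt_of_le_of_ne (by linarith) (Ne.symm hne)
      have : 0 < (1 - d / 2) * ((permLength (β * (gammaPerm p)⁻¹) : ℝ)
          + (permLength (β * deltaPerm p) : ℝ) - p) := mul_pos (by linarith) hpos
      linarith [e1]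
    have hBCn : permLength (β * (gammaPerm p)⁻¹) + permLength (β * deltaPerm p) = p := by
      have h' : (permLength (β * (gammaPerm p)⁻¹) : ℝ)
          + (permLength (β * deltaPerm p) : ℝ) = (p:ℝ) := by linarith
      exact_mod_cast h'
    have hAn : permLength β = p := by
      have h' : (permLength β : ℝ) = (p:ℝ) := by linarith
      exact_mod_cast h'
    rcases K3 hp β hBCn with ⟨hβδ, _⟩ | ⟨hβγ, hA⟩ | hA
    · exact hβδ
    · omega
    · omega

end S1Aux

/-- **Minimization of `S₁` (Table 2).** For `p ≥ 2` and `d ≥ 0`, the minimum of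
`S₁(β) = d|β| + |βγ⁻¹| + |βδ| − p` over `β ∈ S_{2p}` and its equality cases, in each
of the regimes of `d` (and `p`). -/
theorem S1_minimization (p : ℕ) (hp : 2 ≤ p) (d : ℝ) (hd : 0 ≤ d) :
    (d = 0 → ∀ β : Equiv.Perm (Fin p ⊕ Fin p),
      (0 : ℝ) ≤ S1 p d β ∧
        (S1 p d β = 0 ↔
          permLength (β * deltaPerm p) + permLength (β * (gammaPerm p)⁻¹) =
            permLength (deltaPerm p * (gammaPerm p)⁻¹))) ∧
    ((0 < d ∧ d < 1 ∧ p = 2) → ∀ β : Equiv.Perm (Fin p ⊕ Fin p),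
      2 * d ≤ S1 p d β ∧
        (S1 p d β = 2 * d ↔ (β = deltaPerm p ∨ β = gammaPerm p))) ∧
    ((d = 1 ∧ p = 2) → ∀ β : Equiv.Perm (Fin p ⊕ Fin p),
      (2 : ℝ) ≤ S1 p d β ∧
        (S1 p d β = 2 ↔ (β = 1 ∨ β = deltaPerm p ∨ β = gammaPerm p))) ∧
    ((0 < d ∧ d ≤ 1 ∧ 3 ≤ p) → ∀ β : Equiv.Perm (Fin p ⊕ Fin p),
      d * p ≤ S1 p d β ∧ (S1 p d β = d * p ↔ β = deltaPerm p)) ∧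
    ((1 < d ∧ d < 2 ∧ (p : ℝ) < 2 / (2 - d)) → ∀ β : Equiv.Perm (Fin p ⊕ Fin p),
      2 * (p : ℝ) - 2 ≤ S1 p d β ∧ (S1 p d β = 2 * (p : ℝ) - 2 ↔ β = 1)) ∧
    ((1 < d ∧ d < 2 ∧ (p : ℝ) = 2 / (2 - d)) → ∀ β : Equiv.Perm (Fin p ⊕ Fin p),
      (2 * (p : ℝ) - 2 = d * p) ∧ 2 * (p : ℝ) - 2 ≤ S1 p d β ∧
        (S1 p d β = 2 * (p : ℝ) - 2 ↔ (β = 1 ∨ β = deltaPerm p))) ∧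
    ((1 < d ∧ d < 2 ∧ 2 / (2 - d) < (p : ℝ)) → ∀ β : Equiv.Perm (Fin p ⊕ Fin p),
      d * p ≤ S1 p d β ∧ (S1 p d β = d * p ↔ β = deltaPerm p)) ∧
    (2 ≤ d → ∀ β : Equiv.Perm (Fin p ⊕ Fin p),
      2 * (p : ℝ) - 2 ≤ S1 p d β ∧ (S1 p d β = 2 * (p : ℝ) - 2 ↔ β = 1)) := by
  have hpR : (2:ℝ) ≤ (p:ℝ) := by exact_mod_cast hp
  refine ⟨?_, ?_, ?_, ?_, ?_, ?_, ?_, ?_⟩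
  · -- (i) d = 0
    rintro rfl β
    have hT1 := S1Aux.T1 hp β
    have hT1R : (p:ℝ) ≤ (permLength (β * (gammaPerm p)⁻¹) : ℝ)
        + (permLength (β * deltaPerm p) : ℝ) := by exact_mod_cast hT1
    have hS1 : S1 p 0 β = 0 * (permLength β : ℝ) + (permLength (β * (gammaPerm p)⁻¹) : ℝ)
        + (permLength (β * deltaPerm p) : ℝ) - p := rfl
    constructor
    · rw [hS1]; linarith
    · rw [S1Aux.permLength_v hp]
      constructor
      · intro h
        rw [hS1] at h
        have h' : (permLength (β * deltaPerm p) : ℝ)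
            + (permLength (β * (gammaPerm p)⁻¹) : ℝ) = (p:ℝ) := by linarith
        exact_mod_cast h'
      · intro h
        rw [hS1]
        have h' : (permLength (β * deltaPerm p) : ℝ)
            + (permLength (β * (gammaPerm p)⁻¹) : ℝ) = (p:ℝ) := by exact_mod_cast h
        linarith
  · -- (ii) 0 < d < 1, p = 2
    rintro ⟨hd0, hd1, rfl⟩ β
    have hK4 := S1Aux.K4 hp β
    have hT1 := S1Aux.T1 hp β
    have hSigR : (4:ℝ) ≤ (permLength β : ℝ) + (permLength (β * (gammaPerm 2)⁻¹) : ℝ)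
        + (permLength (β * deltaPerm 2) : ℝ) := by
      have h4 : 4 ≤ permLength β + permLength (β * (gammaPerm 2)⁻¹)
          + permLength (β * deltaPerm 2) := by have := hK4.1; omega
      exact_mod_cast h4
    have hBCR : (2:ℝ) ≤ (permLength (β * (gammaPerm 2)⁻¹) : ℝ)
        + (permLength (β * deltaPerm 2) : ℝ) := by exact_mod_cast hT1
    have e1 : (0:ℝ) ≤ d * ((permLength β : ℝ) + (permLength (β * (gammaPerm 2)⁻¹) : ℝ)
        + (permLength (β * deltaPerm 2) : ℝ) - 4) := mul_nonneg hd0.le (by linarith)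
    have e2 : (0:ℝ) ≤ (1 - d) * ((permLength (β * (gammaPerm 2)⁻¹) : ℝ)
        + (permLength (β * deltaPerm 2) : ℝ) - 2) := mul_nonneg (by linarith) (by linarith)
    have hS1 : S1 2 d β = d * (permLength β : ℝ) + (permLength (β * (gammaPerm 2)⁻¹) : ℝ)
        + (permLength (β * deltaPerm 2) : ℝ) - 2 := by
      simp only [S1]; norm_num
    constructor
    · rw [hS1]; linarith [e1, e2]
    constructor
    · intro h
      rw [hS1] at h
      have hz1 : (permLength β : ℝ) + (permLength (β * (gammaPerm 2)⁻¹) : ℝ)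
          + (permLength (β * deltaPerm 2) : ℝ) - 4 = 0 := by
        by_contra hne
        have hpos : (0:ℝ) < (permLength β : ℝ) + (permLength (β * (gammaPerm 2)⁻¹) : ℝ)
            + (permLength (β * deltaPerm 2) : ℝ) - 4 :=
          lt_of_le_of_ne (by linarith) (Ne.symm hne)
        have := mul_pos hd0 hpos
        linarith [e2]
      have hz2 : (permLength (β * (gammaPerm 2)⁻¹) : ℝ)
          + (permLength (β * deltaPerm 2) : ℝ) - 2 = 0 := by
        by_contra hne
        have hpos : (0:ℝ) < (permLength (β * (gammaPerm 2)⁻¹) : ℝ)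
            + (permLength (β * deltaPerm 2) : ℝ) - 2 :=
          lt_of_le_of_ne (by linarith) (Ne.symm hne)
        have := mul_pos (by linarith : (0:ℝ) < 1 - d) hpos
        linarith [e1]
      have hSign : permLength β + permLength (β * (gammaPerm 2)⁻¹)
          + permLength (β * deltaPerm 2) = 4 := by
        have h' : (permLength β : ℝ) + (permLength (β * (gammaPerm 2)⁻¹) : ℝ)
            + (permLength (β * deltaPerm 2) : ℝ) = 4 := by linarith
        exact_mod_cast h'
      have hBCn : permLength (β * (gammaPerm 2)⁻¹) + permLength (β * deltaPerm 2) = 2 := by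
        have h' : (permLength (β * (gammaPerm 2)⁻¹) : ℝ)
            + (permLength (β * deltaPerm 2) : ℝ) = 2 := by linarith
        exact_mod_cast h'
      rcases hK4.2.1 (by omega) with hδ | ⟨_, h1 | hγ⟩
      · exact Or.inl hδ
      · exfalso
        subst h1
        obtain ⟨v1, v2, v3⟩ := S1Aux.vals_one hp
        omega
      · exact Or.inr hγ
    · rintro (rfl | rfl)
      · rw [S1Aux.S1_delta hp d]; norm_num; ring
      · rw [S1Aux.S1_gamma hp d]; norm_num; ring
  · -- (iii) d = 1, p = 2
    rintro ⟨rfl, rfl⟩ β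
    have hK4 := S1Aux.K4 hp β
    have hSigR : (4:ℝ) ≤ (permLength β : ℝ) + (permLength (β * (gammaPerm 2)⁻¹) : ℝ)
        + (permLength (β * deltaPerm 2) : ℝ) := by
      have h4 : 4 ≤ permLength β + permLength (β * (gammaPerm 2)⁻¹)
          + permLength (β * deltaPerm 2) := by have := hK4.1; omega
      exact_mod_cast h4
    have hS1 : S1 2 1 β = 1 * (permLength β : ℝ) + (permLength (β * (gammaPerm 2)⁻¹) : ℝ)
        + (permLength (β * deltaPerm 2) : ℝ) - 2 := by
      simp only [S1]; norm_num
    constructor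
    · rw [hS1]; linarith
    constructor
    · intro h
      rw [hS1] at h
      have hSign : permLength β + permLength (β * (gammaPerm 2)⁻¹)
          + permLength (β * deltaPerm 2) = 4 := by
        have h' : (permLength β : ℝ) + (permLength (β * (gammaPerm 2)⁻¹) : ℝ)
            + (permLength (β * deltaPerm 2) : ℝ) = 4 := by linarith
        exact_mod_cast h'
      rcases hK4.2.1 (by omega) with hδ | ⟨_, h1 | hγ⟩
      · exact Or.inr (Or.inl hδ)
      · exact Or.inl h1
      · exact Or.inr (Or.inr hγ)
    · rintro (rfl | rfl | rfl)
      · rw [S1Aux.S1_one hp 1]; norm_num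
      · rw [S1Aux.S1_delta hp 1]; norm_num
      · rw [S1Aux.S1_gamma hp 1]; norm_num
  · -- (iv) 0 < d ≤ 1, 3 ≤ p
    rintro ⟨hd0, hd1, hp3⟩ β
    have hK4 := S1Aux.K4 hp β
    have hT1 := S1Aux.T1 hp β
    have hSigR : 2 * (p:ℝ) ≤ (permLength β : ℝ) + (permLength (β * (gammaPerm p)⁻¹) : ℝ)
        + (permLength (β * deltaPerm p) : ℝ) := by exact_mod_cast hK4.1
    have hBCR : (p:ℝ) ≤ (permLength (β * (gammaPerm p)⁻¹) : ℝ)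
        + (permLength (β * deltaPerm p) : ℝ) := by exact_mod_cast hT1
    have e1 : (0:ℝ) ≤ d * ((permLength β : ℝ) + (permLength (β * (gammaPerm p)⁻¹) : ℝ)
        + (permLength (β * deltaPerm p) : ℝ) - 2 * p) := mul_nonneg hd0.le (by linarith)
    have e2 : (0:ℝ) ≤ (1 - d) * ((permLength (β * (gammaPerm p)⁻¹) : ℝ)
        + (permLength (β * deltaPerm p) : ℝ) - p) := mul_nonneg (by linarith) (by linarith)
    have hS1 : S1 p d β = d * (permLength β : ℝ) + (permLength (β * (gammaPerm p)⁻¹) : ℝ)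
        + (permLength (β * deltaPerm p) : ℝ) - p := rfl
    constructor
    · rw [hS1]; linarith [e1, e2]
    constructor
    · intro h
      rw [hS1] at h
      have hz1 : (permLength β : ℝ) + (permLength (β * (gammaPerm p)⁻¹) : ℝ)
          + (permLength (β * deltaPerm p) : ℝ) - 2 * p = 0 := by
        by_contra hne
        have hpos : (0:ℝ) < (permLength β : ℝ) + (permLength (β * (gammaPerm p)⁻¹) : ℝ)
            + (permLength (β * deltaPerm p) : ℝ) - 2 * p :=
          lt_of_le_of_ne (by linarith) (Ne.symm hne)
        have := mul_pos hd0 hpos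
        linarith [e2]
      have hSign : permLength β + permLength (β * (gammaPerm p)⁻¹)
          + permLength (β * deltaPerm p) = 2 * p := by
        have h' : (permLength β : ℝ) + (permLength (β * (gammaPerm p)⁻¹) : ℝ)
            + (permLength (β * deltaPerm p) : ℝ) = 2 * (p:ℝ) := by linarith
        exact_mod_cast h'
      rcases hK4.2.1 hSign with hδ | ⟨hp2, _⟩
      · exact hδ
      · omega
    · rintro rfl
      exact S1Aux.S1_delta hp d
  · -- (v) 1 < d < 2, p < 2/(2-d)
    rintro ⟨hd1, hd2, hreg⟩ β
    have h2d : (0:ℝ) < 2 - d := by linarith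
    have hkey : (p:ℝ) * (2 - d) < 2 := by
      have := (lt_div_iff₀ h2d).1 hreg
      linarith
    have hdp : 2 * (p:ℝ) - 2 < d * p := by nlinarith
    by_cases hβ1 : β = 1
    · subst hβ1
      rw [S1Aux.S1_one hp d]
      exact ⟨le_refl _, by simp⟩
    · have hcore := S1Aux.S1_core hp d hd1 hd2 β hβ1
      constructor
      · linarith [hcore.1]
      constructor
      · intro h
        exfalso
        linarith [hcore.1]
      · intro h
        exact absurd h hβ1
  · -- (vi) 1 < d < 2, p = 2/(2-d)
    rintro ⟨hd1, hd2, hreg⟩ β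
    have h2d : (0:ℝ) < 2 - d := by linarith
    have hkey : (p:ℝ) * (2 - d) = 2 := by
      rw [hreg]
      field_simp
    have hdp : 2 * (p:ℝ) - 2 = d * p := by nlinarith
    have hp2R : (2:ℝ) < (p:ℝ) := by
      rw [hreg]
      rw [lt_div_iff₀ h2d]
      nlinarith
    have hp3 : 3 ≤ p := by
      have : (2:ℕ) < p := by exact_mod_cast hp2R
      omega
    refine ⟨hdp, ?_, ?_⟩
    · by_cases hβ1 : β = 1
      · subst hβ1
        rw [S1Aux.S1_one hp d]
      · have hcore := S1Aux.S1_core hp d hd1 hd2 β hβ1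
        linarith [hcore.1]
    · constructor
      · intro h
        by_cases hβ1 : β = 1
        · exact Or.inl hβ1
        · have hcore := S1Aux.S1_core hp d hd1 hd2 β hβ1
          exact Or.inr (hcore.2 hp3 (by linarith))
      · rintro (rfl | rfl)
        · rw [S1Aux.S1_one hp d]
        · rw [S1Aux.S1_delta hp d]
          linarith
  · -- (vii) 1 < d < 2, p > 2/(2-d)
    rintro ⟨hd1, hd2, hreg⟩ β
    have h2d : (0:ℝ) < 2 - d := by linarith
    have hkey : 2 < (p:ℝ) * (2 - d) := by
      have := (div_lt_iff₀ h2d).1 hreg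
      linarith
    have hdp : d * (p:ℝ) < 2 * p - 2 := by nlinarith
    have hp2R : (2:ℝ) < (p:ℝ) := by
      have h22 : (2:ℝ) < 2 / (2 - d) := by
        rw [lt_div_iff₀ h2d]
        nlinarith
      linarith
    have hp3 : 3 ≤ p := by
      have : (2:ℕ) < p := by exact_mod_cast hp2R
      omega
    by_cases hβ1 : β = 1
    · subst hβ1
      rw [S1Aux.S1_one hp d]
      constructor
      · linarith
      constructor
      · intro h
        exfalso
        linarith
      · intro h
        exact absurd h.symm (S1Aux.delta_ne_one hp)
    · have hcore := S1Aux.S1_core hp d hd1 hd2 β hβ1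
      refine ⟨hcore.1, ?_, ?_⟩
      · exact hcore.2 hp3
      · rintro rfl
        exact S1Aux.S1_delta hp d
  · -- (viii) d ≥ 2
    intro hd2 β
    by_cases hβ1 : β = 1
    · subst hβ1
      rw [S1Aux.S1_one hp d]
      exact ⟨le_refl _, by simp⟩
    · have hK := S1Aux.K2' hp β hβ1
      have h3p : 3 * (p : ℝ) ≤ 2 * (permLength β : ℝ)
          + (permLength (β * (gammaPerm p)⁻¹) : ℝ)
          + (permLength (β * deltaPerm p) : ℝ) := by exact_mod_cast hK
      have e1 : (0:ℝ) ≤ (d - 2) * (permLength β : ℝ) :=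
        mul_nonneg (by linarith) (Nat.cast_nonneg _)
      have hS1 : S1 p d β = d * (permLength β : ℝ) + (permLength (β * (gammaPerm p)⁻¹) : ℝ)
          + (permLength (β * deltaPerm p) : ℝ) - p := rfl
      have hge : 2 * (p:ℝ) ≤ S1 p d β := by
        rw [hS1]
        linarith [e1]
      constructor
      · linarith
      constructor
      · intro h
        exfalso
        linarith
      · intro h
        exact absurd h hβ1
end
end
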